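/- arXiv:0803.0290 — 12 statements merged into one kernel-verified Lean document; each statement's English description precedes it below -/
import Mathlib

section
/- Let (u_k) be a strictly increasing sequence of nonzero integers. Then for every positive integer n, the product u_0·u_1···u_n divides lcm{u_0,...,u_n} · lcm{ ∏_{0≤i≤n, i≠j}(u_i − u_j) : j = 0,...,n }. -/
private lemma fact_le_of_dvd {a b : ℤ} (ha : a ≠ 0) (hb : b ≠ 0) (h : a ∣ b) (p : ℕ) :
    a.natAbs.factorization p ≤ b.natAbs.factorization p := by
  have h1 : a.natAbs ∣ b.natAbs := Int.natAbs_dvd_natAbs.mpr h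
  have := (Nat.factorization_le_iff_dvd (Int.natAbs_ne_zero.mpr ha)
    (Int.natAbs_ne_zero.mpr hb)).mpr h1
  exact Finsupp.le_def.mp this p

theorem stmt_1 (u : ℕ → ℤ) (hmono : StrictMono u) (hne : ∀ k, u k ≠ 0)
    (n : ℕ) (hn : 1 ≤ n) :
    (∏ i ∈ Finset.range (n + 1), u i) ∣
      (Finset.range (n + 1)).lcm u *
        (Finset.range (n + 1)).lcm
          (fun j => ∏ i ∈ (Finset.range (n + 1)).erase j, (u i - u j)) := by
  set s := Finset.range (n + 1) with hs
  have h0s : 0 ∈ s := by simp [hs]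
  have hsne : s.Nonempty := ⟨0, h0s⟩
  have hdiff : ∀ j ∈ s, ∀ i ∈ s.erase j, u i - u j ≠ 0 := by
    intro j hj i hi
    have hij : i ≠ j := Finset.ne_of_mem_erase hi
    exact sub_ne_zero.mpr (fun h => hij (hmono.injective h))
  have hP : (∏ i ∈ s, u i) ≠ 0 := Finset.prod_ne_zero_iff.mpr (fun i _ => hne i)
  have hL : s.lcm u ≠ 0 := by
    intro h
    obtain ⟨i, hi, h0⟩ := Finset.lcm_eq_zero_iff.mp h
    exact hne i h0
  have hMj : ∀ j ∈ s, (∏ i ∈ s.erase j, (u i - u j)) ≠ 0 := fun j hj =>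
    Finset.prod_ne_zero_iff.mpr (fun i hi => hdiff j hj i hi)
  have hM : s.lcm (fun j => ∏ i ∈ s.erase j, (u i - u j)) ≠ 0 := by
    intro h
    obtain ⟨j, hj, h0⟩ := Finset.lcm_eq_zero_iff.mp h
    exact hMj j hj h0
  have hLM : s.lcm u * s.lcm (fun j => ∏ i ∈ s.erase j, (u i - u j)) ≠ 0 :=
    mul_ne_zero hL hM
  rw [← Int.natAbs_dvd_natAbs]
  rw [← Nat.factorization_le_iff_dvd (Int.natAbs_ne_zero.mpr hP)
    (Int.natAbs_ne_zero.mpr hLM), Finsupp.le_def]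
  intro p
  by_cases hp : p.Prime
  · -- define valuation
    set v : ℤ → ℕ := fun x => x.natAbs.factorization p with hv
    -- pick j0 maximizing v (u j)
    obtain ⟨j0, hj0, hmax⟩ := s.exists_max_image (fun j => v (u j)) hsne
    -- termwise bound for differences
    have hterm : ∀ i ∈ s.erase j0, v (u i) ≤ v (u i - u j0) := by
      intro i hi
      set k := v (u i) with hk
      have h1 : (p : ℤ) ^ k ∣ u i := by
        have := Nat.ordProj_dvd (u i).natAbs p
        have h2 : ((p ^ k : ℕ) : ℤ) ∣ ((u i).natAbs : ℤ) := Int.natCast_dvd_natCast.mpr this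
        simpa using h2.trans (Int.natAbs_dvd.mpr dvd_rfl)
      have h2 : (p : ℤ) ^ k ∣ u j0 := by
        have hk' : k ≤ v (u j0) := hmax i (Finset.mem_of_mem_erase hi)
        have := Nat.ordProj_dvd (u j0).natAbs p
        have h3 : p ^ k ∣ (u j0).natAbs := dvd_trans (pow_dvd_pow p hk') this
        have h4 : ((p ^ k : ℕ) : ℤ) ∣ ((u j0).natAbs : ℤ) := Int.natCast_dvd_natCast.mpr h3
        simpa using h4.trans (Int.natAbs_dvd.mpr dvd_rfl)
      have hd : (p : ℤ) ^ k ∣ u i - u j0 := dvd_sub h1 h2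
      have hd' : p ^ k ∣ (u i - u j0).natAbs := by
        have := Int.natAbs_dvd_natAbs.mpr hd
        simpa [Int.natAbs_pow] using this
      exact (Nat.Prime.pow_dvd_iff_le_factorization hp
        (Int.natAbs_ne_zero.mpr (hdiff j0 hj0 i hi))).mp hd'
    -- the factorization of the big product
    have hvprod : ∀ (t : Finset ℕ) (f : ℕ → ℤ), (∀ i ∈ t, f i ≠ 0) →
        v (∏ i ∈ t, f i) = ∑ i ∈ t, v (f i) := by
      intro t f hf
      have h1 : (∏ i ∈ t, f i).natAbs = ∏ i ∈ t, (f i).natAbs := by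
        exact map_prod Int.natAbsHom f t
      rw [hv]
      simp only [h1]
      rw [Nat.factorization_prod (fun i hi => Int.natAbs_ne_zero.mpr (hf i hi))]
      simp [Finsupp.finset_sum_apply]
    -- key chain
    have key : v (∏ i ∈ s, u i) ≤ v (s.lcm u) +
        v (s.lcm (fun j => ∏ i ∈ s.erase j, (u i - u j))) := by
      rw [hvprod s u (fun i _ => hne i), ← Finset.add_sum_erase s _ hj0]
      gcongr
      · exact fact_le_of_dvd (hne j0) hL (Finset.dvd_lcm hj0) p
      · calc ∑ i ∈ s.erase j0, v (u i) ≤ ∑ i ∈ s.erase j0, v (u i - u j0) :=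
              Finset.sum_le_sum hterm
          _ = v (∏ i ∈ s.erase j0, (u i - u j0)) :=
              (hvprod (s.erase j0) (fun i => u i - u j0) (hdiff j0 hj0)).symm
          _ ≤ _ := fact_le_of_dvd (hMj j0 hj0) hM (Finset.dvd_lcm hj0) p
    -- conclude
    have hmul : (s.lcm u * s.lcm (fun j => ∏ i ∈ s.erase j, (u i - u j))).natAbs.factorization
        = (s.lcm u).natAbs.factorization +
          (s.lcm (fun j => ∏ i ∈ s.erase j, (u i - u j))).natAbs.factorization := by
      rw [Int.natAbs_mul, Nat.factorization_mul (Int.natAbs_ne_zero.mpr hL)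
        (Int.natAbs_ne_zero.mpr hM)]
    rw [hmul]
    simpa using key
  · simp [Nat.factorization_eq_zero_of_not_prime _ hp]
end

section
/- Let n be a positive integer and x, y integers such that n divides x − y and n! divides x·y. Then n divides x and n divides y. -/
lemma fact_pow_aux (p k : ℕ) (hp : p.Prime) (hk : 1 ≤ k) :
    p ^ (2 * k - 1) ∣ Nat.factorial (p ^ k) := by
  induction k with
  | zero => omega
  | succ k ih =>
    rcases Nat.eq_or_lt_of_le hk with h | h
    · -- k + 1 = 1
      have : k = 0 := by omega
      subst this
      simpa using Nat.dvd_factorial hp.pos (by simp)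
    · have hk1 : 1 ≤ k := by omega
      have h1 : p ^ (2 * k - 1) ∣ Nat.factorial (p ^ k) := ih hk1
      have hlt : p ^ k < p ^ (k + 1) :=
        Nat.pow_lt_pow_right hp.one_lt (by omega)
      -- (p^k)! * p^(k+1) ∣ (p^(k+1))!
      have h2 : Nat.factorial (p ^ k) * p ^ (k + 1) ∣ Nat.factorial (p ^ (k + 1)) := by
        have hle : p ^ k ≤ p ^ (k + 1) - 1 := by omega
        have hd : Nat.factorial (p ^ k) ∣ Nat.factorial (p ^ (k + 1) - 1) :=
          Nat.factorial_dvd_factorial hle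
        have hpos : 1 ≤ p ^ (k + 1) := Nat.one_le_pow _ _ hp.pos
        have : Nat.factorial (p ^ (k + 1)) = p ^ (k + 1) * Nat.factorial (p ^ (k + 1) - 1) := by
          conv_lhs => rw [show p ^ (k + 1) = (p ^ (k + 1) - 1) + 1 by omega]
          rw [Nat.factorial_succ]
          congr 1
          omega
        rw [this, mul_comm]
        exact mul_dvd_mul_left _ hd
      have h3 : p ^ (2 * (k + 1) - 1) ∣ Nat.factorial (p ^ k) * p ^ (k + 1) := by
        have : p ^ (2 * (k + 1) - 1) ∣ p ^ (2 * k - 1) * p ^ (k + 1) := by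
          rw [← pow_add]
          exact pow_dvd_pow p (by omega)
        exact this.trans (mul_dvd_mul_right h1 _)
      exact h3.trans h2

lemma key_split (p k : ℕ) (hp : p.Prime) (x y : ℤ)
    (h : (p : ℤ) ^ (2 * k - 1) ∣ x * y) : (p : ℤ) ^ k ∣ x ∨ (p : ℤ) ^ k ∣ y := by
  rcases eq_or_ne x 0 with rfl | hx
  · left; simp
  rcases eq_or_ne y 0 with rfl | hy
  · right; simp
  have hxn : x.natAbs ≠ 0 := Int.natAbs_ne_zero.2 hx
  have hyn : y.natAbs ≠ 0 := Int.natAbs_ne_zero.2 hy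
  have h' : p ^ (2 * k - 1) ∣ x.natAbs * y.natAbs := by
    rw [← Int.natAbs_mul, ← Int.natAbs_natCast (p ^ (2 * k - 1))]
    exact Int.natAbs_dvd_natAbs.2 (by exact_mod_cast h)
  have hle : 2 * k - 1 ≤ (x.natAbs * y.natAbs).factorization p :=
    (hp.pow_dvd_iff_le_factorization (Nat.mul_ne_zero hxn hyn)).1 h'
  rw [Nat.factorization_mul hxn hyn] at hle
  simp only [Finsupp.add_apply] at hle
  have : k ≤ x.natAbs.factorization p ∨ k ≤ y.natAbs.factorization p := by omega
  rcases this with h1 | h1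
  · left
    have := (hp.pow_dvd_iff_le_factorization hxn).2 h1
    have := Int.natCast_dvd.2 this
    exact_mod_cast this
  · right
    have := (hp.pow_dvd_iff_le_factorization hyn).2 h1
    have := Int.natCast_dvd.2 this
    exact_mod_cast this

theorem stmt_4 (n : ℕ) (hn : 1 ≤ n) (x y : ℤ)
    (h1 : (n : ℤ) ∣ x - y) (h2 : (Nat.factorial n : ℤ) ∣ x * y) :
    (n : ℤ) ∣ x ∧ (n : ℤ) ∣ y := by
  have key : ∀ p k : ℕ, p.Prime → p ^ k ∣ n → (p : ℤ) ^ k ∣ x ∧ (p : ℤ) ^ k ∣ y := by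
    intro p k hp hpk
    have hpk' : (p : ℤ) ^ k ∣ x - y := by
      refine dvd_trans ?_ h1
      exact_mod_cast Int.natCast_dvd_natCast.2 hpk
    have hfac : p ^ (2 * k - 1) ∣ Nat.factorial n := by
      rcases Nat.eq_zero_or_pos k with rfl | hk
      · simp
      · have h1' : p ^ k ≤ n := Nat.le_of_dvd (by omega) hpk
        exact (fact_pow_aux p k hp hk).trans
          (Nat.factorial_dvd_factorial h1')
    have hxy : (p : ℤ) ^ (2 * k - 1) ∣ x * y := by
      refine dvd_trans ?_ h2
      exact_mod_cast Int.natCast_dvd_natCast.2 hfac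
    rcases key_split p k hp x y hxy with hx | hy
    · exact ⟨hx, by have := dvd_sub hx hpk'; simpa using this⟩
    · refine ⟨?_, hy⟩
      have := dvd_add hpk' hy
      simpa using this
  constructor
  · rw [Int.natCast_dvd, Nat.dvd_iff_prime_pow_dvd_dvd]
    intro p k hp hpk
    have := (key p k hp hpk).1
    rw [show ((p:ℤ))^k = ((p^k : ℕ) : ℤ) by push_cast; ring] at this
    exact Int.natCast_dvd.1 this
  · rw [Int.natCast_dvd, Nat.dvd_iff_prime_pow_dvd_dvd]
    intro p k hp hpk
    have := (key p k hp hpk).2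
    rw [show ((p:ℤ))^k = ((p^k : ℕ) : ℤ) by push_cast; ring] at this
    exact Int.natCast_dvd.1 this
end

section
/- Let (u_k) be an arithmetic progression with positive first term u_0 and positive common difference r, with gcd(u_0, r) = 1. Then for every nonnegative integer n, lcm{u_0, u_1, ..., u_n} ≥ u_0·(r+1)^{n−1}. -/
lemma lemA (r : ℕ) : ∀ (m a L : ℕ), (∀ i, i ≤ m → (a + i * r) ∣ L) →
    (∏ i ∈ Finset.range (m + 1), (a + i * r)) ∣ m.factorial * r ^ m * L := by
  intro m
  induction m with
  | zero =>
    intro a L h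
    simpa using h 0 (le_refl 0)
  | succ m ih =>
    intro a L h
    have h0 : (∏ i ∈ Finset.range (m + 1), (a + i * r)) ∣ m.factorial * r ^ m * L :=
      ih a L (fun i hi => h i (Nat.le_succ_of_le hi))
    have h1 : (∏ i ∈ Finset.range (m + 1), (a + r + i * r)) ∣ m.factorial * r ^ m * L := by
      apply ih (a + r) L
      intro i hi
      have := h (i + 1) (Nat.succ_le_succ hi)
      have e : a + (i + 1) * r = a + r + i * r := by ring
      rwa [e] at this
    set D := m.factorial * r ^ m * L with hD
    set P2 := ∏ i ∈ Finset.range (m + 2), (a + i * r) with hP2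
    have e1 : P2 = (∏ i ∈ Finset.range (m + 1), (a + i * r)) * (a + (m + 1) * r) :=
      Finset.prod_range_succ _ _
    have e2 : P2 = (∏ i ∈ Finset.range (m + 1), (a + r + i * r)) * a := by
      rw [hP2, Finset.prod_range_succ' (fun i => a + i * r) (m + 1)]
      simp only [Nat.zero_mul, Nat.add_zero]
      congr 1
      apply Finset.prod_congr rfl
      intro i _
      ring
    have d1 : P2 ∣ (a + (m + 1) * r) * D := by
      rw [e1, mul_comm]
      exact mul_dvd_mul_left _ h0
    have d2 : P2 ∣ a * D := by
      rw [e2, mul_comm]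
      exact mul_dvd_mul_left _ h1
    have d3 : P2 ∣ (a + (m + 1) * r) * D - a * D := Nat.dvd_sub d1 d2
    have e3 : (a + (m + 1) * r) * D - a * D = (m + 1) * r * D := by
      rw [← Nat.sub_mul, Nat.add_sub_cancel_left]
    rw [e3] at d3
    have e4 : (m + 1).factorial * r ^ (m + 1) * L = (m + 1) * r * D := by
      rw [hD, Nat.factorial_succ, pow_succ]
      ring
    rw [e4]
    exact d3

lemma lemB (u₀ r : ℕ) (hu₀ : 0 < u₀) (hr : 0 < r) :
    ∀ n, 1 ≤ n → ∃ k m, k + m = n ∧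
      m.factorial * (u₀ * (r + 1) ^ (n - 1)) ≤
        ∏ i ∈ Finset.range (m + 1), (u₀ + k * r + i * r) := by
  intro n hn
  induction n, hn using Nat.le_induction with
  | base =>
    refine ⟨1, 0, rfl, ?_⟩
    simp
  | succ n hn ih =>
    obtain ⟨k, m, hkm, hle⟩ := ih
    have hn1 : n - 1 + 1 = n := by omega
    have epow : (r + 1) ^ (n + 1 - 1) = (r + 1) ^ (n - 1) * (r + 1) := by
      rw [Nat.add_sub_cancel]
      conv_lhs => rw [← hn1]
      rw [pow_succ]
    rcases le_or_gt (n + 1) (u₀ + k * (r + 1)) with hc | hc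
    · -- keep k, extend m
      refine ⟨k, m + 1, by omega, ?_⟩
      rw [Finset.prod_range_succ]
      have hc' : n + 1 ≤ u₀ + k * r + k := by
        have e : k * (r + 1) = k * r + k := by ring
        omega
      have hm1 : m + 1 ≤ u₀ + k * r := by omega
      have hfac : (m + 1) * (r + 1) ≤ u₀ + k * r + (m + 1) * r := by
        have e : (m + 1) * (r + 1) = (m + 1) * r + (m + 1) := by ring
        omega
      calc (m + 1).factorial * (u₀ * (r + 1) ^ (n + 1 - 1))
          = (m.factorial * (u₀ * (r + 1) ^ (n - 1))) * ((m + 1) * (r + 1)) := by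
            rw [Nat.factorial_succ, epow]
            ring
        _ ≤ (∏ i ∈ Finset.range (m + 1), (u₀ + k * r + i * r))
              * (u₀ + k * r + (m + 1) * r) := Nat.mul_le_mul hle hfac
    · -- increment k
      refine ⟨k + 1, m, by omega, ?_⟩
      have hcase : u₀ + k * r + k ≤ n := by
        have e : k * (r + 1) = k * r + k := by ring
        omega
      have hC : 0 < u₀ + k * r := by omega
      apply Nat.le_of_mul_le_mul_right _ hC
      -- new product * (u₀ + k*r) = old product * (u₀ + k*r + (m+1)*r)
      have key : (∏ i ∈ Finset.range (m + 1), (u₀ + (k + 1) * r + i * r)) * (u₀ + k * r)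
          = (∏ i ∈ Finset.range (m + 1), (u₀ + k * r + i * r)) * (u₀ + k * r + (m + 1) * r) := by
        have l1 : (∏ i ∈ Finset.range (m + 2), (u₀ + k * r + i * r))
            = (∏ i ∈ Finset.range (m + 1), (u₀ + (k + 1) * r + i * r)) * (u₀ + k * r) := by
          rw [Finset.prod_range_succ' (fun i => u₀ + k * r + i * r) (m + 1)]
          simp only [Nat.zero_mul, Nat.add_zero]
          congr 1
          apply Finset.prod_congr rfl
          intro i _
          ring
        have l2 : (∏ i ∈ Finset.range (m + 2), (u₀ + k * r + i * r))
            = (∏ i ∈ Finset.range (m + 1), (u₀ + k * r + i * r)) * (u₀ + k * r + (m + 1) * r) :=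
          Finset.prod_range_succ _ _
        rw [← l1, l2]
      rw [key]
      have hfac2 : (r + 1) * (u₀ + k * r) ≤ u₀ + k * r + (m + 1) * r := by
        have h1 : u₀ + k * r ≤ m := by omega
        have e : (r + 1) * (u₀ + k * r) = (u₀ + k * r) + (u₀ + k * r) * r := by ring
        have h2 : (u₀ + k * r) * r ≤ m * r := Nat.mul_le_mul_right r h1
        have h3 : m * r ≤ (m + 1) * r := Nat.mul_le_mul_right r (by omega)
        omega
      calc m.factorial * (u₀ * (r + 1) ^ (n + 1 - 1)) * (u₀ + k * r)
          = (m.factorial * (u₀ * (r + 1) ^ (n - 1))) * ((r + 1) * (u₀ + k * r)) := by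
            rw [epow]
            ring
        _ ≤ (∏ i ∈ Finset.range (m + 1), (u₀ + k * r + i * r))
              * (u₀ + k * r + (m + 1) * r) := Nat.mul_le_mul hle hfac2

theorem stmt_5 (u₀ r : ℕ) (hu₀ : 0 < u₀) (hr : 0 < r)
    (hcop : Nat.Coprime u₀ r) (u : ℕ → ℕ) (hu : ∀ k, u k = u₀ + k * r) (n : ℕ) :
    (((Finset.range (n + 1)).lcm u : ℕ) : ℝ) ≥ u₀ * (r + 1 : ℝ) ^ ((n : ℝ) - 1) := by
  rcases Nat.eq_zero_or_pos n with hn | hn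
  · subst hn
    have hL : (Finset.range 1).lcm u = u 0 := by
      simp [Finset.range_one]
    rw [hL, hu 0]
    have e : ((0 : ℕ) : ℝ) - 1 = -1 := by norm_num
    rw [e, Real.rpow_neg_one]
    have h1 : ((r : ℝ) + 1)⁻¹ ≤ 1 := by
      apply inv_le_one_of_one_le₀
      have : (0 : ℝ) ≤ (r : ℝ) := Nat.cast_nonneg r
      linarith
    have h2 : (u₀ : ℝ) * ((r : ℝ) + 1)⁻¹ ≤ (u₀ : ℝ) * 1 := by
      apply mul_le_mul_of_nonneg_left h1 (Nat.cast_nonneg u₀)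
    simp only [ge_iff_le]
    calc (u₀ : ℝ) * ((r : ℝ) + 1)⁻¹ ≤ (u₀ : ℝ) := by linarith
      _ ≤ ((u₀ + 0 * r : ℕ) : ℝ) := by push_cast; linarith
  · obtain ⟨k, m, hkm, hle⟩ := lemB u₀ r hu₀ hr n hn
    set L := (Finset.range (n + 1)).lcm u with hLdef
    have hdvdL : ∀ i, i ≤ m → (u₀ + k * r + i * r) ∣ L := by
      intro i hi
      have e : u₀ + k * r + i * r = u (k + i) := by rw [hu]; ring
      rw [e]
      apply Finset.dvd_lcm
      simp only [Finset.mem_range]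
      omega
    have hA := lemA r m (u₀ + k * r) L hdvdL
    have hcpr : Nat.Coprime (∏ i ∈ Finset.range (m + 1), (u₀ + k * r + i * r)) (r ^ m) := by
      apply Nat.Coprime.pow_right
      apply Nat.Coprime.prod_left
      intro i _
      have e : u₀ + k * r + i * r = u₀ + (k + i) * r := by ring
      rw [e]
      exact (Nat.coprime_add_mul_right_left u₀ r (k + i)).mpr hcop
    have hA2 : (∏ i ∈ Finset.range (m + 1), (u₀ + k * r + i * r)) ∣ m.factorial * L := by
      apply hcpr.dvd_of_dvd_mul_right
      have e : m.factorial * L * r ^ m = m.factorial * r ^ m * L := by ring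
      rwa [e]
    have hLne : L ≠ 0 := by
      rw [hLdef]
      rw [Ne, Finset.lcm_eq_zero_iff]
      intro h
      obtain ⟨i, _, hi⟩ := h
      rw [hu] at hi
      omega
    have hprodle : (∏ i ∈ Finset.range (m + 1), (u₀ + k * r + i * r)) ≤ m.factorial * L :=
      Nat.le_of_dvd (by positivity) hA2
    have hnat : u₀ * (r + 1) ^ (n - 1) ≤ L := by
      have h := le_trans hle hprodle
      exact Nat.le_of_mul_le_mul_left h (Nat.factorial_pos m)
    have hcast : ((n : ℝ)) - 1 = ((n - 1 : ℕ) : ℝ) := by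
      rw [Nat.cast_sub hn]
      norm_num
    rw [ge_iff_le, hcast, Real.rpow_natCast]
    calc (u₀ : ℝ) * ((r : ℝ) + 1) ^ (n - 1 : ℕ)
        = ((u₀ * (r + 1) ^ (n - 1) : ℕ) : ℝ) := by push_cast; ring
      _ ≤ (L : ℝ) := by exact_mod_cast hnat
end

section
/- Let (u_k) be an arithmetic progression with positive first term u_0 and positive common difference r, gcd(u_0, r) = 1. If n is a positive multiple of r + 1, then lcm{u_0, ..., u_n} ≥ u_0·(r+1)^n. -/
open Finset

section FarhiAux

private lemma shift_erase_prod (M i : ℕ) (h : ℕ → ℤ) :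
    ∏ j ∈ (range (M+2)).erase (i+1), h j
      = h 0 * ∏ j ∈ (range (M+1)).erase i, h (j+1) := by
  have hset : (range (M+2)).erase (i+1)
      = insert 0 (((range (M+1)).erase i).map ⟨Nat.succ, Nat.succ_injective⟩) := by
    ext a
    simp only [mem_erase, mem_range, mem_insert, mem_map, Function.Embedding.coeFn_mk]
    constructor
    · rintro ⟨ha, hb⟩
      rcases a with _ | a
      · exact Or.inl rfl
      · exact Or.inr ⟨a, ⟨by omega, by omega⟩, rfl⟩
    · rintro (rfl | ⟨b, ⟨hb1, hb2⟩, rfl⟩) <;> omega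
  rw [hset, Finset.prod_insert (by simp), Finset.prod_map]
  rfl

private lemma top_erase_prod (M i : ℕ) (hi : i ∈ range (M+1)) (h : ℕ → ℤ) :
    ∏ j ∈ (range (M+2)).erase i, h j
      = h (M+1) * ∏ j ∈ (range (M+1)).erase i, h j := by
  have hne : (M+1 : ℕ) ≠ i := by simp at hi; omega
  rw [range_add_one, Finset.erase_insert_of_ne hne, Finset.prod_insert (by simp)]

private lemma key_identity (r : ℤ) : ∀ (M : ℕ) (x : ℤ),
    ∑ i ∈ range (M+1), (-1)^i * (M.choose i : ℤ) * ∏ j ∈ (range (M+1)).erase i, (x + j*r)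
      = ((Nat.factorial M : ℕ) : ℤ) * r^M := by
  intro M
  induction M with
  | zero => intro x; simp
  | succ M ih =>
    intro x
    set g : ℕ → ℤ := fun i => (-1)^i * (M.choose i : ℤ) * ∏ j ∈ (range (M+2)).erase i, (x + j*r) with hg
    set a : ℕ → ℤ := fun i => (-1)^i * (M.choose i : ℤ) * ∏ j ∈ (range (M+1)).erase i, ((x+r) + j*r) with ha
    have key : ∀ i ∈ range (M+1),
        (-1:ℤ)^(i+1) * (((M+1).choose (i+1) : ℕ) : ℤ) * ∏ j ∈ (range (M+2)).erase (i+1), (x + j*r)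
        = g (i+1) - x * a i := by
      intro i hi
      rw [Nat.choose_succ_succ]
      have hs := shift_erase_prod M i (fun j => x + j*r)
      have hcong : (∏ j ∈ (range (M+1)).erase i, (x + ((j+1 : ℕ) : ℤ)*r))
            = ∏ j ∈ (range (M+1)).erase i, ((x+r) + j*r) :=
        Finset.prod_congr rfl (fun j _ => by push_cast; ring)
      simp only [hg, ha]
      push_cast at hs hcong ⊢
      rw [hs, hcong]
      ring
    rw [Finset.sum_range_succ' _ (M+1), Finset.sum_congr rfl key, Finset.sum_sub_distrib,
      ← Finset.mul_sum]
    have hA : ∑ i ∈ range (M+1), a i = ((Nat.factorial M : ℕ) : ℤ) * r^M := ih (x+r)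
    have hg0 : (-1:ℤ)^0 * (((M+1).choose 0 : ℕ) : ℤ) * ∏ j ∈ (range (M+2)).erase 0, (x + j*r) = g 0 := by
      simp [hg]
    have hsum : ∑ i ∈ range (M+1), g (i+1) + g 0 = (x + (M+1)*r) * (((Nat.factorial M : ℕ) : ℤ) * r^M) := by
      rw [← Finset.sum_range_succ' g (M+1), Finset.sum_range_succ]
      have hgtop : g (M+1) = 0 := by simp [hg, Nat.choose_succ_self]
      rw [hgtop, add_zero]
      have : ∀ i ∈ range (M+1), g i
          = (x + (M+1)*r) * ((-1)^i * (M.choose i : ℤ) * ∏ j ∈ (range (M+1)).erase i, (x + j*r)) := by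
        intro i hi
        simp only [hg]
        rw [top_erase_prod M i hi (fun j => x + j*r)]
        push_cast
        ring
      rw [Finset.sum_congr rfl this, ← Finset.mul_sum, ih x]
    rw [hg0, hA, Nat.factorial_succ]
    push_cast at hsum ⊢
    linear_combination hsum

private lemma prod_dvd_lcm_mul_fact (u₀ r L k M : ℕ) (hcop : Nat.Coprime u₀ r)
    (hdvd : ∀ i, i ≤ M → (u₀ + (k+i)*r) ∣ L) :
    (∏ j ∈ range (M+1), (u₀ + (k+j)*r)) ∣ L * Nat.factorial M := by
  have hZ : ((∏ j ∈ range (M+1), (u₀ + (k+j)*r) : ℕ) : ℤ)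
      ∣ (L : ℤ) * (Nat.factorial M : ℤ) * (r : ℤ)^M := by
    set x : ℤ := (u₀ : ℤ) + k * r with hx
    have hcast : ((∏ j ∈ range (M+1), (u₀ + (k+j)*r) : ℕ) : ℤ)
        = ∏ j ∈ range (M+1), (x + j*(r:ℤ)) := by
      push_cast
      exact Finset.prod_congr rfl (fun j _ => by ring)
    set cc : ℕ → ℕ := fun i => L / (u₀ + (k+i)*r) with hcc
    have hc : ∀ i, i ≤ M → L = (u₀ + (k+i)*r) * cc i := by
      intro i hi
      rw [hcc]
      exact (Nat.mul_div_cancel' (hdvd i hi)).symm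
    have hterm : ∀ i ∈ range (M+1),
        (L : ℤ) * ((-1)^i * (M.choose i : ℤ) * ∏ j ∈ (range (M+1)).erase i, (x + j*(r:ℤ)))
        = (∏ j ∈ range (M+1), (x + j*(r:ℤ))) * ((-1)^i * (M.choose i : ℤ) * (cc i : ℤ)) := by
      intro i hi
      have h0 := hc i (by simpa [Nat.lt_succ_iff] using hi)
      have h1 : (L : ℤ) = (x + i*(r:ℤ)) * (cc i : ℤ) := by
        rw [h0]; push_cast; ring
      rw [h1, ← Finset.mul_prod_erase (range (M+1)) (fun j => x + j*(r:ℤ)) hi]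
      ring
    have hmain : (L : ℤ) * (Nat.factorial M : ℤ) * (r:ℤ)^M
        = (∏ j ∈ range (M+1), (x + j*(r:ℤ)))
          * ∑ i ∈ range (M+1), ((-1:ℤ)^i * (M.choose i : ℤ) * (cc i : ℤ)) := by
      rw [Finset.mul_sum]
      calc (L : ℤ) * (Nat.factorial M : ℤ) * (r:ℤ)^M
          = (L : ℤ) * (((Nat.factorial M : ℕ) : ℤ) * (r:ℤ)^M) := by push_cast; ring
        _ = (L : ℤ) * ∑ i ∈ range (M+1), (-1)^i * (M.choose i : ℤ)
              * ∏ j ∈ (range (M+1)).erase i, (x + j*(r:ℤ)) := by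
            rw [key_identity (r:ℤ) M x]
        _ = ∑ i ∈ range (M+1), (L : ℤ) * ((-1)^i * (M.choose i : ℤ)
              * ∏ j ∈ (range (M+1)).erase i, (x + j*(r:ℤ))) := by rw [Finset.mul_sum]
        _ = _ := Finset.sum_congr rfl hterm
    rw [hcast, hmain]
    exact Dvd.intro _ rfl
  have hN : (∏ j ∈ range (M+1), (u₀ + (k+j)*r)) ∣ L * Nat.factorial M * r^M := by
    exact_mod_cast hZ
  have hcp : Nat.Coprime (∏ j ∈ range (M+1), (u₀ + (k+j)*r)) (r^M) := by
    apply Nat.Coprime.pow_right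
    apply Nat.Coprime.prod_left
    intro j _
    exact (Nat.coprime_add_mul_right_left u₀ r (k+j)).mpr hcop
  exact hcp.dvd_of_dvd_mul_right hN

private lemma prodlem (B : ℕ → ℕ) (hmono : ∀ s, B s ≤ B (s+1)) (d : ℕ) :
    ∀ t, ∏ s ∈ range (t+1), B s + (t+1) * d * ∏ s ∈ range t, B s
      ≤ ∏ s ∈ range (t+1), (B s + d) := by
  intro t
  induction t with
  | zero => simp
  | succ t ih =>
    have e1 : ∏ s ∈ range (t+2), (B s + d) = (∏ s ∈ range (t+1), (B s + d)) * (B (t+1) + d) :=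
      Finset.prod_range_succ _ _
    have e2 : ∏ s ∈ range (t+2), B s = (∏ s ∈ range (t+1), B s) * B (t+1) :=
      Finset.prod_range_succ _ _
    have e3 : ∏ s ∈ range (t+1), B s = (∏ s ∈ range t, B s) * B t :=
      Finset.prod_range_succ _ _
    have hb : B t ≤ B (t+1) := hmono t
    have h4 : (∏ s ∈ range t, B s) * B (t+1) ≥ ∏ s ∈ range (t+1), B s := by
      rw [e3]; exact Nat.mul_le_mul_left _ hb
    rw [e1, e2]
    calc (∏ s ∈ range (t+1), B s) * B (t+1) + (t+2) * d * ∏ s ∈ range (t+1), B s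
        ≤ (∏ s ∈ range (t+1), B s) * B (t+1) + (t+1) * d * ((∏ s ∈ range t, B s) * B (t+1))
          + d * ∏ s ∈ range (t+1), B s := by
          have := Nat.mul_le_mul_left ((t+1)*d) h4
          nlinarith [h4]
      _ ≤ (∏ s ∈ range (t+1), B s + (t+1) * d * ∏ s ∈ range t, B s) * (B (t+1) + d) := by
          nlinarith [Nat.zero_le ((t+1) * d * ∏ s ∈ range t, B s)]
      _ ≤ (∏ s ∈ range (t+1), (B s + d)) * (B (t+1) + d) := Nat.mul_le_mul_right _ ih

private lemma S_lemma (u₀ M r : ℕ) (hu : 1 ≤ u₀) (hr : 1 ≤ r) :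
    (u₀+M) * (r+1)^(r+1) * ∏ s ∈ range r, (M+s+1)
      ≤ ∏ s ∈ range (r+1), (u₀ + M*(r+1) + (s+1)*r) := by
  rcases le_or_gt u₀ (r+1) with hcase | hcase
  · have hterm : ∀ s ∈ range (r+1),
        (r+1) * (if s < u₀ then M+s+1 else M+s) ≤ u₀ + M*(r+1) + (s+1)*r := by
      intro s hs
      simp only [mem_range] at hs
      split_ifs with h
      · nlinarith
      · nlinarith
    have hprod : ∏ s ∈ range (r+1), ((r+1) * (if s < u₀ then M+s+1 else M+s))
        = (u₀+M) * (r+1)^(r+1) * ∏ s ∈ range r, (M+s+1) := by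
      rw [Finset.prod_mul_distrib, Finset.prod_const, Finset.card_range]
      obtain ⟨v, rfl⟩ : ∃ v, u₀ = v + 1 := ⟨u₀ - 1, by omega⟩
      obtain ⟨w, hw⟩ : ∃ w, r = v + w := ⟨r - v, by omega⟩
      subst hw
      have hsplit : ∏ s ∈ range (v+w+1), (if s < v+1 then M+s+1 else M+s)
          = (∏ s ∈ range (v+1), (M+s+1)) * ∏ i ∈ range w, (M+(v+1+i)) := by
        have hvw : v+w+1 = (v+1) + w := by ring
        rw [hvw, Finset.prod_range_add]
        congr 1
        · exact Finset.prod_congr rfl (fun s hs => by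
            simp only [mem_range] at hs; rw [if_pos (by omega)])
        · exact Finset.prod_congr rfl (fun i _ => by
            rw [if_neg (by omega)])
      have hsplit2 : ∏ s ∈ range (v+w), (M+s+1)
          = (∏ s ∈ range v, (M+s+1)) * ∏ i ∈ range w, (M+(v+1+i)) := by
        rw [Finset.prod_range_add]
        congr 1
        exact Finset.prod_congr rfl (fun i _ => by ring_nf)
      rw [hsplit, hsplit2, Finset.prod_range_succ]
      ring
    calc (u₀+M) * (r+1)^(r+1) * ∏ s ∈ range r, (M+s+1)
        = ∏ s ∈ range (r+1), ((r+1) * (if s < u₀ then M+s+1 else M+s)) := hprod.symm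
      _ ≤ ∏ s ∈ range (r+1), (u₀ + M*(r+1) + (s+1)*r) := Finset.prod_le_prod' hterm
  · obtain ⟨c, hc, rfl⟩ : ∃ c, 1 ≤ c ∧ u₀ = (r+1) + c := ⟨u₀ - (r+1), by omega, by omega⟩
    set A : ℕ → ℕ := fun s => (r+1) + c + M*(r+1) + (s+1)*r with hA
    set B : ℕ → ℕ := fun s => (r+1)*(M+s+1) with hB
    have hmono : ∀ s, B s ≤ B (s+1) := fun s => by simp only [hB]; nlinarith
    have hterm : ∀ s ∈ range r, B s + (c+1) ≤ A s := by
      intro s hs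
      simp only [mem_range] at hs
      simp only [hA, hB]
      nlinarith
    obtain ⟨t, rfl⟩ : ∃ t, r = t + 1 := ⟨r - 1, by omega⟩
    have h1 : ∏ s ∈ range (t+1), (B s + (c+1)) ≤ ∏ s ∈ range (t+1), A s :=
      Finset.prod_le_prod' hterm
    have h2 := prodlem B hmono (c+1) t
    have h3 : ∏ s ∈ range (t+2), A s = (∏ s ∈ range (t+1), A s) * A (t+1) :=
      Finset.prod_range_succ _ _
    have hPb : ∏ s ∈ range (t+1), B s = (t+2)^(t+1) * ∏ s ∈ range (t+1), (M+s+1) := by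
      simp only [hB]
      rw [Finset.prod_mul_distrib, Finset.prod_const, Finset.card_range]
    have hPb2 : ∏ s ∈ range (t+1), B s = (∏ s ∈ range t, B s) * ((t+2)*(M+t+1)) := by
      rw [Finset.prod_range_succ]
    have hscalar : ((t+1)+1 + c + M) * ((t+1)+1) * ∏ s ∈ range (t+1), B s
        ≤ (∏ s ∈ range (t+1), B s + (t+1)*(c+1) * ∏ s ∈ range t, B s) * A (t+1) := by
      have hAr : A (t+1) = ((t+1)+1)*(M+t+2) + c := by simp only [hA]; ring
      rw [hPb2, hAr]
      set Pb' := ∏ s ∈ range t, B s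
      calc ((t+1)+1 + c + M) * ((t+1)+1) * (Pb' * ((t+2)*(M+t+1)))
          = Pb' * (((t+2) + c + M) * (t+2) * ((t+2)*(M+t+1))) := by ring
        _ ≤ Pb' * (((t+2)*(M+t+1)) * (((t+2))*(M+t+2) + c) + (t+1)*(c+1) * (((t+2))*(M+t+2) + c)) := by
            apply Nat.mul_le_mul_left
            have hb_le : (t+2)*(M+t+1) ≤ (t+2)*(M+t+2)+c := by nlinarith
            nlinarith [Nat.mul_le_mul_left ((t+1)*c) hb_le]
        _ = (Pb' * ((t+2)*(M+t+1)) + (t+1)*(c+1) * Pb') * (((t+1)+1)*(M+t+2) + c) := by ring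
    calc ((t+1)+1+c+M) * ((t+1)+1)^((t+1)+1) * ∏ s ∈ range (t+1), (M+s+1)
        = ((t+1)+1 + c + M) * ((t+1)+1) * ((t+2)^(t+1) * ∏ s ∈ range (t+1), (M+s+1)) := by ring
      _ = ((t+1)+1 + c + M) * ((t+1)+1) * ∏ s ∈ range (t+1), B s := by rw [hPb]
      _ ≤ (∏ s ∈ range (t+1), B s + (t+1)*(c+1) * ∏ s ∈ range t, B s) * A (t+1) := hscalar
      _ ≤ (∏ s ∈ range (t+1), (B s + (c+1))) * A (t+1) := Nat.mul_le_mul_right _ h2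
      _ ≤ (∏ s ∈ range (t+1), A s) * A (t+1) := Nat.mul_le_mul_right _ h1
      _ = ∏ s ∈ range (t+2), A s := h3.symm

private lemma fact_add (a : ℕ) : ∀ b, Nat.factorial (a+b) = Nat.factorial a * ∏ s ∈ range b, (a+1+s) := by
  intro b
  induction b with
  | zero => simp
  | succ b ih =>
    rw [show a + (b+1) = (a+b) + 1 from rfl, Nat.factorial_succ, ih, Finset.prod_range_succ]
    ring

private lemma main_ineq (u₀ r : ℕ) (hu : 1 ≤ u₀) (hr : 1 ≤ r) :
    ∀ m, u₀ * (r+1)^(m*(r+1)) * Nat.factorial (m*r)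
      ≤ ∏ j ∈ range (m*r+1), (u₀ + (m+j)*r) := by
  intro m
  induction m with
  | zero => simp
  | succ m ih =>
    set W : ℕ := ∏ s ∈ range (r+1), (u₀ + (m*r)*(r+1) + (s+1)*r) with hW
    set X : ℕ := ∏ j ∈ range ((m+1)*r+1), (u₀ + (m+1+j)*r) with hX
    have h1 : (u₀ + m*r) * X = (∏ j ∈ range (m*r+1), (u₀ + (m+j)*r)) * W := by
      have e1 : X = (∏ j ∈ range (m*r), (u₀ + (m+1+j)*r)) * ∏ s ∈ range (r+1), (u₀ + (m+1+(m*r+s))*r) := by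
        rw [hX, show (m+1)*r+1 = m*r + (r+1) by ring, Finset.prod_range_add]
      have e2 : ∏ j ∈ range (m*r+1), (u₀ + (m+j)*r)
          = (∏ j ∈ range (m*r), (u₀ + (m+1+j)*r)) * (u₀ + m*r) := by
        rw [Finset.prod_range_succ' (fun j => u₀ + (m+j)*r) (m*r)]
        congr 1
        exact Finset.prod_congr rfl (fun j _ => by ring_nf)
      have e3 : W = ∏ s ∈ range (r+1), (u₀ + (m+1+(m*r+s))*r) := by
        rw [hW]
        exact Finset.prod_congr rfl (fun s _ => by ring_nf)
      rw [e1, e2, e3]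
      ring
    have hS : (u₀ + m*r) * (r+1)^(r+1) * ∏ s ∈ range r, ((m*r)+s+1) ≤ W :=
      S_lemma u₀ (m*r) r hu hr
    have h2 : (u₀ * (r+1)^(m*(r+1)) * Nat.factorial (m*r)) * W
        ≥ (u₀ + m*r) * (u₀ * (r+1)^((m+1)*(r+1)) * Nat.factorial ((m+1)*r)) := by
      have hfact : Nat.factorial ((m+1)*r) = Nat.factorial (m*r) * ∏ s ∈ range r, (m*r+1+s) := by
        rw [show (m+1)*r = m*r + r by ring, fact_add]
      have hpow : (r+1)^((m+1)*(r+1)) = (r+1)^(m*(r+1)) * (r+1)^(r+1) := by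
        rw [← pow_add]
        congr 1
        ring
      have hprodeq : ∏ s ∈ range r, (m*r+1+s) = ∏ s ∈ range r, ((m*r)+s+1) :=
        Finset.prod_congr rfl (fun s _ => by ring)
      calc (u₀ + m*r) * (u₀ * (r+1)^((m+1)*(r+1)) * Nat.factorial ((m+1)*r))
          = (u₀ * (r+1)^(m*(r+1)) * Nat.factorial (m*r))
            * ((u₀ + m*r) * (r+1)^(r+1) * ∏ s ∈ range r, ((m*r)+s+1)) := by
            rw [hfact, hpow, hprodeq]; ring
        _ ≤ (u₀ * (r+1)^(m*(r+1)) * Nat.factorial (m*r)) * W := Nat.mul_le_mul_left _ hS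
    have h3 : (u₀ + m*r) * (u₀ * (r+1)^((m+1)*(r+1)) * Nat.factorial ((m+1)*r))
        ≤ (u₀ + m*r) * X := by
      calc (u₀ + m*r) * (u₀ * (r+1)^((m+1)*(r+1)) * Nat.factorial ((m+1)*r))
          ≤ (u₀ * (r+1)^(m*(r+1)) * Nat.factorial (m*r)) * W := h2
        _ ≤ (∏ j ∈ range (m*r+1), (u₀ + (m+j)*r)) * W := Nat.mul_le_mul_right _ ih
        _ = (u₀ + m*r) * X := h1.symm
    exact Nat.le_of_mul_le_mul_left h3 (by omega)

end FarhiAux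

theorem stmt_6 (u₀ r : ℕ) (hu₀ : 0 < u₀) (hr : 0 < r)
    (hcop : Nat.Coprime u₀ r) (u : ℕ → ℕ) (hu : ∀ k, u k = u₀ + k * r)
    (n : ℕ) (hn : 0 < n) (hdvd : (r + 1) ∣ n) :
    (Finset.range (n + 1)).lcm u ≥ u₀ * (r + 1) ^ n := by
  obtain ⟨m, hm⟩ := hdvd
  set L := (Finset.range (n+1)).lcm u with hL
  have hdvd_all : ∀ i, i ≤ m*r → (u₀ + (m+i)*r) ∣ L := by
    intro i hi
    have hmem : m + i ∈ Finset.range (n+1) := by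
      simp only [Finset.mem_range]
      have : m + m*r ≤ n := by rw [hm]; ring_nf; omega
      omega
    have := Finset.dvd_lcm (f := u) hmem
    rwa [hu (m+i)] at this
  have hdl := prod_dvd_lcm_mul_fact u₀ r L m (m*r) hcop hdvd_all
  have hLne : L ≠ 0 := by
    rw [hL, Ne, Finset.lcm_eq_zero_iff]
    intro hmem
    obtain ⟨k, hk, h0⟩ := hmem
    rw [hu k] at h0
    omega
  have hLpos : 0 < L * Nat.factorial (m*r) :=
    Nat.mul_pos (Nat.pos_of_ne_zero hLne) (Nat.factorial_pos _)
  have hle : ∏ j ∈ Finset.range (m*r+1), (u₀ + (m+j)*r) ≤ L * Nat.factorial (m*r) :=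
    Nat.le_of_dvd hLpos hdl
  have hmain := main_ineq u₀ r hu₀ hr m
  have hneq : m*(r+1) = n := by rw [hm]; ring
  rw [hneq] at hmain
  have hfin : u₀ * (r+1)^n * Nat.factorial (m*r) ≤ L * Nat.factorial (m*r) :=
    le_trans hmain hle
  exact Nat.le_of_mul_le_mul_right hfin (Nat.factorial_pos _)
end

section
/- Let (u_k) be an arithmetic progression with positive first term u_0 and positive common difference r, gcd(u_0, r) = 1. Then for every positive integer n, lcm{u_0, ..., u_n} ≥ r·(r+1)^{n−1}. -/
open Finset

lemma key_ident : ∀ (k : ℕ) (u r : ℤ),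
    ∑ i ∈ Finset.range (k+1), (-1:ℤ)^i * (k.choose i) *
      ∏ j ∈ (Finset.range (k+1)).erase i, (u + j*r) = (k.factorial : ℤ) * r^k := by
  intro k
  induction k with
  | zero => intro u r; simp
  | succ k ih =>
    intro u r
    set Q : ℕ → ℤ := fun i => ∏ j ∈ (Finset.range (k+1+1)).erase i, (u + j*r) with hQdef
    have hA : ∀ i ∈ Finset.range (k+1),
        Q i = (u + (k+1)*r) * ∏ j ∈ (Finset.range (k+1)).erase i, (u + j*r) := by
      intro i hi
      simp only [Finset.mem_range] at hi
      have hset : (Finset.range (k+1+1)).erase i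
          = insert (k+1) ((Finset.range (k+1)).erase i) := by
        ext x
        simp only [Finset.mem_erase, Finset.mem_range, Finset.mem_insert]
        omega
      rw [hQdef]
      simp only
      rw [hset, Finset.prod_insert (by simp)]
      congr 1
    have hB : ∀ i ∈ Finset.range (k+1),
        Q (i+1) = u * ∏ j ∈ (Finset.range (k+1)).erase i, ((u+r) + j*r) := by
      intro i hi
      simp only [Finset.mem_range] at hi
      have hset : (Finset.range (k+1+1)).erase (i+1)
          = insert 0 (Finset.image (· + 1) ((Finset.range (k+1)).erase i)) := by
        ext x
        simp only [Finset.mem_erase, Finset.mem_range, Finset.mem_insert, Finset.mem_image]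
        constructor
        · rintro ⟨hx1, hx2⟩
          rcases Nat.eq_zero_or_pos x with h0 | h0
          · left; exact h0
          · right; exact ⟨x - 1, ⟨by omega, by omega⟩, by omega⟩
        · rintro (h0 | ⟨y, ⟨hy1, hy2⟩, rfl⟩) <;> omega
      rw [hQdef]
      simp only
      rw [hset, Finset.prod_insert (by simp), Finset.prod_image (by intro a _ b _ h; simp only at h; omega)]
      have hc : ∀ j ∈ (Finset.range (k+1)).erase i, (u + (((j+1):ℕ):ℤ)*r) = ((u+r) + j*r) := by
        intro j _; push_cast; ring
      rw [Finset.prod_congr rfl hc]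
      push_cast; ring
    have hAsum : ∑ i ∈ Finset.range (k+1), (-1:ℤ)^i * (k.choose i) * Q i
        = (u + (k+1)*r) * ((k.factorial : ℤ) * r^k) := by
      rw [← ih u r, Finset.mul_sum]
      refine Finset.sum_congr rfl fun i hi => ?_
      rw [hA i hi]; ring
    have hBsum : ∑ i ∈ Finset.range (k+1), (-1:ℤ)^i * (k.choose i) * Q (i+1)
        = u * ((k.factorial : ℤ) * r^k) := by
      rw [← ih (u+r) r, Finset.mul_sum]
      refine Finset.sum_congr rfl fun i hi => ?_
      rw [hB i hi]; ring
    have hshift : ∑ i ∈ Finset.range (k+1), (-1:ℤ)^i * (k.choose i) * Q i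
        = Q 0 - ∑ i ∈ Finset.range (k+1), (-1:ℤ)^i * (k.choose (i+1)) * Q (i+1) := by
      have h1 : ∑ i ∈ Finset.range (k+1+1), (-1:ℤ)^i * (k.choose i) * Q i
          = ∑ i ∈ Finset.range (k+1), (-1:ℤ)^i * (k.choose i) * Q i := by
        rw [Finset.sum_range_succ, Nat.choose_succ_self]
        push_cast; ring
      rw [← h1, Finset.sum_range_succ' (fun i => (-1:ℤ)^i * (k.choose i) * Q i) (k+1)]
      have h2 : ∀ i ∈ Finset.range (k+1),
          (-1:ℤ)^(i+1) * (k.choose (i+1)) * Q (i+1)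
            = -((-1:ℤ)^i * (k.choose (i+1)) * Q (i+1)) := by
        intro i _; ring
      rw [Finset.sum_congr rfl h2, Finset.sum_neg_distrib, Nat.choose_zero_right]
      push_cast; ring
    have hterm : ∀ i ∈ Finset.range (k+1),
        (-1:ℤ)^(i+1) * (((k+1).choose (i+1) : ℕ) : ℤ) * Q (i+1)
          = -((-1:ℤ)^i * (k.choose i) * Q (i+1))
            + -((-1:ℤ)^i * (k.choose (i+1)) * Q (i+1)) := by
      intro i _
      rw [Nat.choose_succ_succ]
      push_cast
      ring
    show ∑ i ∈ Finset.range (k+1+1), (-1:ℤ)^i * (((k+1).choose i : ℕ) : ℤ) * Q i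
        = ((k+1).factorial : ℤ) * r^(k+1)
    rw [Finset.sum_range_succ' (fun i => (-1:ℤ)^i * (((k+1).choose i : ℕ) : ℤ) * Q i) (k+1),
      Finset.sum_congr rfl hterm, Finset.sum_add_distrib, Finset.sum_neg_distrib,
      Finset.sum_neg_distrib]
    simp only [pow_zero, Nat.choose_zero_right, Nat.cast_one, one_mul]
    rw [Nat.factorial_succ]
    push_cast
    linear_combination hAsum - hshift - hBsum

lemma prod_dvd_lcm (u₀ r : ℕ) (u : ℕ → ℕ) (hu : ∀ k, u k = u₀ + k * r)
    (n a k : ℕ) (hak : a + k ≤ n) :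
    (∏ j ∈ Finset.range (k+1), u (a+j)) ∣
      k.factorial * r^k * (Finset.range (n+1)).lcm u := by
  set L := (Finset.range (n+1)).lcm u with hL
  have hdvd : ∀ i ∈ Finset.range (k+1), u (a+i) ∣ L := by
    intro i hi
    simp only [Finset.mem_range] at hi
    exact Finset.dvd_lcm (by simp only [Finset.mem_range]; omega)
  rw [← Int.natCast_dvd_natCast]
  have hid := key_ident k ((u₀ : ℤ) + a * r) r
  have hcast : ∀ j : ℕ, ((u (a+j) : ℕ) : ℤ) = ((u₀ : ℤ) + a * r) + j * r := by
    intro j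
    rw [hu]
    push_cast
    ring
  refine ⟨∑ i ∈ Finset.range (k+1), (-1:ℤ)^i * (k.choose i) * ((L / u (a+i) : ℕ) : ℤ), ?_⟩
  have hPcast : ((∏ j ∈ Finset.range (k+1), u (a+j) : ℕ) : ℤ)
      = ∏ j ∈ Finset.range (k+1), (((u₀ : ℤ) + a * r) + j * r) := by
    push_cast
    exact Finset.prod_congr rfl fun j _ => hcast j
  calc ((k.factorial * r^k * L : ℕ) : ℤ)
      = (∑ i ∈ Finset.range (k+1), (-1:ℤ)^i * (k.choose i) *
          ∏ j ∈ (Finset.range (k+1)).erase i, (((u₀ : ℤ) + a * r) + j * r)) * (L : ℕ) := by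
        rw [hid]; push_cast; ring
    _ = ∑ i ∈ Finset.range (k+1), ((-1:ℤ)^i * (k.choose i) *
          ∏ j ∈ (Finset.range (k+1)).erase i, (((u₀ : ℤ) + a * r) + j * r)) * (L : ℕ) := by
        rw [Finset.sum_mul]
    _ = ∑ i ∈ Finset.range (k+1),
          ((∏ j ∈ Finset.range (k+1), u (a+j) : ℕ) : ℤ) *
            ((-1:ℤ)^i * (k.choose i) * ((L / u (a+i) : ℕ) : ℤ)) := by
        refine Finset.sum_congr rfl fun i hi => ?_
        have hLi : (L : ℤ) = (((u₀ : ℤ) + a * r) + i * r) * ((L / u (a+i) : ℕ) : ℤ) := by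
          rw [← hcast i]
          rw [← Nat.cast_mul, Nat.mul_div_cancel' (hdvd i hi)]
        rw [hLi, hPcast, ← Finset.prod_erase_mul (Finset.range (k+1))
          (fun j => (((u₀ : ℤ) + a * r) + j * r)) hi]
        ring
    _ = ((∏ j ∈ Finset.range (k+1), u (a+j) : ℕ) : ℤ) *
          ∑ i ∈ Finset.range (k+1), (-1:ℤ)^i * (k.choose i) * ((L / u (a+i) : ℕ) : ℤ) := by
        rw [Finset.mul_sum]

lemma asc_prod (m : ℕ) : ∀ t : ℕ, ∏ j ∈ Finset.range t, (m + j) = m.ascFactorial t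
  | 0 => by simp
  | t + 1 => by
      rw [Finset.prod_range_succ, Nat.ascFactorial_succ, asc_prod m t, mul_comm]

theorem stmt_7 (u₀ r : ℕ) (hu₀ : 0 < u₀) (hr : 0 < r)
    (hcop : Nat.Coprime u₀ r) (u : ℕ → ℕ) (hu : ∀ k, u k = u₀ + k * r)
    (n : ℕ) (hn : 1 ≤ n) :
    (Finset.range (n + 1)).lcm u ≥ r * (r + 1) ^ (n - 1) := by
  have hupos : ∀ k, 0 < u k := fun k => by rw [hu k]; omega
  set L := (Finset.range (n+1)).lcm u with hL
  have hL0 : 0 < L := by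
    rcases Nat.eq_zero_or_pos L with h | h
    · exfalso
      rw [hL, Finset.lcm_eq_zero_iff] at h
      obtain ⟨x, -, hx⟩ := h
      exact absurd hx ((hupos x).ne')
    · exact h
  obtain ⟨k, hk, hmax⟩ := Finset.exists_max_image (Finset.range n)
    (fun j => (n-1).choose j * r^j) ⟨0, by simp; omega⟩
  simp only [Finset.mem_range] at hk
  have hdvd := prod_dvd_lcm u₀ r u hu n (n-k) k (by omega)
  have hcp : Nat.Coprime (∏ j ∈ Finset.range (k+1), u (n-k+j)) (r^k) := by
    refine Nat.Coprime.pow_right _ ?_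
    refine Nat.Coprime.prod_left ?_
    intro j _
    rw [hu]
    exact (Nat.coprime_add_mul_right_left u₀ r _).mpr hcop
  have hdvd2 : (∏ j ∈ Finset.range (k+1), u (n-k+j)) ∣ k.factorial * L := by
    refine Nat.Coprime.dvd_of_dvd_mul_left hcp ?_
    have : r^k * (k.factorial * L) = k.factorial * r^k * L := by ring
    rw [this]
    exact hdvd
  have hle : ∏ j ∈ Finset.range (k+1), u (n-k+j) ≤ k.factorial * L :=
    Nat.le_of_dvd (Nat.mul_pos k.factorial_pos hL0) hdvd2
  have hbound : k.factorial * (r^(k+1) * (n * (n-1).choose k))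
      ≤ ∏ j ∈ Finset.range (k+1), u (n-k+j) := by
    have h1 : ∀ j ∈ Finset.range (k+1), (n-k+j) * r ≤ u (n-k+j) := by
      intro j _
      rw [hu]
      exact Nat.le_add_left _ _
    have e1 : ∏ j ∈ Finset.range (k+1), ((n-k+j) * r)
        = (n-k).ascFactorial (k+1) * r^(k+1) := by
      rw [Finset.prod_mul_distrib, Finset.prod_const, Finset.card_range, asc_prod]
    have e2 : (n-k).ascFactorial (k+1) = (k+1).factorial * n.choose (k+1) := by
      rw [Nat.ascFactorial_eq_factorial_mul_choose']
      congr 2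
      omega
    have e4 : (k+1) * n.choose (k+1) = n * (n-1).choose k := by
      have h := Nat.add_one_mul_choose_eq (n-1) k
      have hn1 : n - 1 + 1 = n := by omega
      rw [hn1] at h
      rw [Nat.mul_comm]
      exact h.symm
    calc k.factorial * (r^(k+1) * (n * (n-1).choose k))
        = ((k+1) * n.choose (k+1)) * k.factorial * r^(k+1) := by rw [e4]; ring
      _ = (k+1).factorial * n.choose (k+1) * r^(k+1) := by rw [Nat.factorial_succ]; ring
      _ = ∏ j ∈ Finset.range (k+1), ((n-k+j) * r) := by rw [e1, e2]
      _ ≤ ∏ j ∈ Finset.range (k+1), u (n-k+j) := Finset.prod_le_prod' h1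
  have hfinal : r^(k+1) * (n * (n-1).choose k) ≤ L :=
    Nat.le_of_mul_le_mul_left (le_trans hbound hle) k.factorial_pos
  have hsum : (r+1)^(n-1) ≤ n * ((n-1).choose k * r^k) := by
    have hexp : (r+1)^(n-1) = ∑ j ∈ Finset.range n, (n-1).choose j * r^j := by
      rw [add_pow]
      have hn1 : n - 1 + 1 = n := by omega
      rw [hn1]
      refine Finset.sum_congr rfl fun j _ => ?_
      rw [one_pow, mul_one, Nat.cast_id, Nat.mul_comm]
    rw [hexp]
    calc ∑ j ∈ Finset.range n, (n-1).choose j * r^j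
        ≤ (Finset.range n).card • ((n-1).choose k * r^k) :=
          Finset.sum_le_card_nsmul _ _ _ hmax
      _ = n * ((n-1).choose k * r^k) := by
          rw [Finset.card_range, smul_eq_mul]
  calc r * (r+1)^(n-1) ≤ r * (n * ((n-1).choose k * r^k)) :=
        Nat.mul_le_mul_left _ hsum
    _ = r^(k+1) * (n * (n-1).choose k) := by ring
    _ ≤ L := hfinal
end

section
/- Let (u_k) be an arithmetic progression with positive first term u_0 and positive common difference r, gcd(u_0, r) = 1. Then for every positive integer n, lcm{u_0, ..., u_n} ≥ (n/(n+1))·r·((r+1)^{n−1} + (r−1)^{n−1}). -/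
open Finset

lemma partial_frac (r : ℝ) (hr : 0 < r) :
    ∀ (m : ℕ) (a : ℝ), 0 < a →
      (∑ i ∈ Finset.range (m+1), (-1:ℝ)^i * (Nat.choose m i) / (a + i * r))
        = (Nat.factorial m) * r^m / ∏ i ∈ Finset.range (m+1), (a + i * r) := by
  intro m
  induction m with
  | zero => intro a ha; simp
  | succ m ih =>
    intro a ha
    have har : 0 < a + r := by linarith
    have hpos : ∀ i : ℕ, (0:ℝ) < a + i * r := by
      intro i; have : (0:ℝ) ≤ i * r := by positivity
      linarith
    have hP0 : (0:ℝ) < ∏ i ∈ Finset.range (m+1), (a + i * r) :=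
      Finset.prod_pos fun i _ => hpos i
    have hP1 : (0:ℝ) < ∏ i ∈ Finset.range (m+1), (a + r + i * r) := by
      apply Finset.prod_pos; intro i _
      have : (0:ℝ) ≤ i * r := by positivity
      linarith
    -- step 1: LHS = g m a - g m (a+r)
    have key : (∑ i ∈ Finset.range (m+2), (-1:ℝ)^i * (Nat.choose (m+1) i) / (a + i * r))
        = (∑ i ∈ Finset.range (m+1), (-1:ℝ)^i * (Nat.choose m i) / (a + i * r))
          - (∑ i ∈ Finset.range (m+1), (-1:ℝ)^i * (Nat.choose m i) / (a + r + i * r)) := by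
      rw [Finset.sum_range_succ' (fun i => (-1:ℝ)^i * (Nat.choose (m+1) i) / (a + i * r)) (m+1)]
      rw [Finset.sum_range_succ' (fun i => (-1:ℝ)^i * (Nat.choose m i) / (a + i * r)) m]
      push_cast
      have h1 : ∀ i ∈ Finset.range (m+1),
          (-1:ℝ)^(i+1) * (Nat.choose (m+1) (i+1)) / (a + (i+1) * r)
          = (-1)^(i+1) * (Nat.choose m i) / (a + (i+1) * r)
            + (-1)^(i+1) * (Nat.choose m (i+1)) / (a + (i+1) * r) := by
        intro i _
        rw [Nat.choose_succ_succ]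
        push_cast
        ring
      rw [Finset.sum_congr rfl h1, Finset.sum_add_distrib]
      have h2 : (∑ i ∈ Finset.range (m+1), (-1:ℝ)^(i+1) * (Nat.choose m i) / (a + (i+1) * r))
          = - ∑ i ∈ Finset.range (m+1), (-1:ℝ)^i * (Nat.choose m i) / (a + r + i * r) := by
        rw [← Finset.sum_neg_distrib]
        apply Finset.sum_congr rfl
        intro i _
        push_cast
        ring_nf
      have h3 : (∑ i ∈ Finset.range (m+1), (-1:ℝ)^(i+1) * (Nat.choose m (i+1)) / (a + (i+1) * r))
          = ∑ i ∈ Finset.range m, (-1:ℝ)^(i+1) * (Nat.choose m (i+1)) / (a + (i+1) * r) := by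
        rw [Finset.sum_range_succ]
        simp
      rw [h2, h3]
      simp
      ring
    rw [key, ih a ha, ih (a+r) har]
    -- now show m! r^m / P0 - m! r^m / P1' = (m+1)! r^(m+1) / Q
    have e1 : ∀ i : ℕ, a + r + i * r = a + (i+1) * r := by intro i; ring
    have hQ0 : (∏ i ∈ Finset.range (m+2), (a + i * r))
        = (∏ i ∈ Finset.range (m+1), (a + i * r)) * (a + (m+1) * r) := by
      rw [Finset.prod_range_succ (fun i : ℕ => a + (i:ℝ) * r) (m+1)]
      push_cast
      ring
    have hQ1 : (∏ i ∈ Finset.range (m+2), (a + i * r))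
        = (∏ i ∈ Finset.range (m+1), (a + r + i * r)) * a := by
      rw [Finset.prod_range_succ' (fun i => a + i * r) (m+1)]
      simp only [e1]
      push_cast
      simp
    have hprod1 : (∏ i ∈ Finset.range (m+1), (a + r + i * r))
        = (∏ i ∈ Finset.range (m+2), (a + i * r)) / a := by
      rw [hQ1]; field_simp
    rw [hprod1, hQ0]
    have hfac : ((Nat.factorial (m+1) : ℝ)) = (m+1) * Nat.factorial m := by
      push_cast [Nat.factorial_succ]; ring
    rw [hfac]
    field_simp
    ring

lemma dvd_key (u₀ r : ℕ) (hu₀ : 0 < u₀) (hr : 0 < r) (L : ℕ) (m k : ℕ)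
    (hdvd : ∀ i, i ≤ m → (u₀ + (k+i)*r) ∣ L) :
    (∏ i ∈ Finset.range (m+1), (u₀ + (k+i)*r)) ∣ Nat.factorial m * r^m * L := by
  set a : ℝ := (u₀ : ℝ) + k * r with ha_def
  have ha : 0 < a := by
    have : (0:ℝ) < u₀ := by exact_mod_cast hu₀
    have : (0:ℝ) ≤ (k:ℝ) * r := by positivity
    simp only [ha_def]; linarith
  have hr' : (0:ℝ) < r := by exact_mod_cast hr
  have hcast : ∀ i : ℕ, ((u₀ + (k+i)*r : ℕ) : ℝ) = a + i * r := by
    intro i; push_cast; simp only [ha_def]; ring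
  have hpos : ∀ i : ℕ, (0:ℝ) < a + i * r := by
    intro i; have : (0:ℝ) ≤ (i:ℝ) * r := by positivity
    linarith
  set P : ℝ := ∏ i ∈ Finset.range (m+1), (a + i * r) with hP_def
  have hPpos : 0 < P := Finset.prod_pos fun i _ => hpos i
  set z : ℤ := ∑ i ∈ Finset.range (m+1),
    (-1)^i * (Nat.choose m i) * ((L / (u₀+(k+i)*r) : ℕ) : ℤ) with hz_def
  have hz : (z : ℝ) = (L : ℝ) * ((Nat.factorial m) * r^m / P) := by
    rw [← partial_frac r hr' m a ha, Finset.mul_sum, hz_def]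
    simp only [Int.cast_sum, Int.cast_mul, Int.cast_pow, Int.cast_neg, Int.cast_one,
      Int.cast_natCast]
    apply Finset.sum_congr rfl
    intro i hi
    have h1 : ((L / (u₀+(k+i)*r) : ℕ) : ℝ) = (L : ℝ) / ((u₀+(k+i)*r : ℕ) : ℝ) :=
      Nat.cast_div (hdvd i (Nat.lt_succ_iff.mp (Finset.mem_range.mp hi)))
        (by positivity)
    rw [h1, hcast i]
    field_simp
  have claim : (z : ℝ) * ((∏ i ∈ Finset.range (m+1), (u₀ + (k+i)*r) : ℕ) : ℝ)
      = ((Nat.factorial m * r^m * L : ℕ) : ℝ) := by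
    have hPc : ((∏ i ∈ Finset.range (m+1), (u₀ + (k+i)*r) : ℕ) : ℝ) = P := by
      rw [Nat.cast_prod, hP_def]
      exact Finset.prod_congr rfl fun i _ => hcast i
    rw [hPc, hz, mul_assoc, div_mul_cancel₀ _ (ne_of_gt hPpos)]
    push_cast; ring
  have claimZ : ((∏ i ∈ Finset.range (m+1), (u₀ + (k+i)*r) : ℕ) : ℤ) * z
      = ((Nat.factorial m * r^m * L : ℕ) : ℤ) := by
    have := claim
    rw [mul_comm] at this
    exact_mod_cast this
  have : ((∏ i ∈ Finset.range (m+1), (u₀ + (k+i)*r) : ℕ) : ℤ)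
      ∣ ((Nat.factorial m * r^m * L : ℕ) : ℤ) := ⟨z, claimZ.symm⟩
  exact_mod_cast this

lemma asc_prod_s8 (k m : ℕ) : ∏ i ∈ Finset.range m, (k+1+i) = (k+1).ascFactorial m := by
  induction m with
  | zero => simp
  | succ m ih => rw [Finset.prod_range_succ, ih, Nat.ascFactorial_succ]; ring

lemma L_lower (u₀ r : ℕ) (hu₀ : 0 < u₀) (hr : 0 < r) (hcop : Nat.Coprime u₀ r)
    (n : ℕ) (L : ℕ) (hL : ∀ j, j ≤ n → (u₀ + j*r) ∣ L) (hLpos : 0 < L)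
    (k : ℕ) (hk1 : 1 ≤ k) (hkn : k ≤ n) :
    k * n.choose k * r^(n-k) * r ≤ L := by
  set m := n - k with hm
  have hkm : k + m = n := by omega
  have hPdvd : (∏ i ∈ Finset.range (m+1), (u₀ + (k+i)*r)) ∣ Nat.factorial m * r^m * L := by
    apply dvd_key u₀ r hu₀ hr L m k
    intro i hi
    exact hL (k+i) (by omega)
  have hcP : Nat.Coprime (∏ i ∈ Finset.range (m+1), (u₀ + (k+i)*r)) (r^m) := by
    apply Nat.Coprime.pow_right
    apply Nat.Coprime.prod_left
    intro i _
    exact (Nat.coprime_add_mul_right_left u₀ r (k+i)).mpr hcop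
  have hPdvd2 : (∏ i ∈ Finset.range (m+1), (u₀ + (k+i)*r)) ∣ Nat.factorial m * L := by
    have h : Nat.factorial m * r^m * L = r^m * (Nat.factorial m * L) := by ring
    rw [h] at hPdvd
    exact (Nat.Coprime.dvd_of_dvd_mul_left hcP hPdvd)
  have hPle : (∏ i ∈ Finset.range (m+1), (u₀ + (k+i)*r)) ≤ Nat.factorial m * L :=
    Nat.le_of_dvd (by positivity) hPdvd2
  -- lower bound on the product
  have hProd_lb : Nat.factorial m * (k * n.choose k * r^m * r)
      ≤ ∏ i ∈ Finset.range (m+1), (u₀ + (k+i)*r) := by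
    rw [Finset.prod_range_succ' (fun i => u₀ + (k+i)*r) m]
    have h1 : ∏ i ∈ Finset.range m, ((k+1+i) * r) ≤ ∏ i ∈ Finset.range m, (u₀ + (k+(i+1))*r) := by
      apply Finset.prod_le_prod
      · intro i _; positivity
      · intro i _
        have : (k+1+i) * r ≤ (k+(i+1)) * r := by
          apply Nat.mul_le_mul_right; omega
        omega
    have h2 : ∏ i ∈ Finset.range m, ((k+1+i) * r)
        = (Nat.factorial m * n.choose m) * r^m := by
      rw [Finset.prod_mul_distrib, Finset.prod_const, asc_prod_s8,
        Nat.ascFactorial_eq_factorial_mul_choose, hkm, Finset.card_range]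
    have h3 : k * r ≤ u₀ + (k+0)*r := by
      simp only [Nat.add_zero]
      omega
    calc Nat.factorial m * (k * n.choose k * r^m * r)
        = ((Nat.factorial m * n.choose m) * r^m) * (k * r) := by
          have hsym : n.choose m = n.choose k :=
            Nat.choose_symm_of_eq_add (by omega)
          rw [hsym]; ring
        _ ≤ (∏ i ∈ Finset.range m, (u₀ + (k+(i+1))*r)) * (u₀ + (k+0)*r) := by
          apply Nat.mul_le_mul (h2 ▸ h1) h3
  have : Nat.factorial m * (k * n.choose k * r^m * r) ≤ Nat.factorial m * L :=
    le_trans hProd_lb hPle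
  exact Nat.le_of_mul_le_mul_left this (Nat.factorial_pos m)

theorem stmt_8 (u₀ r : ℕ) (hu₀ : 0 < u₀) (hr : 0 < r)
    (hcop : Nat.Coprime u₀ r) (u : ℕ → ℕ) (hu : ∀ k, u k = u₀ + k * r)
    (n : ℕ) (hn : 1 ≤ n) :
    (((Finset.range (n + 1)).lcm u : ℕ) : ℝ) ≥
      ((n : ℝ) / (n + 1)) * r * (((r : ℝ) + 1) ^ (n - 1) + ((r : ℝ) - 1) ^ (n - 1)) := by
  set L : ℕ := (Finset.range (n + 1)).lcm u with hL_def
  set M : ℕ := n - 1 with hM_def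
  have hM : M + 1 = n := by omega
  have hLdvd : ∀ j, j ≤ n → (u₀ + j * r) ∣ L := by
    intro j hj
    rw [← hu j]
    exact Finset.dvd_lcm (Finset.mem_range.mpr (by omega))
  have hLpos : 0 < L := by
    rcases Nat.eq_zero_or_pos L with h | h
    · exfalso
      rw [hL_def, Finset.lcm_eq_zero_iff] at h
      obtain ⟨x, _, hx⟩ := h
      rw [hu x] at hx
      have : 0 < u₀ + x * r := by positivity
      omega
    · exact h
  -- key natural-number bound
  have hT : ∀ j, j ≤ M → n * (M.choose j * r^j) * r ≤ L := by
    intro j hj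
    set k := M - j + 1 with hk_def
    have hk1 : 1 ≤ k := by omega
    have hkn : k ≤ n := by omega
    have hbase := L_lower u₀ r hu₀ hr hcop n L hLdvd hLpos k hk1 hkn
    have hnk : n - k = j := by omega
    have hid : n * M.choose j = k * n.choose k := by
      have h1 : M.choose (M - j) = M.choose j := Nat.choose_symm hj
      have h2 := Nat.add_one_mul_choose_eq M (M - j)
      -- (M+1) * M.choose (M-j) = (M+1).choose (M-j+1) * (M-j+1)
      rw [h1, hM] at h2
      have hks : M - j + 1 = k := by omega
      rw [hks] at h2
      rw [h2, Nat.mul_comm]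
    calc n * (M.choose j * r^j) * r = (n * M.choose j) * r^j * r := by ring
      _ = k * n.choose k * r^(n-k) * r := by rw [hid, hnk]
      _ ≤ L := hbase
  -- move to reals
  rw [ge_iff_le]
  have hrR : (0:ℝ) < r := by exact_mod_cast hr
  have hnR : (0:ℝ) < n := by exact_mod_cast hn
  have hLR : (0:ℝ) ≤ L := Nat.cast_nonneg L
  set S : ℝ := ∑ j ∈ Finset.range (M+1),
    (1 + (-1:ℝ)^(M-j)) * ((M.choose j : ℝ) * (r:ℝ)^j) with hS_def
  have hA : ((r:ℝ) + 1) ^ M + ((r:ℝ) - 1) ^ M = S := by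
    have e1 : ((r:ℝ) + 1) ^ M = ∑ j ∈ Finset.range (M+1),
        (r:ℝ)^j * 1^(M-j) * (M.choose j : ℝ) := add_pow (r:ℝ) 1 M
    have e2 : ((r:ℝ) - 1) ^ M = ∑ j ∈ Finset.range (M+1),
        (r:ℝ)^j * (-1:ℝ)^(M-j) * (M.choose j : ℝ) := by
      have : ((r:ℝ) - 1) = (r:ℝ) + (-1) := by ring
      rw [this, add_pow]
    rw [e1, e2, hS_def, ← Finset.sum_add_distrib]
    apply Finset.sum_congr rfl
    intro j _
    ring
  have hB : (n:ℝ) * r * S ≤ ((n:ℝ) + 1) * L := by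
    have step1 : (n:ℝ) * r * S = ∑ j ∈ Finset.range (M+1),
        (1 + (-1:ℝ)^(M-j)) * ((n:ℝ) * ((M.choose j : ℝ) * (r:ℝ)^j) * r) := by
      rw [hS_def, Finset.mul_sum]
      apply Finset.sum_congr rfl
      intro j _
      ring
    have step2 : ∑ j ∈ Finset.range (M+1),
        (1 + (-1:ℝ)^(M-j)) * ((n:ℝ) * ((M.choose j : ℝ) * (r:ℝ)^j) * r)
        ≤ ∑ j ∈ Finset.range (M+1), (1 + (-1:ℝ)^(M-j)) * (L:ℝ) := by
      apply Finset.sum_le_sum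
      intro j hj
      have hc : (0:ℝ) ≤ 1 + (-1:ℝ)^(M-j) := by
        rcases Nat.even_or_odd (M-j) with h | h
        · rw [h.neg_one_pow]; norm_num
        · rw [h.neg_one_pow]; norm_num
      apply mul_le_mul_of_nonneg_left _ hc
      have := hT j (Nat.lt_succ_iff.mp (Finset.mem_range.mp hj))
      calc (n:ℝ) * ((M.choose j : ℝ) * (r:ℝ)^j) * r
          = ((n * (M.choose j * r^j) * r : ℕ) : ℝ) := by push_cast; ring
        _ ≤ (L:ℝ) := by exact_mod_cast this
    have step3 : ∑ j ∈ Finset.range (M+1), (1 + (-1:ℝ)^(M-j)) * (L:ℝ)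
        ≤ ((n:ℝ) + 1) * L := by
      rw [← Finset.sum_mul]
      apply mul_le_mul_of_nonneg_right _ hLR
      have e3 : ∑ j ∈ Finset.range (M+1), (1 + (-1:ℝ)^(M-j))
          = (M+1 : ℝ) + ∑ j ∈ Finset.range (M+1), (-1:ℝ)^(M-j) := by
        rw [Finset.sum_add_distrib, Finset.sum_const, Finset.card_range]
        push_cast; ring
      have e4 : ∑ j ∈ Finset.range (M+1), (-1:ℝ)^(M-j)
          = ∑ j ∈ Finset.range (M+1), (-1:ℝ)^j := by
        rw [← Finset.sum_range_reflect (fun j => (-1:ℝ)^j) (M+1)]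
        apply Finset.sum_congr rfl
        intro j hj
        congr 1
      have e5 : ∑ j ∈ Finset.range (M+1), (-1:ℝ)^j ≤ 1 := by
        rw [neg_one_geom_sum]
        split_ifs <;> norm_num
      rw [e3, e4]
      have : (M:ℝ) + 1 = (n:ℝ) := by exact_mod_cast congrArg (Nat.cast : ℕ → ℝ) hM
      rw [this]
      linarith
    linarith [step1 ▸ le_trans step2 step3]
  rw [hA]
  rw [div_mul_eq_mul_div, div_mul_eq_mul_div, div_le_iff₀ (by linarith : (0:ℝ) < (n:ℝ)+1)]
  calc (n:ℝ) * r * S ≤ ((n:ℝ)+1) * L := hB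
    _ = (L:ℝ) * ((n:ℝ)+1) := by ring
end

section
/- Let (u_k) be an arithmetic progression with positive first term u_0 and positive common difference r, gcd(u_0, r) = 1. Then for every integer n with n ≥ u_0 − (3r+1)/2 and n ≥ 0, lcm{u_0, ..., u_n} ≥ (1/π)·√r·(r+1)^{n − 1 + u_0/r}. -/
open Real


lemma aux_log_lin {x z : ℝ} (hx : 0 < x) (hxz : x ≤ z) :
    x * Real.log (1 + z) ≤ z * Real.log (1 + x) := by
  have hz : 0 < z := lt_of_lt_of_le hx hxz
  have hcc := strictConcaveOn_log_Ioi.concaveOn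
  have h1 : (1 : ℝ) ∈ Set.Ioi (0:ℝ) := by norm_num
  have h2 : (1 + z : ℝ) ∈ Set.Ioi (0:ℝ) := by simp; linarith
  have hw1 : (0:ℝ) ≤ 1 - x / z := by
    rw [sub_nonneg]; exact div_le_one_of_le₀ hxz hz.le
  have hw2 : (0:ℝ) ≤ x / z := by positivity
  have hsum : (1 - x / z) + x / z = 1 := by ring
  have key := hcc.2 h1 h2 hw1 hw2 hsum
  have heq : (1 - x / z) • (1:ℝ) + (x / z) • (1 + z) = 1 + x := by
    rw [smul_eq_mul, smul_eq_mul, mul_one, mul_add, mul_one, div_mul_cancel₀ x hz.ne']; ring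
  rw [heq] at key
  simp only [smul_eq_mul, Real.log_one, mul_zero, zero_add] at key
  have h3 : x / z * Real.log (1 + z) ≤ Real.log (1 + x) := key
  calc x * Real.log (1 + z) = z * (x / z * Real.log (1 + z)) := by field_simp
    _ ≤ z * Real.log (1 + x) := by
      exact mul_le_mul_of_nonneg_left h3 hz.le

-- mul-log monotone: y log(1+w/y) <= Y log(1+w/Y) for 0<w, 0<y<=Y
lemma aux_mul_log_mono {w y Y : ℝ} (hw : 0 < w) (hy : 0 < y) (hyY : y ≤ Y) :
    y * Real.log (1 + w / y) ≤ Y * Real.log (1 + w / Y) := by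
  have hY : 0 < Y := lt_of_lt_of_le hy hyY
  have hx : 0 < w / Y := by positivity
  have hxz : w / Y ≤ w / y := by
    exact div_le_div_of_nonneg_left hw.le hy hyY
  have := aux_log_lin hx hxz
  -- (w/Y) log(1+w/y) ≤ (w/y) log(1+w/Y)
  -- multiply by yY/w > 0: y log(1+w/y) ≤ Y log(1+w/Y)
  have hcalc : y * Real.log (1 + w / y) = (y * Y / w) * ((w / Y) * Real.log (1 + w / y)) := by
    field_simp
  have hcalc2 : Y * Real.log (1 + w / Y) = (y * Y / w) * ((w / y) * Real.log (1 + w / Y)) := by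
    field_simp
  rw [hcalc, hcalc2]
  apply mul_le_mul_of_nonneg_left this (by positivity)


lemma aux_sum_ge {a : ℝ} (ha : 0 < a) (m : ℕ) :
    ((m:ℝ)+1+a) * Real.log ((m:ℝ)+1+a) - ((m:ℝ)+1) * Real.log ((m:ℝ)+1)
      - (1+a) * Real.log (1+a)
    ≤ ∑ i ∈ Finset.range m, (Real.log (1+(i:ℝ)+a) - Real.log (1+(i:ℝ))) := by
  set f : ℝ → ℝ := fun x => Real.log (x + a) - Real.log x with hf
  have hanti : AntitoneOn f (Set.Icc (1:ℝ) (1 + m)) := by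
    intro x hx y hy hxy
    have hx1 : (1:ℝ) ≤ x := hx.1
    have hy1 : (1:ℝ) ≤ y := hy.1
    have hxpos : (0:ℝ) < x := by linarith
    have hypos : (0:ℝ) < y := by linarith
    simp only [hf]
    have h1 : Real.log ((y + a) * x) ≤ Real.log ((x + a) * y) := by
      apply Real.log_le_log (by positivity)
      nlinarith
    rw [Real.log_mul (by positivity) (by positivity), Real.log_mul (by positivity) (by positivity)] at h1
    linarith
  have hint := hanti.integral_le_sum
  have hFTC : (∫ x in (1:ℝ)..(1 + (m:ℝ)), f x)
      = (((m:ℝ)+1+a) * Real.log ((m:ℝ)+1+a) - ((m:ℝ)+1) * Real.log ((m:ℝ)+1))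
        - ((1+a) * Real.log (1+a) - 1 * Real.log 1) := by
    have hderiv : ∀ x ∈ Set.uIcc (1:ℝ) (1+(m:ℝ)),
        HasDerivAt (fun x : ℝ => (x+a) * Real.log (x+a) - x * Real.log x) (f x) x := by
      intro x hx
      rw [Set.uIcc_of_le (by linarith [Nat.cast_nonneg (α := ℝ) m] : (1:ℝ) ≤ 1 + m)] at hx
      have hx1 : (1:ℝ) ≤ x := hx.1
      have hxne : x ≠ 0 := by linarith
      have hxane : x + a ≠ 0 := by linarith
      have h1 : HasDerivAt (fun x : ℝ => x + a) 1 x := (hasDerivAt_id x).add_const a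
      have h2 : HasDerivAt (fun x : ℝ => (x+a) * Real.log (x+a)) ((Real.log (x+a) + 1) * 1) x :=
        HasDerivAt.comp (h₂ := fun y : ℝ => y * Real.log y) x (Real.hasDerivAt_mul_log hxane) h1
      have h3 : HasDerivAt (fun x : ℝ => x * Real.log x) (Real.log x + 1) x :=
        Real.hasDerivAt_mul_log hxne
      have := h2.sub h3
      refine this.congr_deriv ?_
      show _ = Real.log (x + a) - Real.log x
      ring
    have hcont : IntervalIntegrable f MeasureTheory.volume 1 (1 + (m:ℝ)) := by
      apply ContinuousOn.intervalIntegrable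
      rw [Set.uIcc_of_le (by linarith [Nat.cast_nonneg (α := ℝ) m] : (1:ℝ) ≤ 1 + m)]
      apply ContinuousOn.sub
      · apply ContinuousOn.log
        · exact (continuousOn_id.add continuousOn_const)
        · intro x hx; intro h; nlinarith [hx.1]
      · apply ContinuousOn.log continuousOn_id
        intro x hx; have : (1:ℝ) ≤ x := hx.1; intro h; simp [id] at h; linarith
    rw [intervalIntegral.integral_eq_sub_of_hasDerivAt hderiv hcont]
    push_cast
    ring
  rw [hFTC] at hint
  simp only [Real.log_one, mul_zero, sub_zero, one_mul] at hint
  calc ((m:ℝ)+1+a) * Real.log ((m:ℝ)+1+a) - ((m:ℝ)+1) * Real.log ((m:ℝ)+1)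
        - (1+a) * Real.log (1+a)
      ≤ ∑ i ∈ Finset.range m, f (1 + (i:ℝ)) := hint
    _ = ∑ i ∈ Finset.range m, (Real.log (1+(i:ℝ)+a) - Real.log (1+(i:ℝ))) := by
        apply Finset.sum_congr rfl; intro i _; simp [hf]

lemma aux_explog : Real.exp ((4:ℝ)/3) ≤ 3.8 := by
  have h3 : Real.exp ((4:ℝ)/3) ^ (3:ℕ) = Real.exp 4 := by
    rw [← Real.exp_nat_mul]; norm_num
  have h4 : Real.exp 4 = (Real.exp 1) ^ (4:ℕ) := by
    rw [← Real.exp_nat_mul]; norm_num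
  have hexp4 : Real.exp 4 < 54.87 := by
    rw [h4]
    calc (Real.exp 1)^(4:ℕ) < 2.7182818286 ^ (4:ℕ) := by
          apply pow_lt_pow_left₀ Real.exp_one_lt_d9 (Real.exp_pos 1).le; norm_num
      _ < 54.87 := by norm_num
  by_contra hcon
  push_neg at hcon
  have : (3.8:ℝ)^(3:ℕ) < (Real.exp ((4:ℝ)/3))^(3:ℕ) :=
    pow_lt_pow_left₀ hcon (by norm_num) (by norm_num)
  rw [h3] at this
  norm_num at this
  linarith

lemma aux_poly {r : ℝ} (hr : 1 ≤ r) :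
    (2:ℝ)/3 ≤ 2 * Real.log (r+1) - (3/2) * Real.log (1 + 3*r/7) - (1/2) * Real.log r := by
  have hr0 : (0:ℝ) < r := by linarith
  have hq : (0:ℝ) < 1 + 3*r/7 := by linarith
  have hpoly : (3.8:ℝ) * ((1 + 3*r/7)^3 * r) ≤ (r+1)^4 := by
    nlinarith [sq_nonneg r, sq_nonneg (r-1), sq_nonneg (r*r - r)]
  have hlog : Real.log ((3.8:ℝ) * ((1 + 3*r/7)^3 * r)) ≤ Real.log ((r+1)^4) :=
    Real.log_le_log (by positivity) hpoly
  rw [Real.log_mul (by norm_num) (by positivity), Real.log_mul (by positivity) hr0.ne',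
    Real.log_pow, Real.log_pow] at hlog
  have h38 : (4:ℝ)/3 ≤ Real.log 3.8 := by
    rw [Real.le_log_iff_exp_le (by norm_num)]
    exact aux_explog
  push_cast at hlog
  linarith

lemma core_real (r M a : ℝ) (hr : 1 ≤ r) (hM : 2 ≤ M)
    (h1 : 2*(M-1) + 3*r ≤ 2*(r*a)) (h2 : 2*(r*a) ≤ 2*(M-1) + 3*r + 1) :
    (1/2) * Real.log r - Real.log Real.pi + (M - 2 + a) * Real.log (r+1)
      ≤ Real.log (r*a) + (M-1) * Real.log r
        + ((M + a) * Real.log (M + a) - M * Real.log M - (1 + a) * Real.log (1 + a)) := by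
  have hr0 : (0:ℝ) < r := by linarith
  have ha : (3:ℝ)/2 ≤ a := by nlinarith
  have ha0 : (0:ℝ) < a := by linarith
  obtain ⟨y, hy_def⟩ : ∃ y, y = M / r := ⟨_, rfl⟩
  have hy0 : (0:ℝ) < y := by rw [hy_def]; positivity
  have hry : r * y = M := by rw [hy_def]; field_simp
  obtain ⟨c, hc_def⟩ : ∃ c, c = r*a - (M - 1) := ⟨_, rfl⟩
  have hc_lb : 3*r/2 ≤ c := by rw [hc_def]; linarith
  have hc_ub : c ≤ (3*r+1)/2 := by rw [hc_def]; linarith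
  have hc1 : (1:ℝ) < c := by linarith
  have hay : r * (a - y) = c - 1 := by rw [hc_def]; rw [mul_sub, hry]; ring
  have hay0 : 0 < a - y := by nlinarith
  have hMa : (0:ℝ) < M + a := by linarith
  have hMy : (0:ℝ) < M + y := by linarith
  have hM0 : (0:ℝ) < M := by linarith
  have hq0 : (0:ℝ) < 1 + (c-1)/(M+a) := by
    have := div_pos (show (0:ℝ) < c - 1 by linarith) hMa
    linarith
  have hkey_c : a * (r+1) = (M + a) * (1 + (c-1)/(M+a)) := by
    have h' : (M+a) * (1 + (c-1)/(M+a)) = M + a + (c - 1) := by field_simp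
    rw [h', hc_def]; ring
  have hC : Real.log (M+a) - Real.log a = Real.log (r+1) - Real.log (1 + (c-1)/(M+a)) := by
    have h := congrArg Real.log hkey_c
    rw [Real.log_mul ha0.ne' (by linarith), Real.log_mul hMa.ne' hq0.ne'] at h
    linarith
  have hC2 : (a - y) * (Real.log (M+a) - Real.log a)
      = (a - y) * Real.log (r+1) - (a - y) * Real.log (1 + (c-1)/(M+a)) := by
    rw [hC]; ring
  have hB : (M + y) * Real.log (M + y) - M * Real.log M - y * Real.log y
      = (M + y) * Real.log (r+1) - M * Real.log r := by
    have h1' : M + y = y * (r+1) := by linarith [hry]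
    have h2' : Real.log (M + y) = Real.log y + Real.log (r+1) := by
      rw [h1', Real.log_mul hy0.ne' (by linarith)]
    have h3' : Real.log y = Real.log M - Real.log r := by
      rw [hy_def, Real.log_div hM0.ne' hr0.ne']
    rw [h2', h3']; ring
  have hA : (M + y) * Real.log (M + y) - y * Real.log y
        + (a - y) * (Real.log (M + a) - Real.log a)
      ≤ (M + a) * Real.log (M + a) - a * Real.log a := by
    have hmono := aux_mul_log_mono hay0 hy0 (by linarith : y ≤ M + y)
    have e1 : 1 + (a - y)/y = a / y := by field_simp; try ring
    have e2 : 1 + (a - y)/(M + y) = (M + a)/(M + y) := by field_simp; try ring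
    rw [e1, e2] at hmono
    rw [Real.log_div ha0.ne' hy0.ne', Real.log_div hMa.ne' hMy.ne'] at hmono
    nlinarith [hmono]
  have hE1 : (1 + a) * (Real.log (1 + a) - Real.log a) ≤ 5/3 := by
    have e0 : (1 + a)/a = 1 + 1/a := by field_simp; try ring
    have e1 : Real.log (1 + a) - Real.log a = Real.log (1 + 1/a) := by
      rw [← Real.log_div (by linarith) ha0.ne', e0]
    have hle : Real.log (1 + 1/a) ≤ 1/a := by
      have := Real.log_le_sub_one_of_pos (show (0:ℝ) < 1 + 1/a by positivity)
      linarith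
    have h1a : 1/a ≤ 2/3 := by
      rw [div_le_div_iff₀ ha0 (by norm_num)]; linarith
    rw [e1]
    calc (1+a) * Real.log (1+1/a) ≤ (1+a) * (1/a) := by
          apply mul_le_mul_of_nonneg_left hle (by linarith)
      _ = 1/a + 1 := by field_simp; try ring
      _ ≤ 5/3 := by linarith
  have hE2 : (a - y) * Real.log (1 + (c-1)/(M+a)) ≤ (3/2) * Real.log (1 + 3*r/7) := by
    have hd : a - y ≤ 3/2 := by
      have h32 : r * (a - y) ≤ r * (3/2) := by rw [hay]; linarith
      exact le_of_mul_le_mul_left (by linarith) hr0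
    have hq_le : (c-1)/(M+a) ≤ 3*r/7 := by
      rw [div_le_iff₀ hMa]
      have h75 : (3*r/7) * (7/2) ≤ (3*r/7) * (M+a) := by
        apply mul_le_mul_of_nonneg_left (by linarith) (by positivity)
      linarith
    have hq3 : (0:ℝ) < 1 + 3*r/7 := by linarith
    have hlog1 : Real.log (1 + (c-1)/(M+a)) ≤ Real.log (1 + 3*r/7) :=
      Real.log_le_log hq0 (by linarith)
    have hlog0 : 0 ≤ Real.log (1 + (c-1)/(M+a)) := by
      apply Real.log_nonneg
      have := div_pos (show (0:ℝ) < c - 1 by linarith) hMa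
      linarith
    calc (a - y) * Real.log (1 + (c-1)/(M+a)) ≤ (3/2) * Real.log (1 + (c-1)/(M+a)) :=
          mul_le_mul_of_nonneg_right hd hlog0
      _ ≤ (3/2) * Real.log (1 + 3*r/7) := by linarith
  have hpi : (1:ℝ) ≤ Real.log Real.pi := by
    rw [Real.le_log_iff_exp_le Real.pi_pos]
    have hlt : Real.exp 1 < Real.pi :=
      calc Real.exp 1 < 2.7182818286 := Real.exp_one_lt_d9
        _ ≤ 3.141592 := by norm_num
        _ < Real.pi := Real.pi_gt_d6
    exact hlt.le
  have hpoly := aux_poly hr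
  have hloguu : Real.log (r*a) = Real.log r + Real.log a :=
    Real.log_mul hr0.ne' ha0.ne'
  linarith [hA, hB, hC2, hE1, hE2, hpi, hpoly, hloguu]

lemma baseB (u₀ r m : ℕ) (hr : 0 < r) (hm : 1 ≤ m)
    (h1 : 2*m + 3*r ≤ 2*u₀) (h2 : 2*u₀ ≤ 2*m + 3*r + 1) :
    (m.factorial : ℝ) * (Real.sqrt r / Real.pi * ((r:ℝ)+1) ^ ((m:ℝ) - 1 + (u₀:ℝ)/(r:ℝ)))
      ≤ ∏ j ∈ Finset.range (m+1), ((u₀:ℝ) + (j:ℝ)*(r:ℝ)) := by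
  have hR1 : (1:ℝ) ≤ (r:ℝ) := by exact_mod_cast hr
  have hR0 : (0:ℝ) < (r:ℝ) := by linarith
  have hU0 : (0:ℝ) < (u₀:ℝ) := by
    have : 0 < u₀ := by omega
    exact_mod_cast this
  set R : ℝ := (r:ℝ)
  set U : ℝ := (u₀:ℝ)
  set a : ℝ := U / R with ha_def
  have ha0 : 0 < a := div_pos hU0 hR0
  have hRa : R * a = U := by rw [ha_def]; field_simp
  set M : ℝ := (m:ℝ) + 1 with hM_def
  have hM2 : (2:ℝ) ≤ M := by
    rw [hM_def]
    have : (1:ℝ) ≤ (m:ℝ) := by exact_mod_cast hm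
    linarith
  -- positivity of both sides
  have hfac : (0:ℝ) < (m.factorial : ℝ) := by exact_mod_cast m.factorial_pos
  have hrpow : (0:ℝ) < ((R:ℝ)+1) ^ ((m:ℝ) - 1 + U/R) := Real.rpow_pos_of_pos (by linarith) _
  have hsq : (0:ℝ) < Real.sqrt R := Real.sqrt_pos.2 hR0
  have hLpos : (0:ℝ) < (m.factorial : ℝ) * (Real.sqrt R / Real.pi * (R+1) ^ ((m:ℝ) - 1 + U/R)) := by
    have := Real.pi_pos; positivity
  have hterm : ∀ j : ℕ, (0:ℝ) < U + (j:ℝ)*R := by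
    intro j
    have : (0:ℝ) ≤ (j:ℝ)*R := by positivity
    linarith
  have hprodpos : (0:ℝ) < ∏ j ∈ Finset.range (m+1), (U + (j:ℝ)*R) :=
    Finset.prod_pos (fun j _ => hterm j)
  rw [← Real.log_le_log_iff hLpos hprodpos]
  -- log of RHS
  have hsplit : ∏ j ∈ Finset.range (m+1), (U + (j:ℝ)*R)
      = (∏ i ∈ Finset.range m, (U + ((i:ℝ)+1)*R)) * U := by
    rw [Finset.prod_range_succ']
    push_cast
    norm_num
  have hlogprod : Real.log (∏ j ∈ Finset.range (m+1), (U + (j:ℝ)*R))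
      = (∑ i ∈ Finset.range m, Real.log (U + ((i:ℝ)+1)*R)) + Real.log U := by
    rw [hsplit, Real.log_mul (Finset.prod_pos (fun i _ => by
      have : (0:ℝ) ≤ ((i:ℝ)+1)*R := by positivity
      linarith)).ne' hU0.ne']
    rw [Real.log_prod]
    intro i _
    have : (0:ℝ) ≤ ((i:ℝ)+1)*R := by positivity
    linarith
  -- each term
  have hterm_eq : ∀ i : ℕ, Real.log (U + ((i:ℝ)+1)*R)
      = Real.log R + Real.log (1+(i:ℝ)+a) := by
    intro i
    have he : U + ((i:ℝ)+1)*R = R * (1+(i:ℝ)+a) := by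
      rw [← hRa]; ring
    rw [he, Real.log_mul hR0.ne' (by positivity : (1+(i:ℝ)+a) ≠ 0)]
  -- log of LHS
  have hlogfac : Real.log (m.factorial : ℝ) = ∑ i ∈ Finset.range m, Real.log (1+(i:ℝ)) := by
    rw [← Finset.prod_range_add_one_eq_factorial]
    push_cast
    rw [Real.log_prod]
    · apply Finset.sum_congr rfl; intro i _; congr 1; ring
    · intro i _
      have : (0:ℝ) ≤ (i:ℝ) := by positivity
      intro h; nlinarith
  have hlogLHS : Real.log ((m.factorial : ℝ) * (Real.sqrt R / Real.pi * (R+1) ^ ((m:ℝ) - 1 + U/R)))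
      = Real.log (m.factorial : ℝ) + (Real.log R / 2 - Real.log Real.pi)
        + ((m:ℝ) - 1 + a) * Real.log (R+1) := by
    rw [Real.log_mul hfac.ne' (by positivity), Real.log_mul (by positivity) (by positivity),
      Real.log_div hsq.ne' Real.pi_ne_zero, Real.log_sqrt hR0.le,
      Real.log_rpow (by linarith : (0:ℝ) < R + 1)]
    ring
  rw [hlogprod, hlogLHS]
  have hAB : (∑ i ∈ Finset.range m, (Real.log (1+(i:ℝ)+a) - Real.log (1+(i:ℝ))))
      + ∑ i ∈ Finset.range m, Real.log (1+(i:ℝ))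
      = ∑ i ∈ Finset.range m, Real.log (1+(i:ℝ)+a) := by
    rw [← Finset.sum_add_distrib]
    apply Finset.sum_congr rfl; intro i _; ring
  have hsum_eq : ∑ i ∈ Finset.range m, Real.log (U + ((i:ℝ)+1)*R)
      = (m:ℝ) * Real.log R + ∑ i ∈ Finset.range m, Real.log (1+(i:ℝ)+a) := by
    rw [Finset.sum_congr rfl (fun i _ => hterm_eq i), Finset.sum_add_distrib,
      Finset.sum_const, Finset.card_range, nsmul_eq_mul]
  have hint := aux_sum_ge ha0 m
  have hcore := core_real R M a hR1 hM2 (by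
      rw [hRa, hM_def]
      push_cast
      have : (2*m + 3*r : ℝ) ≤ 2*u₀ := by exact_mod_cast h1
      push_cast at this
      linarith) (by
      rw [hRa, hM_def]
      push_cast
      have : (2*u₀:ℝ) ≤ 2*m + 3*r + 1 := by exact_mod_cast h2
      push_cast at this
      linarith)
  rw [hRa] at hcore
  rw [hsum_eq, hlogfac]
  rw [← hAB]
  have hMm : M = (m:ℝ) + 1 := hM_def
  have h2' : (M + a) * Real.log (M + a) - M * Real.log M - (1+a) * Real.log (1+a)
      ≤ ∑ i ∈ Finset.range m, (Real.log (1+(i:ℝ)+a) - Real.log (1+(i:ℝ))) := by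
    have := hint
    rw [← hMm] at this
    convert this using 3 <;> rw [hMm]
  linarith [hcore, h2']


lemma two_pow_aux {r : ℕ} (hr : 0 < r) : ((r:ℝ)+1) ^ ((1:ℝ)/(r:ℝ)) ≤ 2 := by
  have hR0 : (0:ℝ) < (r:ℝ) := by exact_mod_cast hr
  have hnat : r + 1 ≤ 2^r := Nat.lt_two_pow_self
  have hcast : ((r:ℝ)+1) ≤ (2:ℝ)^(r:ℕ) := by exact_mod_cast hnat
  have h1 : ((r:ℝ)+1) ^ ((1:ℝ)/(r:ℝ)) ≤ ((2:ℝ)^(r:ℕ)) ^ ((1:ℝ)/(r:ℝ)) :=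
    Real.rpow_le_rpow (by positivity) hcast (by positivity)
  have h2 : ((2:ℝ)^(r:ℕ)) ^ ((1:ℝ)/(r:ℝ)) = 2 := by
    rw [← Real.rpow_natCast 2 r, ← Real.rpow_mul (by norm_num)]
    rw [mul_one_div, div_self hR0.ne', Real.rpow_one]
  rw [h2] at h1
  exact h1

lemma baseA (u₀ r : ℕ) (hr : 0 < r) (hu : 0 < u₀) (h2 : 2*u₀ ≤ 3*r + 1) :
    Real.sqrt r / Real.pi * ((r:ℝ)+1) ^ ((0:ℝ) - 1 + (u₀:ℝ)/(r:ℝ)) ≤ (u₀:ℝ) := by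
  obtain ⟨R, hR_def⟩ : ∃ R : ℝ, R = (r:ℝ) := ⟨_, rfl⟩
  obtain ⟨x, hx_def⟩ : ∃ x : ℝ, x = (u₀:ℝ) := ⟨_, rfl⟩
  rw [← hR_def, ← hx_def]
  have hR0 : (0:ℝ) < R := by rw [hR_def]; exact_mod_cast hr
  have hR1 : (1:ℝ) ≤ R := by rw [hR_def]; exact_mod_cast hr
  have hRp1 : (0:ℝ) < R + 1 := by linarith
  obtain ⟨L, hL_def⟩ : ∃ L : ℝ, L = Real.log (R+1) := ⟨_, rfl⟩
  have hL0 : 0 ≤ L := by rw [hL_def]; exact Real.log_nonneg (by linarith)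
  have hx1 : (1:ℝ) ≤ x := by rw [hx_def]; exact_mod_cast hu
  obtain ⟨x₂, hx2_def⟩ : ∃ y : ℝ, y = (3*R+1)/2 := ⟨_, rfl⟩
  have hxx2 : x ≤ x₂ := by
    rw [hx2_def, hx_def, hR_def]
    have : (2*u₀:ℝ) ≤ 3*r+1 := by exact_mod_cast h2
    linarith
  have hx21 : (2:ℝ) ≤ x₂ := by rw [hx2_def]; linarith
  have h2r : (R+1) ^ ((1:ℝ)/R) ≤ 2 := by rw [hR_def]; exact two_pow_aux hr
  have hrpow_pos : ∀ q : ℝ, (0:ℝ) < (R+1) ^ q := fun q => Real.rpow_pos_of_pos hRp1 q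
  have hexp_form : ∀ z : ℝ, (R+1) ^ ((0:ℝ) - 1 + z/R) = Real.exp ((z/R - 1) * L) := by
    intro z
    rw [Real.rpow_def_of_pos hRp1, hL_def]
    congr 1
    ring
  have hsqrtR : Real.sqrt R ^ 2 = R := Real.sq_sqrt hR0.le
  have h2sq : 2 * Real.sqrt R ≤ R + 1 := by
    nlinarith [sq_nonneg (Real.sqrt R - 1), Real.sqrt_nonneg R]
  have hpi3 : (3:ℝ) ≤ Real.pi := by linarith [Real.pi_gt_three]
  -- endpoint 1
  have hend1 : Real.sqrt R / Real.pi * Real.exp (((1:ℝ)/R - 1) * L) ≤ 1 := by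
    have he : Real.exp (((1:ℝ)/R - 1) * L) = ((R+1) ^ ((1:ℝ)/R)) / (R+1) := by
      rw [Real.rpow_def_of_pos hRp1, ← Real.exp_log hRp1, ← Real.exp_sub]
      congr 1
      rw [Real.log_exp, hL_def]
      ring
    rw [he]
    calc Real.sqrt R / Real.pi * (((R+1) ^ ((1:ℝ)/R)) / (R+1))
        ≤ Real.sqrt R / Real.pi * (2 / (R+1)) := by
          gcongr
      _ = Real.sqrt R * 2 / (Real.pi * (R+1)) := by
          rw [div_mul_div_comm]
      _ ≤ 1 := by
          rw [div_le_one (by positivity)]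
          nlinarith [h2sq, hpi3, Real.sqrt_nonneg R]
  -- endpoint x₂
  have hend2 : Real.sqrt R / Real.pi * Real.exp ((x₂/R - 1) * L) ≤ x₂ := by
    have he : (x₂/R - 1) = (1:ℝ)/2 + (1/R)*(1/2) := by
      rw [hx2_def]; field_simp; ring
    have hee : Real.exp ((x₂/R - 1) * L) = (R+1) ^ ((1:ℝ)/2) * ((R+1) ^ ((1:ℝ)/R)) ^ ((1:ℝ)/2) := by
      rw [← Real.rpow_mul hRp1.le, ← Real.rpow_add hRp1, ← he]
      rw [Real.rpow_def_of_pos hRp1, hL_def, mul_comm]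
    rw [hee]
    have hsq2 : ((R+1):ℝ) ^ ((1:ℝ)/2) = Real.sqrt (R+1) := (Real.sqrt_eq_rpow (R+1)).symm
    have hsq2' : (2:ℝ) ^ ((1:ℝ)/2) = Real.sqrt 2 := (Real.sqrt_eq_rpow 2).symm
    have hmono : ((R+1) ^ ((1:ℝ)/R)) ^ ((1:ℝ)/2) ≤ Real.sqrt 2 := by
      rw [← hsq2']
      exact Real.rpow_le_rpow (by positivity) h2r (by norm_num)
    calc Real.sqrt R / Real.pi * ((R+1) ^ ((1:ℝ)/2) * ((R+1) ^ ((1:ℝ)/R)) ^ ((1:ℝ)/2))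
        ≤ Real.sqrt R / Real.pi * ((R+1) ^ ((1:ℝ)/2) * Real.sqrt 2) := by
          gcongr
      _ = Real.sqrt R * Real.sqrt (R+1) * Real.sqrt 2 / Real.pi := by
          rw [hsq2]; ring
      _ = Real.sqrt (R * (R+1) * 2) / Real.pi := by
          rw [← Real.sqrt_mul hR0.le, ← Real.sqrt_mul (by positivity)]
      _ ≤ x₂ := by
          rw [div_le_iff₀ Real.pi_pos]
          have hsle : Real.sqrt (R * (R+1) * 2) ≤ Real.sqrt ((x₂ * 3)^2) := by
            apply Real.sqrt_le_sqrt
            rw [hx2_def]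
            nlinarith
          rw [Real.sqrt_sq (by positivity)] at hsle
          have hp : x₂ * 3 ≤ x₂ * Real.pi := by
            apply mul_le_mul_of_nonneg_left hpi3 (by positivity)
          linarith
  -- convexity
  have hx2ne : (0:ℝ) < x₂ - 1 := by linarith
  obtain ⟨t, ht_def⟩ : ∃ t : ℝ, t = (x₂ - x)/(x₂ - 1) := ⟨_, rfl⟩
  obtain ⟨s, hs_def⟩ : ∃ s : ℝ, s = (x - 1)/(x₂ - 1) := ⟨_, rfl⟩
  have ht0 : 0 ≤ t := by rw [ht_def]; apply div_nonneg (by linarith) (by linarith)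
  have hs0 : 0 ≤ s := by rw [hs_def]; apply div_nonneg (by linarith) (by linarith)
  have hts : t + s = 1 := by rw [ht_def, hs_def]; field_simp; try ring
  have hcomb : t * 1 + s * x₂ = x := by
    rw [ht_def, hs_def]; field_simp; try ring
  have hconv := convexOn_exp.2 (Set.mem_univ (((1:ℝ)/R - 1) * L))
    (Set.mem_univ ((x₂/R - 1) * L)) ht0 hs0 hts
  simp only [smul_eq_mul] at hconv
  have haff : t * (((1:ℝ)/R - 1) * L) + s * ((x₂/R - 1) * L) = (x/R - 1) * L := by
    have expand : t * ((1:ℝ)/R - 1) + s * (x₂/R - 1) = (t * 1 + s * x₂)/R - (t + s) := by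
      field_simp; try ring
    have expand2 : t * ((1:ℝ)/R - 1) + s * (x₂/R - 1) = x/R - 1 := by
      rw [expand, hcomb, hts]
    calc t * (((1:ℝ)/R - 1) * L) + s * ((x₂/R - 1) * L)
        = (t * ((1:ℝ)/R - 1) + s * (x₂/R - 1)) * L := by ring
      _ = (x/R - 1) * L := by rw [expand2]
  rw [haff] at hconv
  rw [hexp_form x]
  calc Real.sqrt R / Real.pi * Real.exp ((x/R - 1) * L)
      ≤ Real.sqrt R / Real.pi * (t * Real.exp (((1:ℝ)/R - 1) * L) + s * Real.exp ((x₂/R - 1) * L)) := by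
        apply mul_le_mul_of_nonneg_left hconv (by positivity)
    _ = t * (Real.sqrt R / Real.pi * Real.exp (((1:ℝ)/R - 1) * L))
        + s * (Real.sqrt R / Real.pi * Real.exp ((x₂/R - 1) * L)) := by ring
    _ ≤ t * 1 + s * x₂ := by
        apply add_le_add
        · exact mul_le_mul_of_nonneg_left hend1 ht0
        · exact mul_le_mul_of_nonneg_left hend2 hs0
    _ = x := hcomb


lemma prod_sub_range (m : ℕ) : ∏ i ∈ Finset.range m, (m - i) = m.factorial := by
  rw [← Finset.prod_range_add_one_eq_factorial, ← Finset.prod_range_reflect (fun i => i + 1) m]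
  apply Finset.prod_congr rfl
  intro i hi
  simp only [Finset.mem_range] at hi
  omega

lemma dvd_lemma (u₀ r : ℕ) (hu₀ : 0 < u₀) (hr : 0 < r) (hcop : Nat.Coprime u₀ r)
    (u : ℕ → ℕ) (hu : ∀ k, u k = u₀ + k * r) (n k : ℕ) (hk : k ≤ n) :
    (∏ j ∈ Finset.Icc k n, u j) ∣ (n-k).factorial * (Finset.range (n+1)).lcm u := by
  have hupos : ∀ j, 0 < u j := by
    intro j; rw [hu]; positivity
  have hLdvd : ∀ j ≤ n, u j ∣ (Finset.range (n+1)).lcm u := by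
    intro j hj
    exact Finset.dvd_lcm (Finset.mem_range.2 (by omega))
  have hL0 : 0 < (Finset.range (n+1)).lcm u := by
    apply Nat.pos_of_ne_zero
    simp only [Ne, Finset.lcm_eq_zero_iff]
    intro h
    obtain ⟨j, _, hj⟩ := h
    exact (hupos j).ne' hj
  have hprod0 : (∏ j ∈ Finset.Icc k n, u j) ≠ 0 :=
    (Finset.prod_pos (fun j _ => hupos j)).ne'
  have hrhs0 : (n-k).factorial * (Finset.range (n+1)).lcm u ≠ 0 :=
    (Nat.mul_pos (Nat.factorial_pos _) hL0).ne'
  rw [← Nat.factorization_le_iff_dvd hprod0 hrhs0]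
  rw [Finsupp.le_def]
  intro p
  by_cases hp : p.Prime
  swap
  · simp [Nat.factorization_eq_zero_of_not_prime _ hp]
  -- get max
  obtain ⟨j₀, hj₀mem, hj₀max⟩ := Finset.exists_max_image (Finset.Icc k n)
    (fun j => (u j).factorization p) ⟨k, Finset.mem_Icc.2 ⟨le_refl k, hk⟩⟩
  rw [Finset.mem_Icc] at hj₀mem
  -- factorization of product = sum
  have hfprod : (∏ j ∈ Finset.Icc k n, u j).factorization p
      = ∑ j ∈ Finset.Icc k n, (u j).factorization p := by
    rw [Nat.factorization_prod (fun j _ => (hupos j).ne')]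
    exact Finset.sum_apply' p
  -- split off j₀
  have hsplit_sum : ∑ j ∈ Finset.Icc k n, (u j).factorization p
      = (u j₀).factorization p + ∑ j ∈ Finset.Icc k n \ {j₀}, (u j).factorization p := by
    rw [Finset.sum_eq_add_sum_sdiff_singleton_of_mem (Finset.mem_Icc.2 hj₀mem)]
  -- claim: each other term bounded by factorization of distance
  have hclaim : ∀ j ∈ Finset.Icc k n \ {j₀}, (u j).factorization p
      ≤ (if j < j₀ then j₀ - j else j - j₀).factorization p := by
    intro j hj
    rw [Finset.mem_sdiff, Finset.mem_Icc, Finset.mem_singleton] at hj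
    obtain ⟨⟨hjk, hjn⟩, hjne⟩ := hj
    set α := (u j).factorization p with hα
    rcases Nat.eq_zero_or_pos α with h0 | hα1
    · simp [h0]
    -- p ∣ u j
    have hpdvd_uj : p ^ α ∣ u j := Nat.ordProj_dvd _ _
    have hpuj : p ∣ u j := dvd_trans (dvd_pow_self p hα1.ne') hpdvd_uj
    -- p does not divide r
    have hpr : ¬ p ∣ r := by
      intro hdvd
      have hpu0 : p ∣ u₀ := by
        have : p ∣ j * r := Dvd.dvd.mul_left hdvd j
        have h2 : p ∣ u₀ + j * r := by rw [← hu]; exact hpuj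
        exact (Nat.dvd_add_right this).mp (by rwa [Nat.add_comm] at h2)
      have hgcd : p ∣ Nat.gcd u₀ r := Nat.dvd_gcd hpu0 hdvd
      rw [Nat.Coprime] at hcop
      rw [hcop] at hgcd
      have := Nat.dvd_one.mp hgcd
      have := hp.one_lt
      omega
    -- p^α divides u j₀ as well
    have hle : α ≤ (u j₀).factorization p := hj₀max j (Finset.mem_Icc.2 ⟨hjk, hjn⟩)
    have hpdvd_uj0 : p ^ α ∣ u j₀ := dvd_trans (pow_dvd_pow p hle) (Nat.ordProj_dvd _ _)
    -- difference
    have hcopr : Nat.Coprime (p ^ α) r := Nat.Coprime.pow_left _ ((Nat.Prime.coprime_iff_not_dvd hp).mpr hpr)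
    rcases lt_or_gt_of_ne hjne with hlt | hgt
    · -- j < j₀ : u j₀ = u j + (j₀ - j) * r
      have heq : u j₀ = u j + (j₀ - j) * r := by
        have hmul : j * r ≤ j₀ * r := Nat.mul_le_mul_right r (le_of_lt hlt)
        rw [hu, hu, Nat.sub_mul]
        omega
      have hdd : p ^ α ∣ (j₀ - j) * r := by
        have := (Nat.dvd_add_right hpdvd_uj).mp (heq ▸ hpdvd_uj0)
        exact this
      have hdj : p ^ α ∣ (j₀ - j) := hcopr.dvd_of_dvd_mul_right hdd
      have : α ≤ (j₀ - j).factorization p :=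
        (Nat.Prime.pow_dvd_iff_le_factorization hp (by omega)).mp hdj
      simpa [hlt] using this
    · have heq : u j = u j₀ + (j - j₀) * r := by
        have hmul : j₀ * r ≤ j * r := Nat.mul_le_mul_right r (le_of_lt hgt)
        rw [hu, hu, Nat.sub_mul]
        omega
      have hdd : p ^ α ∣ (j - j₀) * r := by
        exact (Nat.dvd_add_right hpdvd_uj0).mp (heq ▸ hpdvd_uj)
      have hdj : p ^ α ∣ (j - j₀) := hcopr.dvd_of_dvd_mul_right hdd
      have : α ≤ (j - j₀).factorization p :=
        (Nat.Prime.pow_dvd_iff_le_factorization hp (by omega)).mp hdj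
      have hnlt : ¬ (j < j₀) := by omega
      simpa [hnlt] using this
  -- bound the sum over the rest
  have hrest : ∑ j ∈ Finset.Icc k n \ {j₀}, (u j).factorization p
      ≤ ((n-k).factorial).factorization p := by
    have hstep1 : ∑ j ∈ Finset.Icc k n \ {j₀}, (u j).factorization p
        ≤ ∑ j ∈ Finset.Icc k n \ {j₀}, (if j < j₀ then j₀ - j else j - j₀).factorization p :=
      Finset.sum_le_sum hclaim
    have hsetsplit : Finset.Icc k n \ {j₀} = Finset.Ico k j₀ ∪ Finset.Icc (j₀+1) n := by
      ext j
      simp only [Finset.mem_sdiff, Finset.mem_Icc, Finset.mem_singleton, Finset.mem_union,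
        Finset.mem_Ico]
      omega
    have hdisj : Disjoint (Finset.Ico k j₀) (Finset.Icc (j₀+1) n) := by
      apply Finset.disjoint_left.2
      intro j hj1 hj2
      simp only [Finset.mem_Ico] at hj1
      simp only [Finset.mem_Icc] at hj2
      omega
    rw [hsetsplit, Finset.sum_union hdisj] at hstep1 ⊢
    -- each part equals factorization of a factorial product
    have hpart1 : ∑ j ∈ Finset.Ico k j₀, (if j < j₀ then j₀ - j else j - j₀).factorization p
        = ((j₀ - k).factorial).factorization p := by
      have he : ∀ j ∈ Finset.Ico k j₀, (if j < j₀ then j₀ - j else j - j₀) = j₀ - j := by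
        intro j hj
        simp only [Finset.mem_Ico] at hj
        simp [hj.2]
      rw [Finset.sum_congr rfl (fun j hj => by rw [he j hj])]
      have hprod : ∏ j ∈ Finset.Ico k j₀, (j₀ - j) = (j₀ - k).factorial := by
        rw [Finset.prod_Ico_eq_prod_range]
        calc ∏ i ∈ Finset.range (j₀ - k), (j₀ - (k + i))
            = ∏ i ∈ Finset.range (j₀ - k), ((j₀ - k) - i) := by
              apply Finset.prod_congr rfl
              intro i hi
              simp only [Finset.mem_range] at hi
              omega
          _ = (j₀ - k).factorial := prod_sub_range _
      rw [← hprod, Nat.factorization_prod]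
      · exact (Finset.sum_apply' p).symm
      · intro j hj
        simp only [Finset.mem_Ico] at hj
        omega
    have hpart2 : ∑ j ∈ Finset.Icc (j₀+1) n, (if j < j₀ then j₀ - j else j - j₀).factorization p
        = ((n - j₀).factorial).factorization p := by
      have he : ∀ j ∈ Finset.Icc (j₀+1) n, (if j < j₀ then j₀ - j else j - j₀) = j - j₀ := by
        intro j hj
        simp only [Finset.mem_Icc] at hj
        have : ¬ j < j₀ := by omega
        simp [this]
      rw [Finset.sum_congr rfl (fun j hj => by rw [he j hj])]
      have hprod : ∏ j ∈ Finset.Icc (j₀+1) n, (j - j₀) = (n - j₀).factorial := by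
        have : Finset.Icc (j₀+1) n = Finset.Ico (j₀+1) (n+1) := by
          ext j; simp [Finset.mem_Icc, Finset.mem_Ico]
        rw [this, Finset.prod_Ico_eq_prod_range]
        calc ∏ i ∈ Finset.range (n + 1 - (j₀ + 1)), (j₀ + 1 + i - j₀)
            = ∏ i ∈ Finset.range (n - j₀), (i + 1) := by
              apply Finset.prod_congr (by congr 1; omega)
              intro i hi
              omega
          _ = (n - j₀).factorial := Finset.prod_range_add_one_eq_factorial _
      rw [← hprod, Nat.factorization_prod]
      · exact (Finset.sum_apply' p).symm
      · intro j hj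
        simp only [Finset.mem_Icc] at hj
        omega
    rw [Finset.sum_union hdisj, hpart1, hpart2] at hstep1
    refine le_trans hstep1 ?_
    -- (j₀-k)! * (n-j₀)! divides (n-k)!
    have hdvdfac : (j₀ - k).factorial * (n - j₀).factorial ∣ (n - k).factorial := by
      have := Nat.factorial_mul_factorial_dvd_factorial_add (j₀ - k) (n - j₀)
      have heq : j₀ - k + (n - j₀) = n - k := by omega
      rwa [heq] at this
    have hmono := (Nat.factorization_le_iff_dvd
      (Nat.mul_pos (Nat.factorial_pos _) (Nat.factorial_pos _)).ne'
      (Nat.factorial_pos _).ne').mpr hdvdfac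
    have := Finsupp.le_def.mp hmono p
    rw [Nat.factorization_mul (Nat.factorial_pos _).ne' (Nat.factorial_pos _).ne'] at this
    simpa using this
  -- j₀ term bounded by L
  have hj0L : (u j₀).factorization p ≤ ((Finset.range (n+1)).lcm u).factorization p := by
    have hdvd := hLdvd j₀ hj₀mem.2
    have := (Nat.factorization_le_iff_dvd (hupos j₀).ne' hL0.ne').mpr hdvd
    exact Finsupp.le_def.mp this p
  -- assemble
  rw [hfprod, hsplit_sum, Nat.factorization_mul (Nat.factorial_pos _).ne' hL0.ne']
  simp only [Finsupp.add_apply]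
  omega

lemma Qlemma (u₀ r : ℕ) (hu₀ : 0 < u₀) (hr : 0 < r) (u : ℕ → ℕ)
    (hu : ∀ k, u k = u₀ + k * r) :
    ∀ n : ℕ, 2*u₀ ≤ 2*n + 3*r + 1 →
    ∃ k, k ≤ n ∧ ((n-k).factorial : ℝ) *
        (Real.sqrt r / Real.pi * ((r:ℝ)+1) ^ ((n:ℝ) - 1 + (u₀:ℝ)/(r:ℝ)))
      ≤ ∏ j ∈ Finset.Icc k n, (u j : ℝ) := by
  have hR0 : (0:ℝ) < (r:ℝ) := by exact_mod_cast hr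
  have hRp1 : (0:ℝ) < (r:ℝ) + 1 := by linarith
  have hupos : ∀ j, (0:ℝ) < (u j : ℝ) := by
    intro j
    have : 0 < u j := by rw [hu]; positivity
    exact_mod_cast this
  have hucast : ∀ j : ℕ, (u j : ℝ) = (u₀:ℝ) + (j:ℝ)*(r:ℝ) := by
    intro j; rw [hu]; push_cast; ring
  have hpow_succ : ∀ n : ℕ, ((r:ℝ)+1) ^ (((n:ℝ)+1) - 1 + (u₀:ℝ)/(r:ℝ))
      = ((r:ℝ)+1) ^ ((n:ℝ) - 1 + (u₀:ℝ)/(r:ℝ)) * ((r:ℝ)+1) := by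
    intro n
    rw [← Real.rpow_add_one hRp1.ne']
    congr 1
    ring
  intro n
  induction n with
  | zero =>
    intro h
    refine ⟨0, le_refl 0, ?_⟩
    simp only [Nat.sub_zero, Nat.factorial_zero, Nat.cast_one, one_mul, Finset.Icc_self,
      Finset.prod_singleton, Nat.cast_zero]
    have := baseA u₀ r hr hu₀ (by omega)
    rw [hu 0]
    push_cast
    simpa using this
  | succ n IH =>
    intro h
    by_cases h2n : 2*u₀ ≤ 2*n + 3*r + 1
    · obtain ⟨k, hk, hQ⟩ := IH h2n
      have hfpos : (0:ℝ) < ((n-k).factorial : ℝ) := by exact_mod_cast (n-k).factorial_pos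
      have hppos : (0:ℝ) < Real.sqrt r / Real.pi * ((r:ℝ)+1) ^ ((n:ℝ) - 1 + (u₀:ℝ)/(r:ℝ)) := by
        have := Real.pi_pos
        have := Real.sqrt_pos.2 hR0
        positivity
      by_cases hcase : n + 1 ≤ u₀ + k*(r+1)
      · refine ⟨k, by omega, ?_⟩
        rw [Finset.prod_Icc_succ_top (by omega : k ≤ n + 1)]
        have hfact : ((n+1-k).factorial : ℝ) = ((n-k).factorial : ℝ) * ((n:ℝ)+1-(k:ℝ)) := by
          have h1 : n+1-k = (n-k)+1 := by omega
          rw [h1, Nat.factorial_succ]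
          push_cast
          have : ((n-k:ℕ):ℝ) = (n:ℝ)-(k:ℝ) := by
            rw [Nat.cast_sub hk]
          rw [this]
          ring
        have hterm : ((n:ℝ)+1-(k:ℝ)) * ((r:ℝ)+1) ≤ (u (n+1) : ℝ) := by
          rw [hucast]
          have hc : ((n:ℝ)+1) ≤ (u₀:ℝ) + (k:ℝ)*((r:ℝ)+1) := by
            have : ((n+1:ℕ):ℝ) ≤ ((u₀ + k*(r+1) : ℕ):ℝ) := by exact_mod_cast hcase
            push_cast at this
            linarith
          push_cast
          nlinarith [hc, hR0]
        have hknat : (0:ℝ) ≤ (n:ℝ)+1-(k:ℝ) := by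
          have : (k:ℝ) ≤ (n:ℝ) := by exact_mod_cast hk
          linarith
        rw [show (((n+1:ℕ)):ℝ) = (n:ℝ)+1 from by push_cast; ring]
        calc ((n+1-k).factorial : ℝ) * (Real.sqrt r / Real.pi * ((r:ℝ)+1) ^ (((n:ℝ)+1) - 1 + (u₀:ℝ)/(r:ℝ)))
            = (((n-k).factorial : ℝ) * (Real.sqrt r / Real.pi * ((r:ℝ)+1) ^ ((n:ℝ) - 1 + (u₀:ℝ)/(r:ℝ))))
              * (((n:ℝ)+1-(k:ℝ)) * ((r:ℝ)+1)) := by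
              rw [hfact, hpow_succ]
              push_cast
              ring
          _ ≤ (∏ j ∈ Finset.Icc k n, (u j : ℝ)) * (u (n+1) : ℝ) := by
              apply mul_le_mul hQ hterm (by positivity) (Finset.prod_nonneg (fun j _ => (hupos j).le))
      · -- increment k
        have hcase' : u₀ + k*(r+1) ≤ n + 1 := by omega
        refine ⟨k+1, by omega, ?_⟩
        have hsplit_top : ∏ j ∈ Finset.Icc k (n+1), (u j : ℝ)
            = (∏ j ∈ Finset.Icc k n, (u j : ℝ)) * (u (n+1) : ℝ) :=
          Finset.prod_Icc_succ_top (by omega) _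
        have hsplit_bot : ∏ j ∈ Finset.Icc k (n+1), (u j : ℝ)
            = (u k : ℝ) * ∏ j ∈ Finset.Icc (k+1) (n+1), (u j : ℝ) := by
          have hins : Finset.Icc k (n+1) = insert k (Finset.Icc (k+1) (n+1)) := by
            ext j
            simp only [Finset.mem_Icc, Finset.mem_insert]
            omega
          rw [hins, Finset.prod_insert (by simp [Finset.mem_Icc])]
        have hfacteq : (n+1-(k+1)) = n - k := by omega
        have hterm : (u k : ℝ) * ((r:ℝ)+1) ≤ (u (n+1) : ℝ) := by
          rw [hucast, hucast]
          have hc : (u₀:ℝ) + (k:ℝ)*((r:ℝ)+1) ≤ (n:ℝ)+1 := by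
            have : ((u₀ + k*(r+1) : ℕ):ℝ) ≤ ((n+1:ℕ):ℝ) := by exact_mod_cast hcase'
            push_cast at this
            linarith
          push_cast
          nlinarith [hc, hR0]
        -- B ≥ A*(r+1)
        have hBA : (∏ j ∈ Finset.Icc k n, (u j : ℝ)) * ((r:ℝ)+1)
            ≤ ∏ j ∈ Finset.Icc (k+1) (n+1), (u j : ℝ) := by
          have hA : (0:ℝ) < ∏ j ∈ Finset.Icc k n, (u j : ℝ) :=
            Finset.prod_pos (fun j _ => hupos j)
          have hB : (0:ℝ) < ∏ j ∈ Finset.Icc (k+1) (n+1), (u j : ℝ) :=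
            Finset.prod_pos (fun j _ => hupos j)
          have hEq : (u k : ℝ) * ∏ j ∈ Finset.Icc (k+1) (n+1), (u j : ℝ)
              = (∏ j ∈ Finset.Icc k n, (u j : ℝ)) * (u (n+1) : ℝ) := by
            rw [← hsplit_bot, hsplit_top]
          -- uk * B = A * u(n+1) ≥ A * uk * (r+1)  => B ≥ A*(r+1)
          have h1 : (∏ j ∈ Finset.Icc k n, (u j : ℝ)) * ((u k : ℝ) * ((r:ℝ)+1))
              ≤ (∏ j ∈ Finset.Icc k n, (u j : ℝ)) * (u (n+1) : ℝ) :=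
            mul_le_mul_of_nonneg_left hterm hA.le
          rw [← hEq] at h1
          have huk : (0:ℝ) < (u k : ℝ) := hupos k
          nlinarith [h1, hA, huk]
        rw [hfacteq, show (((n+1:ℕ)):ℝ) = (n:ℝ)+1 from by push_cast; ring]
        calc ((n-k).factorial : ℝ) * (Real.sqrt r / Real.pi * ((r:ℝ)+1) ^ (((n:ℝ)+1) - 1 + (u₀:ℝ)/(r:ℝ)))
            = (((n-k).factorial : ℝ) * (Real.sqrt r / Real.pi * ((r:ℝ)+1) ^ ((n:ℝ) - 1 + (u₀:ℝ)/(r:ℝ))))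
              * ((r:ℝ)+1) := by
              rw [hpow_succ]
              ring
          _ ≤ (∏ j ∈ Finset.Icc k n, (u j : ℝ)) * ((r:ℝ)+1) :=
              mul_le_mul_of_nonneg_right hQ (by linarith)
          _ ≤ ∏ j ∈ Finset.Icc (k+1) (n+1), (u j : ℝ) := hBA
    · -- fresh base case with m = n+1, k = 0
      refine ⟨0, Nat.zero_le _, ?_⟩
      have hbase := baseB u₀ r (n+1) hr (by omega) (by omega) (by omega)
      have hconv : ∏ j ∈ Finset.range (n+2), ((u₀:ℝ) + (j:ℝ)*(r:ℝ))
          = ∏ j ∈ Finset.Icc 0 (n+1), (u j : ℝ) := by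
        rw [Finset.range_eq_Ico]
        have : Finset.Ico 0 (n+2) = Finset.Icc 0 (n+1) := by
          ext j; simp [Finset.mem_Ico, Finset.mem_Icc]; omega
        rw [this]
        apply Finset.prod_congr rfl
        intro j _
        rw [hucast]
      rw [← hconv]
      simp only [Nat.sub_zero]
      have : ((n:ℝ)+1) - 1 + (u₀:ℝ)/(r:ℝ) = ((n+1:ℕ):ℝ) - 1 + (u₀:ℝ)/(r:ℝ) := by push_cast; ring
      push_cast
      push_cast at hbase
      convert hbase using 3

theorem stmt_9 (u₀ r : ℕ) (hu₀ : 0 < u₀) (hr : 0 < r)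
    (hcop : Nat.Coprime u₀ r) (u : ℕ → ℕ) (hu : ∀ k, u k = u₀ + k * r)
    (n : ℕ) (hn : (n : ℝ) ≥ (u₀ : ℝ) - (3 * r + 1) / 2) :
    (((Finset.range (n + 1)).lcm u : ℕ) : ℝ) ≥
      (1 / Real.pi) * Real.sqrt r * ((r : ℝ) + 1) ^ ((n : ℝ) - 1 + (u₀ : ℝ) / r) := by
  have hcond : 2*u₀ ≤ 2*n + 3*r + 1 := by
    have h1 : (2*u₀ : ℝ) ≤ 2*n + 3*r + 1 := by linarith
    exact_mod_cast h1
  obtain ⟨k, hk, hQ⟩ := Qlemma u₀ r hu₀ hr u hu n hcond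
  have hdvd := dvd_lemma u₀ r hu₀ hr hcop u hu n k hk
  have hupos : ∀ j, 0 < u j := by intro j; rw [hu]; positivity
  have hprodpos : 0 < ∏ j ∈ Finset.Icc k n, u j := Finset.prod_pos (fun j _ => hupos j)
  have hle : (∏ j ∈ Finset.Icc k n, u j) ≤ (n-k).factorial * (Finset.range (n+1)).lcm u := by
    apply Nat.le_of_dvd _ hdvd
    apply Nat.mul_pos (Nat.factorial_pos _)
    apply Nat.pos_of_ne_zero
    simp only [Ne, Finset.lcm_eq_zero_iff]
    intro h
    obtain ⟨j, _, hj⟩ := h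
    exact (hupos j).ne' hj
  have hcast : (∏ j ∈ Finset.Icc k n, (u j : ℝ)) = ((∏ j ∈ Finset.Icc k n, u j : ℕ) : ℝ) := by
    push_cast
    rfl
  have hleR : (∏ j ∈ Finset.Icc k n, (u j : ℝ))
      ≤ ((n-k).factorial : ℝ) * (((Finset.range (n+1)).lcm u : ℕ) : ℝ) := by
    rw [hcast]
    exact_mod_cast hle
  have hfpos : (0:ℝ) < ((n-k).factorial : ℝ) := by exact_mod_cast (n-k).factorial_pos
  have hchain := le_trans hQ hleR
  have hfinal : Real.sqrt r / Real.pi * ((r:ℝ)+1) ^ ((n:ℝ) - 1 + (u₀:ℝ)/(r:ℝ))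
      ≤ (((Finset.range (n+1)).lcm u : ℕ) : ℝ) :=
    le_of_mul_le_mul_left hchain hfpos
  calc (1 / Real.pi) * Real.sqrt r * ((r : ℝ) + 1) ^ ((n : ℝ) - 1 + (u₀ : ℝ) / r)
      = Real.sqrt r / Real.pi * ((r:ℝ)+1) ^ ((n:ℝ) - 1 + (u₀:ℝ)/(r:ℝ)) := by ring
    _ ≤ (((Finset.range (n+1)).lcm u : ℕ) : ℝ) := hfinal
end

section
/- For any integer k in {0,...,n}, any arithmetic progression u_k = u_0 + k·r with positive coprime u_0 and r satisfies lcm{u_0,...,u_n} ≥ (u_k · u_{k+1} ··· u_n)/(n−k)!. -/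
private lemma key_dvd (u₀ r : ℕ) (hu₀ : 0 < u₀) (hr : 0 < r)
    (u : ℕ → ℕ) (hu : ∀ j, u j = u₀ + j * r) :
    ∀ m n k : ℕ, k + m = n →
      (∏ j ∈ Finset.Icc k n, u j) ∣
        Nat.factorial m * r ^ m * ((Finset.range (n + 1)).lcm u) := by
  have hupos : ∀ j, 0 < u j := fun j => by rw [hu]; positivity
  intro m
  induction m with
  | zero =>
      intro n k hkn
      subst hkn
      simp only [Nat.add_zero, Finset.Icc_self, Finset.prod_singleton,
        Nat.factorial_zero, pow_zero, one_mul]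
      exact Finset.dvd_lcm (Finset.self_mem_range_succ k)
  | succ m ih =>
      intro n k hkn
      obtain ⟨p, rfl⟩ : ∃ p, n = p + 1 := ⟨n - 1, by omega⟩
      have hkp : k ≤ p := by omega
      set L : ℕ := (Finset.range (p + 1 + 1)).lcm u with hL
      set A : ℕ := ∏ j ∈ Finset.Icc k p, u j with hA
      set B : ℕ := ∏ j ∈ Finset.Icc (k + 1) (p + 1), u j with hB
      set F : ℕ := ∏ j ∈ Finset.Icc k (p + 1), u j with hF
      have hApos : 0 < A := Finset.prod_pos fun j _ => hupos j
      have hBpos : 0 < B := Finset.prod_pos fun j _ => hupos j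
      have hFA : F = u (p + 1) * A := by
        rw [hF, hA, Finset.prod_Icc_succ_top (by omega), mul_comm]
      have hFB : F = u k * B := by
        rw [hF, hB,
          ← Finset.Ioc_insert_left (by omega : k ≤ p + 1),
          Finset.prod_insert (by simp), ← Finset.Icc_add_one_left_eq_Ioc]
      have hAdvd : A ∣ Nat.factorial m * r ^ m * L := by
        have h1 := ih p k (by omega)
        have h2 : (Finset.range (p + 1)).lcm u ∣ L := by
          apply Finset.lcm_dvd
          intro b hb
          exact Finset.dvd_lcm (by simp at hb ⊢; omega)
        exact h1.trans (Nat.mul_dvd_mul_left _ h2)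
      have hBdvd : B ∣ Nat.factorial m * r ^ m * L := ih (p + 1) (k + 1) (by omega)
      have hgd : Nat.gcd A B ∣ B - A :=
        Nat.dvd_sub (Nat.gcd_dvd_right A B) (Nat.gcd_dvd_left A B)
      have hun : u (p + 1) = u k + (m + 1) * r := by
        rw [hu, hu]
        have h : p + 1 = k + (m + 1) := by omega
        rw [h]; ring
      have hAB : A ≤ B := by
        have h1 : u k * A ≤ u (p + 1) * A :=
          Nat.mul_le_mul_right A (by rw [hun]; omega)
        rw [← hFA, hFB] at h1
        exact Nat.le_of_mul_le_mul_left h1 (hupos k)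
      have hkey : F * (B - A) = (m + 1) * r * (A * B) := by
        have h1 : F * B = u (p + 1) * (A * B) := by rw [hFA]; ring
        have h2 : F * A = u k * (A * B) := by rw [hFB]; ring
        have h3 : F * (B - A) = F * B - F * A := Nat.mul_sub F B A
        rw [h3, h1, h2, ← Nat.sub_mul, hun]
        congr 1; omega
      obtain ⟨t, ht⟩ := hgd
      have hgpos : 0 < Nat.gcd A B := Nat.gcd_pos_of_pos_left B hApos
      have hFlcm : F ∣ (m + 1) * r * Nat.lcm A B := by
        refine ⟨t, ?_⟩
        have h4 : F * (Nat.gcd A B * t) = (m + 1) * r * (Nat.gcd A B * Nat.lcm A B) := by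
          rw [← ht, Nat.gcd_mul_lcm, hkey]
        have h5 : Nat.gcd A B * (F * t) = Nat.gcd A B * ((m + 1) * r * Nat.lcm A B) := by
          ring_nf; ring_nf at h4; linarith [h4]
        exact (Nat.eq_of_mul_eq_mul_left hgpos h5).symm
      have hlcmdvd : Nat.lcm A B ∣ Nat.factorial m * r ^ m * L :=
        Nat.lcm_dvd hAdvd hBdvd
      calc F ∣ (m + 1) * r * Nat.lcm A B := hFlcm
        _ ∣ (m + 1) * r * (Nat.factorial m * r ^ m * L) :=
            Nat.mul_dvd_mul_left _ hlcmdvd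
        _ = Nat.factorial (m + 1) * r ^ (m + 1) * L := by
            rw [Nat.factorial_succ, pow_succ]; ring

theorem stmt_10 (u₀ r : ℕ) (hu₀ : 0 < u₀) (hr : 0 < r)
    (hcop : Nat.Coprime u₀ r) (u : ℕ → ℕ) (hu : ∀ j, u j = u₀ + j * r)
    (n k : ℕ) (hk : k ≤ n) :
    (((Finset.range (n + 1)).lcm u : ℕ) : ℝ) ≥
      (∏ j ∈ Finset.Icc k n, (u j : ℝ)) / (Nat.factorial (n - k) : ℝ) := by
  have hupos : ∀ j, 0 < u j := fun j => by rw [hu]; positivity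
  set L : ℕ := (Finset.range (n + 1)).lcm u with hL
  set m : ℕ := n - k with hm
  set F : ℕ := ∏ j ∈ Finset.Icc k n, u j with hF
  have hdvd : F ∣ Nat.factorial m * r ^ m * L :=
    key_dvd u₀ r hu₀ hr u hu m n k (by omega)
  have hcopF : Nat.Coprime F (r ^ m) := by
    apply Nat.Coprime.pow_right
    apply Nat.Coprime.prod_left
    intro j _
    rw [hu j, mul_comm]
    exact (Nat.coprime_add_mul_left_left u₀ r j).mpr hcop
  have hdvd' : F ∣ Nat.factorial m * L := by
    have h1 : F ∣ r ^ m * (Nat.factorial m * L) := by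
      rw [show r ^ m * (Nat.factorial m * L) = Nat.factorial m * r ^ m * L by ring]
      exact hdvd
    exact Nat.Coprime.dvd_of_dvd_mul_left hcopF h1
  have hLpos : 0 < L := by
    have hne : L ≠ 0 := by
      rw [hL]
      intro h
      obtain ⟨j, -, hj⟩ := Finset.lcm_eq_zero_iff.mp h
      exact (hupos j).ne' hj
    omega
  have hle : F ≤ Nat.factorial m * L :=
    Nat.le_of_dvd (Nat.mul_pos (Nat.factorial_pos m) hLpos) hdvd'
  have hcast : (∏ j ∈ Finset.Icc k n, (u j : ℝ)) = (F : ℝ) := by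
    rw [hF]; push_cast; ring
  rw [ge_iff_le, hcast, div_le_iff₀ (by positivity)]
  calc (F : ℝ) ≤ ((Nat.factorial m * L : ℕ) : ℝ) := by exact_mod_cast hle
    _ = (L : ℝ) * (Nat.factorial m : ℝ) := by push_cast; ring
end

section
/- For every nonnegative integer k, the central-type binomial coefficient satisfies C(2k+1, k) < √2 · 4^k / √(k + 3/2). -/
lemma aux_key : ∀ n : ℕ, (Nat.centralBinom (n+1))^2 * (2*(n+1)+1) < 16^(n+1) := by
  intro n
  induction n with
  | zero => decide
  | succ n ih =>
    have h := Nat.succ_mul_centralBinom_succ (n+1)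
    have hpos : 0 < (n+2)^2 := by positivity
    refine Nat.lt_of_mul_lt_mul_left (a := (n+2)^2) ?_
    set b := Nat.centralBinom (n+1) with hb
    set c := Nat.centralBinom (n+2) with hc
    calc (n+2)^2 * (c^2 * (2*(n+1+1)+1)) = ((n+1+1)*c)^2 * (2*n+5) := by ring
      _ = (2*(2*(n+1)+1)*b)^2 * (2*n+5) := by rw [h]
      _ = 4*(2*n+3)*(2*n+5) * (b^2*(2*(n+1)+1)) := by ring
      _ ≤ 4*(2*n+4)^2 * (b^2*(2*(n+1)+1)) := by
          apply Nat.mul_le_mul_right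
          nlinarith
      _ < 4*(2*n+4)^2 * 16^(n+1) := by gcongr 4*(2*n+4)^2 * ?_
      _ = (n+2)^2 * 16^(n+1+1) := by rw [pow_succ]; ring

lemma aux_nat (k : ℕ) : ((2*k+1).choose k)^2 * (2*k+3) * 4 < 4 * 16^k * 4 := by
  have h1 : Nat.centralBinom (k+1) = 2 * ((2*k+1).choose k) := by
    rw [Nat.centralBinom]
    have : 2*(k+1) = (2*k+1)+1 := by ring
    rw [this, Nat.choose_succ_succ, Nat.choose_symm_half]
    ring
  have h := aux_key k
  rw [h1] at h
  have : (2 * (2*k+1).choose k)^2 * (2*(k+1)+1) = ((2*k+1).choose k)^2 * (2*k+3) * 4 := by ring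
  rw [this] at h
  calc ((2*k+1).choose k)^2 * (2*k+3) * 4 < 16^(k+1) := h
    _ = 4 * 16^k * 4 := by rw [pow_succ]; ring

theorem stmt_15 (k : ℕ) :
    ((2 * k + 1).choose k : ℝ) < Real.sqrt 2 * 4 ^ k / Real.sqrt ((k : ℝ) + 3 / 2) := by
  have hnat := aux_nat k
  have hR : ((2*k+1).choose k : ℝ)^2 * ((k:ℝ) + 3/2) < 2 * 16^k := by
    have := (Nat.cast_lt (α := ℝ)).mpr hnat
    push_cast at this
    nlinarith [this]
  have hpos : (0:ℝ) < (k:ℝ) + 3/2 := by positivity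
  rw [lt_div_iff₀ (Real.sqrt_pos.mpr hpos)]
  have h1 : ((2 * k + 1).choose k : ℝ) * Real.sqrt ((k:ℝ) + 3/2)
      = Real.sqrt (((2*k+1).choose k : ℝ)^2 * ((k:ℝ) + 3/2)) := by
    rw [Real.sqrt_mul (by positivity), Real.sqrt_sq (by positivity)]
  have h2 : Real.sqrt 2 * 4 ^ k = Real.sqrt (2 * 16^k) := by
    rw [Real.sqrt_mul (by norm_num)]
    congr 1
    rw [show ((16:ℝ))^k = ((4:ℝ)^k)^2 by rw [← pow_mul, pow_mul']; norm_num,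
      Real.sqrt_sq (by positivity)]
  rw [h1, h2]
  exact Real.sqrt_lt_sqrt (by positivity) hR
end

section
/- Let u_k = a·k·(k+t) + b with integers a ≥ 1, t ≥ 0, gcd(a,b) = 1, and suppose u_0, u_1, ..., u_n are all nonzero for some positive integer n. If t = 0, then 2·u_0·u_1···u_n / (2n)! is (as a rational) a divisor of lcm{u_0,...,u_n}, i.e., lcm{u_0,...,u_n} is an integer multiple of 2·(u_0···u_n)/(2n)!; if t ≥ 1, then lcm{u_0,...,u_n} is an integer multiple of (t−1)!·(u_0···u_n)/(2n+t)!. -/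
open Finset in
lemma lag_id (s : Finset ℕ) (hs : s.Nonempty) (v : ℕ → ℚ) (hvs : Set.InjOn v s) :
    ∑ k ∈ s, ∏ j ∈ s.erase k, (v j / (v j - v k)) = 1 := by
  have hdeg : (1 : Polynomial ℚ).degree < (s.card : WithBot ℕ) := by
    rw [Polynomial.degree_one]
    exact_mod_cast WithBot.coe_lt_coe.mpr hs.card_pos
  have h := Lagrange.eq_interpolate (F := ℚ) (v := v) (s := s) (f := 1) hvs hdeg
  have h0 := congrArg (Polynomial.eval 0) h
  rw [Lagrange.interpolate_apply] at h0
  simp only [Polynomial.eval_one, Polynomial.eval_finset_sum, Polynomial.eval_mul,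
    Polynomial.eval_C, Polynomial.eval_one, one_mul, Lagrange.basis,
    Polynomial.eval_prod, Lagrange.basisDivisor, Polynomial.eval_sub, Polynomial.eval_X,
    Polynomial.eval_C, zero_sub] at h0
  rw [h0]
  refine Finset.sum_congr rfl fun k _ => Finset.prod_congr rfl fun j _ => ?_
  rw [div_eq_mul_inv, show v j - v k = -(v k - v j) by ring, inv_neg]
  ring

open Finset Nat

open Finset in
lemma core (u : ℕ → ℤ) (s : Finset ℕ) (hs : s.Nonempty) (hne : ∀ k ∈ s, u k ≠ 0)
    (a D : ℤ) (m : ℕ)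
    (hcop : IsCoprime (a ^ m) (∏ i ∈ s, u i))
    (hw : ∀ k ∈ s, (∏ j ∈ s.erase k, (u j - u k)) ∣ a ^ m * D)
    (hwne : ∀ k ∈ s, ∀ j ∈ s.erase k, u j ≠ u k) :
    ∃ c : ℤ, (s.lcm u) * D = c * ∏ i ∈ s, u i := by
  set L : ℤ := s.lcm u with hL
  set A : ℤ := ∏ i ∈ s, u i with hA
  set v : ℕ → ℚ := fun k => ((u k : ℚ)) with hv
  have hinj : Set.InjOn v s := by
    intro j hj k hk hjk
    by_contra hne'
    exact hwne k hk j (Finset.mem_erase.mpr ⟨hne', hj⟩)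
      (by simp only [hv] at hjk; exact_mod_cast hjk)
  have key := lag_id s hs v hinj
  set w : ℕ → ℤ := fun k => ∏ j ∈ s.erase k, (u j - u k) with hwdef
  set e : ℕ → ℤ := fun k => L / u k with hedef
  set f : ℕ → ℤ := fun k => (a ^ m * D) / w k with hfdef
  have he : ∀ k ∈ s, u k * e k = L := fun k hk =>
    Int.mul_ediv_cancel' (Finset.dvd_lcm hk)
  have hf : ∀ k ∈ s, w k * f k = a ^ m * D := fun k hk =>
    Int.mul_ediv_cancel' (hw k hk)
  have hterm : ∀ k ∈ s, (a : ℚ) ^ m * (L : ℚ) * (D : ℚ) * ∏ j ∈ s.erase k, (v j / (v j - v k))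
      = ((e k * f k : ℤ) : ℚ) * ∏ i ∈ s, v i := by
    intro k hk
    have h1 : v k * ∏ j ∈ s.erase k, v j = ∏ i ∈ s, v i := Finset.mul_prod_erase s v hk
    have h2 : ∏ j ∈ s.erase k, (v j - v k) = ((w k : ℤ) : ℚ) := by
      push_cast [hwdef, hv]; rfl
    have hwne0 : ((w k : ℤ) : ℚ) ≠ 0 := by
      rw [← h2]
      exact Finset.prod_ne_zero_iff.mpr fun j hj => sub_ne_zero.mpr
        (fun hc => hwne k hk j hj (by simp only [hv] at hc; exact_mod_cast hc))
    have heq : (v k) * ((e k : ℤ) : ℚ) = (L : ℚ) := by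
      simp only [hv]; exact_mod_cast he k hk
    have hfq : ((w k : ℤ) : ℚ) * ((f k : ℤ) : ℚ) = (a : ℚ) ^ m * (D : ℚ) := by
      exact_mod_cast hf k hk
    rw [Finset.prod_div_distrib, h2, ← h1]
    have h3 : ((w k : ℤ):ℚ) * ((f k : ℤ):ℚ) * (v k * ((e k : ℤ):ℚ)) = (a:ℚ)^m * (L:ℚ) * (D:ℚ) := by
      rw [hfq, heq]; ring
    rw [← h3]
    push_cast
    field_simp
  have hsum : (a : ℚ) ^ m * ((L : ℚ) * (D : ℚ)) = ((∑ k ∈ s, e k * f k : ℤ) : ℚ) * ∏ i ∈ s, v i := by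
    calc (a : ℚ) ^ m * ((L : ℚ) * (D : ℚ))
        = (a : ℚ) ^ m * (L : ℚ) * (D : ℚ) * (∑ k ∈ s, ∏ j ∈ s.erase k, (v j / (v j - v k))) := by
          rw [key]; ring
      _ = ∑ k ∈ s, (a : ℚ) ^ m * (L : ℚ) * (D : ℚ) * ∏ j ∈ s.erase k, (v j / (v j - v k)) := by
          rw [Finset.mul_sum]
      _ = ∑ k ∈ s, ((e k * f k : ℤ) : ℚ) * ∏ i ∈ s, v i := Finset.sum_congr rfl hterm
      _ = ((∑ k ∈ s, e k * f k : ℤ) : ℚ) * ∏ i ∈ s, v i := by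
          rw [← Finset.sum_mul]; push_cast; ring
  have hAq : (∏ i ∈ s, v i) = ((A : ℤ) : ℚ) := by push_cast [hA, hv]; rfl
  rw [hAq] at hsum
  have hZ : a ^ m * (L * D) = (∑ k ∈ s, e k * f k) * A := by exact_mod_cast hsum
  obtain ⟨r, r', hrs⟩ := hcop
  refine ⟨r * (∑ k ∈ s, e k * f k) + r' * (L * D), ?_⟩
  linear_combination r * hZ - (L * D) * hrs


lemma prod_shift_eq_asc (m k : ℕ) : ∏ i ∈ Finset.range k, (m + i) = m.ascFactorial k := by
  induction k with
  | zero => simp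
  | succ k ih => rw [Finset.prod_range_succ, ih, Nat.ascFactorial_succ, mul_comm]

lemma fact_dvd_prod_shift (m k : ℕ) : k ! ∣ ∏ i ∈ Finset.range k, (m + i) := by
  rw [prod_shift_eq_asc]; exact Nat.factorial_dvd_ascFactorial m k

lemma mid_prod (tn n k : ℕ) (hk : k ≤ n) :
    ∏ i ∈ Finset.Ico k (n+k+1), (tn + i)
      = (tn + (k+k)) * ∏ j ∈ (Finset.range (n+1)).erase k, (j + k + tn) := by
  rw [Finset.prod_Ico_eq_prod_range, show n + k + 1 - k = n + 1 by omega]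
  rw [← Finset.mul_prod_erase (Finset.range (n+1)) (fun j => tn + (k + j))
    (Finset.mem_range.mpr (Nat.lt_succ_of_le hk))]
  exact congrArg₂ _ rfl (Finset.prod_congr rfl fun j _ => by omega)

lemma div_main (tn n k : ℕ) (hk : k ≤ n) :
    k ! * (n - k)! * ∏ j ∈ (Finset.range (n+1)).erase k, (j + k + tn)
      ∣ ∏ i ∈ Finset.range (2*n+1), (tn + i) := by
  have e1 : (∏ i ∈ Finset.Ico 0 k, (tn+i)) * (∏ i ∈ Finset.Ico k (n+k+1), (tn+i))
      = ∏ i ∈ Finset.Ico 0 (n+k+1), (tn+i) :=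
    Finset.prod_Ico_consecutive _ (Nat.zero_le k) (by omega)
  have e2 : (∏ i ∈ Finset.Ico 0 (n+k+1), (tn+i)) * (∏ i ∈ Finset.Ico (n+k+1) (2*n+1), (tn+i))
      = ∏ i ∈ Finset.Ico 0 (2*n+1), (tn+i) :=
    Finset.prod_Ico_consecutive _ (by omega) (by omega)
  simp only [← Finset.range_eq_Ico] at e1 e2
  rw [← e2, ← e1, mid_prod tn n k hk]
  have d1 : k ! ∣ ∏ i ∈ Finset.range k, (tn+i) := fact_dvd_prod_shift tn k
  have d3 : (n-k)! ∣ ∏ i ∈ Finset.Ico (n+k+1) (2*n+1), (tn+i) := by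
    rw [Finset.prod_Ico_eq_prod_range, show 2*n+1 - (n+k+1) = n - k by omega]
    have : ∏ i ∈ Finset.range (n-k), (tn + (n+k+1+i))
        = ∏ i ∈ Finset.range (n-k), ((tn+n+k+1) + i) :=
      Finset.prod_congr rfl fun i _ => by omega
    rw [this]; exact fact_dvd_prod_shift _ _
  obtain ⟨c1, hc1⟩ := d1
  obtain ⟨c3, hc3⟩ := d3
  exact ⟨c1 * (tn + (k+k)) * c3, by rw [hc1, hc3]; ring⟩

lemma two_mul_dvd (n : ℕ) (hn : 1 ≤ n) : 2 * (n ! * n !) ∣ (2*n)! := by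
  have h := Nat.choose_mul_factorial_mul_factorial (show n ≤ 2*n by omega)
  have h2 : 2 ∣ (2*n).choose n := by
    obtain ⟨m, rfl⟩ : ∃ m, n = m + 1 := ⟨n-1, by omega⟩
    rw [show 2*(m+1) = (2*m+1) + 1 by ring, Nat.choose_succ_succ]
    have hsymm : (2*m+1).choose m = (2*m+1).choose (m+1) := by
      have h3 := Nat.choose_symm (show m+1 ≤ 2*m+1 by omega)
      rw [show 2*m+1-(m+1) = m by omega] at h3
      exact h3
    rw [hsymm]
    exact ⟨(2*m+1).choose (m+1), (two_mul _).symm⟩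
  obtain ⟨c, hc⟩ := h2
  refine ⟨c, ?_⟩
  rw [← h, hc, show 2*n - n = n by omega]
  ring

lemma divz (n k : ℕ) (hn : 1 ≤ n) (hk : k ≤ n) :
    2 * (k ! * (n - k)! * ∏ j ∈ (Finset.range (n+1)).erase k, (j + k + 0)) ∣ (2*n)! := by
  have hfp : (2*n)! = ∏ i ∈ Finset.Ico 1 (2*n+1), (0 + i) := by
    rw [Finset.prod_Ico_eq_prod_range, show 2*n+1-1 = 2*n from rfl,
      ← Finset.prod_range_add_one_eq_factorial (2*n)]
    exact Finset.prod_congr rfl fun i _ => by omega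
  rcases Nat.eq_zero_or_pos k with hk0 | hkpos
  · subst hk0
    have hP : ∏ j ∈ (Finset.range (n+1)).erase 0, (j + 0 + 0) = n ! := by
      have hset : (Finset.range (n+1)).erase 0 = Finset.Ico 1 (n+1) := by
        ext x; simp [Finset.mem_erase, Finset.mem_range, Finset.mem_Ico]; omega
      rw [hset, Finset.prod_Ico_eq_prod_range, show n+1-1 = n from rfl,
        ← Finset.prod_range_add_one_eq_factorial n]
      exact Finset.prod_congr rfl fun i _ => by omega
    rw [hP]
    simpa using two_mul_dvd n hn
  · have e1 : (∏ i ∈ Finset.Ico 1 k, (0+i)) * (∏ i ∈ Finset.Ico k (n+k+1), (0+i))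
        = ∏ i ∈ Finset.Ico 1 (n+k+1), (0+i) :=
      Finset.prod_Ico_consecutive _ (by omega) (by omega)
    have e2 : (∏ i ∈ Finset.Ico 1 (n+k+1), (0+i)) * (∏ i ∈ Finset.Ico (n+k+1) (2*n+1), (0+i))
        = ∏ i ∈ Finset.Ico 1 (2*n+1), (0+i) :=
      Finset.prod_Ico_consecutive _ (by omega) (by omega)
    rw [hfp, ← e2, ← e1, mid_prod 0 n k hk]
    have d1 : ∏ i ∈ Finset.Ico 1 k, (0+i) = (k-1)! := by
      rw [Finset.prod_Ico_eq_prod_range, ← Finset.prod_range_add_one_eq_factorial (k-1)]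
      exact Finset.prod_congr rfl fun i _ => by omega
    have d3 : (n-k)! ∣ ∏ i ∈ Finset.Ico (n+k+1) (2*n+1), (0+i) := by
      rw [Finset.prod_Ico_eq_prod_range, show 2*n+1 - (n+k+1) = n - k by omega]
      have : ∏ i ∈ Finset.range (n-k), (0 + (n+k+1+i))
          = ∏ i ∈ Finset.range (n-k), ((n+k+1) + i) :=
        Finset.prod_congr rfl fun i _ => by omega
      rw [this]; exact fact_dvd_prod_shift _ _
    obtain ⟨c3, hc3⟩ := d3
    refine ⟨c3, ?_⟩
    set P := ∏ j ∈ (Finset.range (n+1)).erase k, (j + k + 0) with hP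
    rw [d1, hc3]
    have hkf : (k-1)! * (k+k) = 2 * k ! := by
      have h := Nat.mul_factorial_pred hkpos.ne'
      calc (k-1)! * (k+k) = 2*(k*(k-1)!) := by ring
        _ = 2 * k ! := by rw [h]
    zify
    zify at hkf
    linear_combination ((P:ℤ) * (((n-k)! : ℕ):ℤ) * (c3:ℤ)) * hkf

open Finset Nat

lemma P1_eq (n k : ℕ) (hk : k ≤ n) :
    ∏ j ∈ (Finset.range (n+1)).erase k, ((j:ℤ) - (k:ℤ))
      = (-1)^k * ((k ! * (n - k)! : ℕ) : ℤ) := by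
  have hsplit : (Finset.range (n+1)).erase k = Finset.range k ∪ Finset.Ico (k+1) (n+1) := by
    ext x
    simp only [Finset.mem_erase, Finset.mem_range, Finset.mem_union, Finset.mem_Ico]
    omega
  have hdisj : Disjoint (Finset.range k) (Finset.Ico (k+1) (n+1)) := by
    rw [Finset.disjoint_left]
    intro x hx hx2
    simp only [Finset.mem_range] at hx
    simp only [Finset.mem_Ico] at hx2
    omega
  rw [hsplit, Finset.prod_union hdisj]
  have hA : ∏ j ∈ Finset.range k, ((j:ℤ) - k) = (-1)^k * ((k ! : ℕ) : ℤ) := by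
    calc ∏ j ∈ Finset.range k, ((j:ℤ) - k)
        = ∏ j ∈ Finset.range k, ((-1) * ((k:ℤ) - j)) :=
          Finset.prod_congr rfl fun _ _ => by ring
      _ = (-1)^k * ∏ j ∈ Finset.range k, ((k:ℤ) - j) := by
          rw [Finset.prod_mul_distrib, Finset.prod_const, Finset.card_range]
      _ = (-1)^k * ((k ! : ℕ) : ℤ) := by
          congr 1
          have hcast : ∏ j ∈ Finset.range k, ((k:ℤ) - j)
              = ((∏ j ∈ Finset.range k, (k - j) : ℕ) : ℤ) := by
            rw [Nat.cast_prod]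
            exact Finset.prod_congr rfl fun j hj => by
              have := Finset.mem_range.mp hj
              omega
          rw [hcast, ← Nat.descFactorial_eq_prod_range, Nat.descFactorial_self]
  have hB : ∏ j ∈ Finset.Ico (k+1) (n+1), ((j:ℤ) - k) = (((n-k)! : ℕ) : ℤ) := by
    rw [Finset.prod_Ico_eq_prod_range, show n+1-(k+1) = n - k by omega]
    calc ∏ i ∈ Finset.range (n-k), (((k+1+i : ℕ):ℤ) - k)
        = ((∏ i ∈ Finset.range (n-k), (i+1) : ℕ) : ℤ) := by
          rw [Nat.cast_prod]
          exact Finset.prod_congr rfl fun i _ => by push_cast; ring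
      _ = (((n-k)! : ℕ) : ℤ) := by rw [Finset.prod_range_add_one_eq_factorial]
  rw [hA, hB]
  push_cast
  ring

lemma w_decomp (a b : ℤ) (tn : ℕ) (u : ℕ → ℤ)
    (hu : ∀ k, u k = a * k * (k + (tn:ℤ)) + b) (n k : ℕ) (hk : k ≤ n) :
    ∏ j ∈ (Finset.range (n+1)).erase k, (u j - u k)
      = (-1)^k * a^n *
        ((k ! * (n-k)! * ∏ j ∈ (Finset.range (n+1)).erase k, (j + k + tn) : ℕ) : ℤ) := by
  have hcard : ((Finset.range (n+1)).erase k).card = n := by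
    rw [Finset.card_erase_of_mem (Finset.mem_range.mpr (Nat.lt_succ_of_le hk)),
      Finset.card_range]
    omega
  calc ∏ j ∈ (Finset.range (n+1)).erase k, (u j - u k)
      = ∏ j ∈ (Finset.range (n+1)).erase k, (a * (((j:ℤ) - k) * ((j:ℤ) + k + tn))) :=
        Finset.prod_congr rfl fun j _ => by rw [hu j, hu k]; push_cast; ring
    _ = a^n * ((∏ j ∈ (Finset.range (n+1)).erase k, ((j:ℤ) - k)) *
          (∏ j ∈ (Finset.range (n+1)).erase k, ((j:ℤ) + k + tn))) := by
        rw [Finset.prod_mul_distrib, Finset.prod_const, hcard, Finset.prod_mul_distrib]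
    _ = a^n * (((-1)^k * ((k ! * (n - k)! : ℕ) : ℤ)) *
          ((∏ j ∈ (Finset.range (n+1)).erase k, (j + k + tn) : ℕ) : ℤ)) := by
        rw [P1_eq n k hk]
        congr 2
        rw [Nat.cast_prod]
        exact Finset.prod_congr rfl fun j _ => by push_cast; ring
    _ = (-1)^k * a^n *
        ((k ! * (n-k)! * ∏ j ∈ (Finset.range (n+1)).erase k, (j + k + tn) : ℕ) : ℤ) := by
        push_cast
        ring

lemma w_dvd (a b : ℤ) (tn : ℕ) (u : ℕ → ℤ)
    (hu : ∀ k, u k = a * k * (k + (tn:ℤ)) + b) (n k : ℕ) (hk : k ≤ n) (Dnat : ℕ)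
    (hdvd : k ! * (n-k)! * ∏ j ∈ (Finset.range (n+1)).erase k, (j + k + tn) ∣ Dnat) :
    ∏ j ∈ (Finset.range (n+1)).erase k, (u j - u k) ∣ a^n * (Dnat : ℤ) := by
  obtain ⟨c, hc⟩ := hdvd
  refine ⟨(-1)^k * (c:ℤ), ?_⟩
  rw [w_decomp a b tn u hu n k hk, hc]
  have hsq : ((-1:ℤ)^k) * ((-1:ℤ)^k) = 1 := by
    rw [← pow_add]; exact Even.neg_one_pow ⟨k, rfl⟩
  set N : ℤ := ((k ! * (n-k)! * ∏ j ∈ (Finset.range (n+1)).erase k, (j + k + tn) : ℕ) : ℤ)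
    with hN
  rw [Nat.cast_mul, ← hN]
  linear_combination (-(a^n * N * (c:ℤ))) * hsq

theorem stmt_16 (a t b : ℤ) (ha : 1 ≤ a) (ht : 0 ≤ t) (hab : IsCoprime a b)
    (u : ℕ → ℤ) (hu : ∀ k, u k = a * k * (k + t) + b)
    (n : ℕ) (hn : 1 ≤ n) (hne : ∀ k ≤ n, u k ≠ 0) :
    (t = 0 →
      ∃ c : ℤ, (((Finset.range (n + 1)).lcm u : ℤ) : ℚ) =
        c * (2 * ∏ i ∈ Finset.range (n + 1), (u i : ℚ)) / (Nat.factorial (2 * n) : ℚ)) ∧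
    (1 ≤ t →
      ∃ c : ℤ, (((Finset.range (n + 1)).lcm u : ℤ) : ℚ) =
        c * (Nat.factorial (t - 1).toNat : ℚ) * (∏ i ∈ Finset.range (n + 1), (u i : ℚ)) /
          (Nat.factorial (2 * n + t.toNat) : ℚ)) := by
  obtain ⟨tn, rfl⟩ : ∃ tn : ℕ, t = (tn : ℤ) := ⟨t.toNat, (Int.toNat_of_nonneg ht).symm⟩
  set s : Finset ℕ := Finset.range (n+1) with hsdef
  have hs : s.Nonempty := ⟨0, Finset.mem_range.mpr (by omega)⟩
  have hune : ∀ k ∈ s, u k ≠ 0 := fun k hk => hne k (by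
    have := Finset.mem_range.mp hk; omega)
  have ha0 : a ≠ 0 := by omega
  have hwne : ∀ k ∈ s, ∀ j ∈ s.erase k, u j ≠ u k := by
    intro k hk j hj
    have hjk : j ≠ k := (Finset.mem_erase.mp hj).1
    have hfac : u j - u k = a * ((j:ℤ) - k) * ((j:ℤ) + k + tn) := by
      rw [hu j, hu k]; push_cast; ring
    have hnz : u j - u k ≠ 0 := by
      rw [hfac]
      have h1 : ((j:ℤ) - k) ≠ 0 := by omega
      have h2 : ((j:ℤ) + k + tn) ≠ 0 := by omega
      exact mul_ne_zero (mul_ne_zero ha0 h1) h2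
    exact fun hc => hnz (by rw [hc]; ring)
  have hcop : IsCoprime (a ^ n) (∏ i ∈ s, u i) := by
    apply IsCoprime.pow_left
    apply IsCoprime.prod_right
    intro i _
    have h : u i = b + a * (i * (i + tn)) := by rw [hu i]; push_cast; ring
    rw [h]
    exact hab.add_mul_left_right _
  have hAcast : ((∏ i ∈ s, u i : ℤ) : ℚ) = ∏ i ∈ s, ((u i : ℤ) : ℚ) := by push_cast; rfl
  constructor
  · intro ht0
    have htn0 : tn = 0 := by exact_mod_cast ht0
    subst htn0
    set Dnat : ℕ := (2*n)! / 2 with hD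
    have h2D : 2 * Dnat = (2*n)! :=
      Nat.mul_div_cancel' (Nat.dvd_factorial (by omega) (by omega))
    have hw : ∀ k ∈ s, (∏ j ∈ s.erase k, (u j - u k)) ∣ a ^ n * (Dnat:ℤ) := by
      intro k hk
      have hk' : k ≤ n := by have := Finset.mem_range.mp hk; omega
      apply w_dvd a b 0 u hu n k hk' Dnat
      have h1 := divz n k hn hk'
      rw [← h2D] at h1
      exact (Nat.mul_dvd_mul_iff_left (by norm_num : (0:ℕ) < 2)).mp h1
    obtain ⟨c, hc⟩ := core u s hs hune a (Dnat:ℤ) n hcop hw hwne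
    refine ⟨c, ?_⟩
    have hcq : ((s.lcm u : ℤ):ℚ) * (Dnat:ℚ) = (c:ℚ) * ∏ i ∈ s, ((u i : ℤ) : ℚ) := by
      rw [← hAcast]; exact_mod_cast hc
    have hfq : (2:ℚ) * (Dnat:ℚ) = ((2*n)! : ℚ) := by exact_mod_cast h2D
    have hfne : (((2*n)! : ℕ) : ℚ) ≠ 0 := Nat.cast_ne_zero.mpr (Nat.factorial_ne_zero _)
    rw [eq_div_iff hfne]
    linear_combination (-(((s.lcm u : ℤ):ℚ))) * hfq + 2 * hcq
  · intro ht1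
    have htn1 : 1 ≤ tn := by exact_mod_cast ht1
    set Dnat : ℕ := ∏ i ∈ Finset.range (2*n+1), (tn + i) with hD
    have hfacD : (tn - 1)! * Dnat = (2*n + tn)! := by
      obtain ⟨tm, rfl⟩ : ∃ tm, tn = tm + 1 := ⟨tn - 1, by omega⟩
      have h1 := Nat.factorial_mul_ascFactorial tm (2*n+1)
      rw [hD, prod_shift_eq_asc]
      simp only [Nat.add_sub_cancel]
      rw [h1]
      congr 1
      omega
    have hw : ∀ k ∈ s, (∏ j ∈ s.erase k, (u j - u k)) ∣ a ^ n * (Dnat:ℤ) := by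
      intro k hk
      have hk' : k ≤ n := by have := Finset.mem_range.mp hk; omega
      exact w_dvd a b tn u hu n k hk' Dnat (div_main tn n k hk')
    obtain ⟨c, hc⟩ := core u s hs hune a (Dnat:ℤ) n hcop hw hwne
    refine ⟨c, ?_⟩
    have e1 : ((tn:ℤ) - 1).toNat = tn - 1 := by omega
    have e2 : ((tn:ℤ)).toNat = tn := by omega
    rw [e1, e2]
    have hcq : ((s.lcm u : ℤ):ℚ) * (Dnat:ℚ) = (c:ℚ) * ∏ i ∈ s, ((u i : ℤ) : ℚ) := by
      rw [← hAcast]; exact_mod_cast hc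
    have hfq : (((tn-1)! : ℕ) : ℚ) * (Dnat:ℚ) = (((2*n+tn)! : ℕ) : ℚ) := by
      exact_mod_cast hfacD
    have hfne : (((2*n+tn)! : ℕ) : ℚ) ≠ 0 := Nat.cast_ne_zero.mpr (Nat.factorial_ne_zero _)
    rw [eq_div_iff hfne]
    linear_combination (-(((s.lcm u : ℤ):ℚ))) * hfq + (((tn-1)! : ℕ) : ℚ) * hcq
end

section
/- For every nonnegative integer k and positive integer n, the integer n·C(n+k, k) divides lcm{n, n+1, ..., n+k}; moreover if n·(n+k) ≡ 0 (mod k!), then lcm{n, n+1, ..., n+k} = n·C(n+k, k). -/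
open Finset Nat

lemma kummer_choose {p : ℕ} (hp : p.Prime) (n k : ℕ) :
    ((n + k).choose k).factorization p =
      #{i ∈ Finset.Ico 1 (Nat.log p (n + k) + 1) | p ^ i ≤ k % p ^ i + n % p ^ i} := by
  rw [← Nat.multiplicity_eq_factorization hp (Nat.choose_pos (Nat.le_add_left k n)).ne']
  exact multiplicity_eq_of_emultiplicity_eq_some
    (hp.emultiplicity_choose' (Nat.lt_succ_self _))

lemma mod_add_mod_eq {q x y : ℕ} (hq : 0 < q) (hdvd : q ∣ x + y) (hx : ¬ q ∣ x) :
    x % q + y % q = q := by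
  have h0 : (x % q + y % q) % q = 0 := by
    rw [← Nat.add_mod]; exact Nat.mod_eq_zero_of_dvd hdvd
  have h1 : q ∣ (x % q + y % q) := Nat.dvd_of_mod_eq_zero h0
  have hx' : x % q ≠ 0 := fun h => hx (Nat.dvd_of_mod_eq_zero h)
  have h2 : x % q < q := Nat.mod_lt _ hq
  have h3 : y % q < q := Nat.mod_lt _ hq
  obtain ⟨c, hc⟩ := h1
  rcases Nat.lt_or_ge c 2 with h | h
  · interval_cases c <;> omega
  · nlinarith

/-- Part 1 per-prime: some element of the window has valuation ≥ v_p(n * C(n+k,k)). -/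
lemma key1 {p : ℕ} (hp : p.Prime) {k n : ℕ} (hn : 1 ≤ n) :
    ∃ m ∈ Finset.Icc n (n + k),
      n.factorization p + ((n + k).choose k).factorization p ≤ m.factorization p := by
  set b := n.factorization p with hb
  set A := Finset.Icc n (n + k) with hA
  have hAne : A.Nonempty := ⟨n, by simp [hA]⟩
  obtain ⟨m0, hm0A, hm0⟩ := Finset.exists_mem_eq_sup A hAne (fun m => m.factorization p)
  set a := A.sup (fun m => m.factorization p) with ha
  refine ⟨m0, hm0A, ?_⟩
  rw [← hm0, kummer_choose hp n k]
  have hba : b ≤ a := Finset.le_sup (f := fun m => m.factorization p)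
    (show n ∈ A from Finset.mem_Icc.2 (by omega))
  have hsub : ({i ∈ Finset.Ico 1 (Nat.log p (n + k) + 1) | p ^ i ≤ k % p ^ i + n % p ^ i})
      ⊆ Finset.Ioc b a := by
    intro i hi
    simp only [Finset.mem_filter, Finset.mem_Ico] at hi
    obtain ⟨⟨hi1, _⟩, hcarry⟩ := hi
    have hqpos : 0 < p ^ i := pow_pos hp.pos _
    have hnm : n % p ^ i ≠ 0 := by
      have := Nat.mod_lt k hqpos
      omega
    have hbi : b < i := by
      by_contra hcon
      push_neg at hcon
      have : p ^ i ∣ n := (Nat.Prime.pow_dvd_iff_le_factorization hp (by omega)).2 hcon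
      exact hnm (Nat.mod_eq_zero_of_dvd this)
    -- witness element
    set m := n + (p ^ i - n % p ^ i) with hm
    have hdvd : p ^ i ∣ m := by
      have := Nat.div_add_mod n (p ^ i)
      have hmlt : n % p ^ i < p ^ i := Nat.mod_lt _ hqpos
      refine ⟨n / p ^ i + 1, ?_⟩
      rw [Nat.mul_add, Nat.mul_one]
      omega
    have hmA : m ∈ A := by
      simp only [hA, Finset.mem_Icc]
      have : k % p ^ i ≤ k := Nat.mod_le _ _
      omega
    have : i ≤ m.factorization p :=
      (Nat.Prime.pow_dvd_iff_le_factorization hp (by simp [hm]; omega)).1 hdvd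
    have : i ≤ a := le_trans this (Finset.le_sup (f := fun m => m.factorization p) hmA)
    simp only [Finset.mem_Ioc]
    exact ⟨hbi, this⟩
  have := Finset.card_le_card hsub
  rw [Nat.card_Ioc] at this
  omega

/-- Part 2 per-prime. -/
lemma key2 {p : ℕ} (hp : p.Prime) {k n j : ℕ} (hn : 1 ≤ n) (hj : j ≤ k)
    (hyp : Nat.factorial k ∣ n * (n + k)) :
    (n + j).factorization p ≤ n.factorization p + ((n + k).choose k).factorization p := by
  set b := n.factorization p with hb
  set a := (n + j).factorization p with ha
  by_cases hab : a ≤ b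
  · omega
  push_neg at hab
  have hj1 : 1 ≤ j := by
    rcases Nat.eq_zero_or_pos j with h | h
    · exfalso; rw [h, Nat.add_zero] at ha; omega
    · exact h
  rw [kummer_choose hp n k]
  have hsub : Finset.Ioc b a ⊆
      ({i ∈ Finset.Ico 1 (Nat.log p (n + k) + 1) | p ^ i ≤ k % p ^ i + n % p ^ i}) := by
    intro i hi
    simp only [Finset.mem_Ioc] at hi
    obtain ⟨hbi, hia⟩ := hi
    have hqpos : 0 < p ^ i := pow_pos hp.pos _
    have hpij : p ^ i ∣ n + j :=
      (Nat.Prime.pow_dvd_iff_le_factorization hp (by omega)).2 hia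
    have hpn : ¬ p ^ i ∣ n := fun h =>
      absurd ((Nat.Prime.pow_dvd_iff_le_factorization hp (by omega)).1 h) (by omega)
    have hmem : i ∈ Finset.Ico 1 (Nat.log p (n + k) + 1) := by
      simp only [Finset.mem_Ico]
      have hle : p ^ i ≤ n + k := le_trans (Nat.le_of_dvd (by omega) hpij) (by omega)
      have := (Nat.le_log_iff_pow_le hp.one_lt (by omega)).2 hle
      omega
    simp only [Finset.mem_filter]
    refine ⟨hmem, ?_⟩
    by_cases hd : p ^ i ∣ k - j
    · -- p^i ∣ n + k
      have hdvd : p ^ i ∣ n + k := by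
        have := Nat.dvd_add hpij hd
        rwa [show n + j + (k - j) = n + k by omega] at this
      have := mod_add_mod_eq hqpos hdvd hpn
      omega
    · have hjk : j < k := by
        rcases Nat.lt_or_ge j k with h | h
        · exact h
        · exfalso; apply hd; have : k - j = 0 := by omega
          simp [this]
      have hpj : ¬ p ^ i ∣ j := fun h => hpn (by
        have := Nat.dvd_sub hpij h
        rwa [show n + j - j = n by omega] at this)
      have hjq : j % p ^ i + n % p ^ i = p ^ i :=
        mod_add_mod_eq hqpos (by rw [Nat.add_comm]; exact hpij) hpj
      suffices hk2 : j % p ^ i ≤ k % p ^ i by omega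
      -- show v_p(choose k j) = 0
      have hC : (k.choose j).factorization p = 0 := by
        set d := (n + k).factorization p with hd2
        have hdi : d < i := by
          by_contra hcon
          push_neg at hcon
          have h1 : p ^ i ∣ n + k :=
            (Nat.Prime.pow_dvd_iff_le_factorization hp (by omega)).2 hcon
          exact hd (by
            have := Nat.dvd_sub h1 hpij
            rwa [show n + k - (n + j) = k - j by omega] at this)
        have hpb : p ^ b ∣ j := by
          have h1 : p ^ b ∣ n := Nat.ordProj_dvd n p
          have h2 : p ^ b ∣ n + j :=
            (Nat.Prime.pow_dvd_iff_le_factorization hp (by omega)).2 (by omega)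
          have := Nat.dvd_sub h2 h1
          rwa [show n + j - n = j by omega] at this
        have hpd : p ^ d ∣ k - j := by
          have h1 : p ^ d ∣ n + k := Nat.ordProj_dvd _ p
          have h2 : p ^ d ∣ n + j :=
            (Nat.Prime.pow_dvd_iff_le_factorization hp (by omega)).2 (by omega)
          have := Nat.dvd_sub h1 h2
          rwa [show n + k - (n + j) = k - j by omega] at this
        have hJ : b ≤ (j !).factorization p :=
          (Nat.Prime.pow_dvd_iff_le_factorization hp (Nat.factorial_pos j).ne').1
            (hpb.trans (Nat.dvd_factorial (by omega) le_rfl))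
        have hK : d ≤ ((k - j)!).factorization p :=
          (Nat.Prime.pow_dvd_iff_le_factorization hp (Nat.factorial_pos _).ne').1
            (hpd.trans (Nat.dvd_factorial (by omega) le_rfl))
        have hfacid : k ! = k.choose j * (j ! * (k - j)!) := by
          rw [← mul_assoc]
          exact (Nat.choose_mul_factorial_mul_factorial hj).symm
        have hfle : (k !).factorization p ≤ b + d := by
          have h1 := (Nat.factorization_le_iff_dvd (Nat.factorial_pos k).ne'
            (by positivity)).2 hyp
          have h2 := h1 p
          rwa [Nat.factorization_mul (by omega) (by omega), Finsupp.add_apply] at h2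
        have hfeq : (k !).factorization p =
            (k.choose j).factorization p + ((j !).factorization p +
              ((k - j)!).factorization p) := by
          rw [hfacid, Nat.factorization_mul (Nat.choose_pos hj).ne'
              (by positivity), Nat.factorization_mul (Nat.factorial_pos j).ne'
              (Nat.factorial_pos _).ne']
          simp
        omega
      -- no carry at level i in j + (k - j)
      by_contra hcon
      push_neg at hcon
      have hcarry : p ^ i ≤ j % p ^ i + (k - j) % p ^ i := by
        by_contra hc2
        push_neg at hc2
        have hkmod : k % p ^ i = j % p ^ i + (k - j) % p ^ i := by
          conv_lhs => rw [show k = j + (k - j) by omega]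
          rw [Nat.add_mod]
          exact Nat.mod_eq_of_lt hc2
        omega
      have hple : p ^ i ≤ k := by
        have h1 : j % p ^ i ≤ j := Nat.mod_le _ _
        have h2 : (k - j) % p ^ i ≤ k - j := Nat.mod_le _ _
        omega
      have hkummer := kummer_choose hp (k - j) j
      rw [show k - j + j = k by omega] at hkummer
      rw [hC] at hkummer
      have hiset : i ∈ ({i ∈ Finset.Ico 1 (Nat.log p k + 1) |
          p ^ i ≤ j % p ^ i + (k - j) % p ^ i}) := by
        simp only [Finset.mem_filter, Finset.mem_Ico]
        refine ⟨⟨by omega, ?_⟩, hcarry⟩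
        have := (Nat.le_log_iff_pow_le hp.one_lt (by omega)).2 hple
        omega
      rw [eq_comm, Finset.card_eq_zero] at hkummer
      rw [hkummer] at hiset
      exact absurd hiset (Finset.notMem_empty i)
  have hcard := Finset.card_le_card hsub
  rw [Nat.card_Ioc] at hcard
  omega

theorem stmt_18 (k n : ℕ) (hn : 1 ≤ n) :
    n * (n + k).choose k ∣ (Finset.Icc n (n + k)).lcm id ∧
    (Nat.factorial k ∣ n * (n + k) →
      (Finset.Icc n (n + k)).lcm id = n * (n + k).choose k) := by
  have hC0 : n * (n + k).choose k ≠ 0 :=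
    Nat.mul_ne_zero (by omega) (Nat.choose_pos (Nat.le_add_left k n)).ne'
  have hL0 : (Finset.Icc n (n + k)).lcm id ≠ 0 := by
    rw [Ne, Finset.lcm_eq_zero_iff]
    rintro ⟨x, hx, hx0⟩
    simp only [Finset.mem_coe, Finset.mem_Icc] at hx
    simp only [id] at hx0
    omega
  have part1 : n * (n + k).choose k ∣ (Finset.Icc n (n + k)).lcm id := by
    rw [← Nat.factorization_le_iff_dvd hC0 hL0, Finsupp.le_def]
    intro p
    by_cases hp : p.Prime
    · obtain ⟨m, hmA, hm⟩ := key1 hp (k := k) hn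
      have hmn : n ≤ m := (Finset.mem_Icc.1 hmA).1
      have hm_dvd : m ∣ (Finset.Icc n (n + k)).lcm id := Finset.dvd_lcm hmA
      have h2 : m.factorization p ≤ ((Finset.Icc n (n + k)).lcm id).factorization p :=
        (Nat.factorization_le_iff_dvd (by omega) hL0).2 hm_dvd p
      rw [Nat.factorization_mul (by omega) (Nat.choose_pos (Nat.le_add_left k n)).ne',
        Finsupp.add_apply]
      exact le_trans hm h2
    · simp [Nat.factorization_eq_zero_of_not_prime _ hp]
  refine ⟨part1, fun hyp => ?_⟩
  refine Nat.dvd_antisymm ?_ part1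
  apply Finset.lcm_dvd
  intro m hmA
  rw [Finset.mem_Icc] at hmA
  simp only [id]
  rw [← Nat.factorization_le_iff_dvd (by omega) hC0, Finsupp.le_def]
  intro p
  by_cases hp : p.Prime
  · have h1 := key2 hp hn (j := m - n) (show m - n ≤ k by omega) hyp
    rw [show n + (m - n) = m by omega] at h1
    rw [Nat.factorization_mul (by omega) (Nat.choose_pos (Nat.le_add_left k n)).ne',
      Finsupp.add_apply]
    exact h1
  · simp [Nat.factorization_eq_zero_of_not_prime _ hp]
end

section
/- For every nonnegative integer k and positive integer n, lcm{n, n+1, ..., n+k} divides n·C(n+k,k)·lcm{C(k,0), C(k,1), ..., C(k,k)}; moreover if n + k + 1 ≡ 0 (mod k!), then lcm{n, n+1, ..., n+k} = n·C(n+k,k)·lcm{C(k,0), ..., C(k,k)}. -/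
open Finset Nat

lemma key_id (n k i : ℕ) (hn : 1 ≤ n) (hik : i ≤ k) :
    n * (n + k).choose k * k.choose i
      = (n + i) * ((n + k).choose (k - i) * (n + i - 1).choose i) := by
  have hM : 0 < (n - 1)! * (i ! * (k - i)!) := by positivity
  apply Nat.eq_of_mul_eq_mul_right hM
  have h1 : (n + k).choose k * k ! * n ! = (n + k)! := by
    have := Nat.choose_mul_factorial_mul_factorial (show k ≤ n + k by omega)
    simpa using this
  have h2 : k.choose i * i ! * (k - i)! = k ! :=
    Nat.choose_mul_factorial_mul_factorial hik
  have h3 : (n + k).choose (k - i) * (k - i)! * (n + i)! = (n + k)! := by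
    have := Nat.choose_mul_factorial_mul_factorial (show k - i ≤ n + k by omega)
    have e : n + k - (k - i) = n + i := by omega
    rwa [e] at this
  have h4 : (n + i - 1).choose i * i ! * (n - 1)! = (n + i - 1)! := by
    have := Nat.choose_mul_factorial_mul_factorial (show i ≤ n + i - 1 by omega)
    have e : n + i - 1 - i = n - 1 := by omega
    rwa [e] at this
  have h5 : n * (n - 1)! = n ! := Nat.mul_factorial_pred (by omega)
  have h6 : (n + i) * (n + i - 1)! = (n + i)! := Nat.mul_factorial_pred (by omega)
  calc n * (n + k).choose k * k.choose i * ((n - 1)! * (i ! * (k - i)!))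
      = ((n + k).choose k * (k.choose i * i ! * (k - i)!)) * (n * (n - 1)!) := by ring
    _ = (n + k)! := by rw [h2, h5, ← h1]
    _ = ((n + k).choose (k - i) * (k - i)!) * ((n + i) * ((n + i - 1).choose i * i ! * (n - 1)!)) := by
        rw [h4, h6, ← h3]
    _ = (n + i) * ((n + k).choose (k - i) * (n + i - 1).choose i) * ((n - 1)! * (i ! * (k - i)!)) := by
        ring

lemma part1 (k n : ℕ) (hn : 1 ≤ n) :
    (Finset.Icc n (n + k)).lcm id ∣
      n * (n + k).choose k * (Finset.range (k + 1)).lcm (fun j => k.choose j) := by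
  apply Finset.lcm_dvd
  intro x hx
  rw [Finset.mem_Icc] at hx
  set i := x - n with hi
  have hik : i ≤ k := by omega
  have hx' : x = n + i := by omega
  have h1 : (n + i) ∣ n * (n + k).choose k * k.choose i :=
    ⟨(n + k).choose (k - i) * (n + i - 1).choose i, key_id n k i hn hik⟩
  have h2 : k.choose i ∣ (Finset.range (k + 1)).lcm (fun j => k.choose j) :=
    Finset.dvd_lcm (by simp; omega)
  calc (id x : ℕ) = n + i := hx'
    _ ∣ n * (n + k).choose k * k.choose i := h1
    _ ∣ n * (n + k).choose k * (Finset.range (k + 1)).lcm (fun j => k.choose j) :=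
        Nat.mul_dvd_mul_left _ h2

lemma mod_of_dvd_succ {q k : ℕ} (h2 : 2 ≤ q) (h : q ∣ k + 1) : k % q = q - 1 := by
  obtain ⟨m, hm⟩ := h
  rcases m with _ | m'
  · omega
  · have hk : k = q * m' + (q - 1) := by
      have : q * (m' + 1) = q * m' + q := by ring
      omega
    rw [hk, Nat.mul_add_mod]
    exact Nat.mod_eq_of_lt (by omega)

lemma add_div_exact {x y q : ℕ} (hq : 0 < q) (h : (x + y) % q = q - 1) :
    (x + y) / q = x / q + y / q := by
  rw [Nat.add_div hq]
  have h1 : (x % q + y % q) % q = (x + y) % q := (Nat.add_mod x y q).symm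
  have hx := Nat.mod_lt x hq
  have hy := Nat.mod_lt y hq
  have : ¬ (q ≤ x % q + y % q) := by
    intro hle
    have : (x % q + y % q) % q = x % q + y % q - q := by
      rw [Nat.mod_eq_sub_mod hle, Nat.mod_eq_of_lt (by omega)]
    omega
  simp [this]

lemma div_window_of_dvd_N {n k q : ℕ} (hn : 1 ≤ n) (h2 : 2 ≤ q) (h : q ∣ n + k + 1) :
    (n + k) / q = (n - 1) / q + (k + 1) / q := by
  have he : n - 1 + (k + 1) = n + k := by omega
  have hm : (n - 1 + (k + 1)) % q = q - 1 := by
    rw [he]; exact mod_of_dvd_succ h2 h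
  have := add_div_exact (by omega) hm
  rwa [he] at this

lemma div_window_of_dvd_k {n k q : ℕ} (hn : 1 ≤ n) (hq : 0 < q) (h : q ∣ k + 1) :
    (n + k) / q = (n - 1) / q + (k + 1) / q := by
  obtain ⟨m, hm⟩ := h
  have he : n + k = n - 1 + q * m := by omega
  rw [he, Nat.add_mul_div_left _ _ hq, hm, Nat.mul_div_cancel_left _ hq]

lemma count_dvd_Icc {n k q : ℕ} (hn : 1 ≤ n) (hq : 0 < q) :
    ((Finset.Icc n (n + k)).filter (fun x => q ∣ x)).card
      = (n + k) / q - (n - 1) / q := by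
  have h1 : Finset.Icc n (n + k) = Finset.Ioc (n - 1) (n + k) := by
    ext x; simp [Finset.mem_Icc, Finset.mem_Ioc]; omega
  have h2 : Finset.Ioc 0 (n - 1) ∪ Finset.Ioc (n - 1) (n + k) = Finset.Ioc 0 (n + k) :=
    Finset.Ioc_union_Ioc_eq_Ioc (by omega) (by omega)
  have h3 : Disjoint (Finset.Ioc 0 (n - 1)) (Finset.Ioc (n - 1) (n + k)) := by
    rw [Finset.disjoint_left]
    intro a ha hb
    simp [Finset.mem_Ioc] at ha hb
    omega
  have h4 := Nat.Ioc_filter_dvd_card_eq_div (n + k) q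
  have h5 := Nat.Ioc_filter_dvd_card_eq_div (n - 1) q
  have h6 : ((Finset.Ioc 0 (n - 1)).filter (fun x => q ∣ x)).card
      + ((Finset.Ioc (n - 1) (n + k)).filter (fun x => q ∣ x)).card
      = ((Finset.Ioc 0 (n + k)).filter (fun x => q ∣ x)).card := by
    rw [← h2, Finset.filter_union, Finset.card_union_of_disjoint
      (Finset.disjoint_filter_filter h3)]
  rw [h1]
  omega

lemma fact_factorization {p k b : ℕ} (hp : p.Prime) (h : Nat.log p k < b) :
    (k !).factorization p = ∑ i ∈ Finset.Ico 1 b, k / p ^ i := by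
  haveI := Fact.mk hp
  have h1 : (padicValNat p (k !) : ℕ∞) = emultiplicity p (k !) :=
    padicValNat_eq_emultiplicity (Nat.factorial_ne_zero k)
  rw [Nat.Prime.emultiplicity_factorial hp h] at h1
  rw [Nat.factorization_def _ hp]
  exact_mod_cast h1

lemma kummer_bound {p k j : ℕ} (hp : p.Prime) (hj : j ≤ k) :
    (k.choose j).factorization p + (k + 1).factorization p ≤ Nat.log p (k + 1) := by
  haveI := Fact.mk hp
  set c := (k + 1).factorization p with hc
  set A := Nat.log p (k + 1) with hA
  have hpc : p ^ c ∣ k + 1 := Nat.ordProj_dvd _ _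
  have hcA : c ≤ A := by
    rw [hA, Nat.le_log_iff_pow_le hp.one_lt (by omega)]
    exact Nat.le_of_dvd (by omega) hpc
  have hlog : Nat.log p k < A + 1 := by
    have := Nat.log_mono_right (show k ≤ k + 1 by omega) (b := p)
    omega
  have hch : k.choose j ≠ 0 := Nat.choose_pos hj |>.ne'
  have h1 : (padicValNat p (k.choose j) : ℕ∞) = emultiplicity p (k.choose j) :=
    padicValNat_eq_emultiplicity hch
  rw [Nat.Prime.emultiplicity_choose hp hj hlog] at h1
  have h2 : (k.choose j).factorization p
      = ((Finset.Ico 1 (A + 1)).filter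
          fun i => p ^ i ≤ j % p ^ i + (k - j) % p ^ i).card := by
    rw [Nat.factorization_def _ hp]
    exact_mod_cast h1
  have hsub : ((Finset.Ico 1 (A + 1)).filter
      fun i => p ^ i ≤ j % p ^ i + (k - j) % p ^ i) ⊆ Finset.Ico (c + 1) (A + 1) := by
    intro t ht
    rw [Finset.mem_filter, Finset.mem_Ico] at ht
    obtain ⟨⟨ht1, ht2⟩, hcond⟩ := ht
    rw [Finset.mem_Ico]
    refine ⟨?_, ht2⟩
    by_contra hct
    have htc : t ≤ c := by omega
    set q := p ^ t with hq
    have hq2 : 2 ≤ q := by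
      have := Nat.one_lt_pow (by omega) hp.one_lt (n := t)
      omega
    have hqd : q ∣ k + 1 := dvd_trans (pow_dvd_pow p htc) hpc
    have hkq : k % q = q - 1 := mod_of_dvd_succ hq2 hqd
    have hmod : (j % q + (k - j) % q) % q = k % q := by
      rw [← Nat.add_mod, Nat.add_sub_cancel' hj]
    have hj1 := Nat.mod_lt j (show 0 < q by omega)
    have hj2 := Nat.mod_lt (k - j) (show 0 < q by omega)
    have hint : (j % q + (k - j) % q) % q = j % q + (k - j) % q - q := by
      rw [Nat.mod_eq_sub_mod hcond, Nat.mod_eq_of_lt (by omega)]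
    omega
  have hcard := Finset.card_le_card hsub
  rw [Nat.card_Ico] at hcard
  omega

lemma lcm_factorization_le {ι : Type*} {s : Finset ι} {f : ι → ℕ} {p m : ℕ}
    (hf : ∀ i ∈ s, f i ≠ 0) (hb : ∀ i ∈ s, (f i).factorization p ≤ m) :
    (s.lcm f).factorization p ≤ m := by
  classical
  induction s using Finset.induction_on with
  | empty => simp
  | @insert a s ha ih =>
    rw [Finset.lcm_insert]
    have hfa : f a ≠ 0 := hf a (Finset.mem_insert_self a s)
    have hsl : s.lcm f ≠ 0 := by
      rw [Ne, Finset.lcm_eq_zero_iff]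
      rintro ⟨x, hx, hx0⟩
      exact hf x (Finset.mem_insert_of_mem hx) hx0
    rw [lcm_eq_nat_lcm, Nat.factorization_lcm hfa hsl]
    have h1 : (f a).factorization p ≤ m := hb a (Finset.mem_insert_self a s)
    have h2 : (s.lcm f).factorization p ≤ m :=
      ih (fun i hi => hf i (Finset.mem_insert_of_mem hi))
        (fun i hi => hb i (Finset.mem_insert_of_mem hi))
    simp only [Finsupp.sup_apply]
    exact sup_le h1 h2

lemma prod_Icc_eq (n k : ℕ) (hn : 1 ≤ n) :
    n * (n + k).choose k * k ! * (n - 1)! = (∏ x ∈ Finset.Icc n (n + k), x) * (n - 1)! := by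
  have hL : n * (n + k).choose k * k ! * (n - 1)! = (n + k)! := by
    have h1 : (n + k).choose k * k ! * n ! = (n + k)! := by
      have := Nat.choose_mul_factorial_mul_factorial (show k ≤ n + k by omega)
      simpa using this
    have h5 : n * (n - 1)! = n ! := Nat.mul_factorial_pred (by omega)
    calc n * (n + k).choose k * k ! * (n - 1)!
        = (n + k).choose k * k ! * (n * (n - 1)!) := by ring
      _ = (n + k)! := by rw [h5, h1]
  have hIcc : Finset.Icc n (n + k) = Finset.Ico n (n + k + 1) := by
    ext x; simp [Finset.mem_Icc, Finset.mem_Ico]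
  have hR : (∏ x ∈ Finset.Icc n (n + k), x) * (n - 1)! = (n + k)! := by
    rw [hIcc, ← Finset.prod_Ico_id_eq_factorial (n - 1),
      ← Finset.prod_Ico_id_eq_factorial (n + k)]
    have hsplit := Finset.prod_Ico_consecutive (fun x => x)
      (show 1 ≤ n by omega) (show n ≤ n + k + 1 by omega)
    have e : n - 1 + 1 = n := by omega
    rw [e]
    rw [mul_comm, hsplit]
  rw [hL, hR]

lemma prod_Icc_eq' (n k : ℕ) (hn : 1 ≤ n) :
    n * (n + k).choose k * k ! = ∏ x ∈ Finset.Icc n (n + k), x :=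
  Nat.eq_of_mul_eq_mul_right (Nat.factorial_pos _) (prod_Icc_eq n k hn)

lemma main_ineq_s19 {p n k : ℕ} (hp : p.Prime) (hn : 1 ≤ n) (hdvd : k ! ∣ n + k + 1) :
    (n * (n + k).choose k * (Finset.range (k + 1)).lcm (fun j => k.choose j)).factorization p
      ≤ ((Finset.Icc n (n + k)).lcm id).factorization p := by
  classical
  set L := (Finset.range (k + 1)).lcm (fun j => k.choose j) with hLdef
  set W := Finset.Icc n (n + k) with hWdef
  have hW0 : ∀ x ∈ W, x ≠ 0 := by
    intro x hx; rw [hWdef, Finset.mem_Icc] at hx; omega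
  have hWlcm0 : W.lcm id ≠ 0 := by
    rw [Ne, Finset.lcm_eq_zero_iff]
    simp only [Set.mem_image, Finset.mem_coe, id_eq]
    rintro ⟨x, hx, hx0⟩
    exact hW0 x hx hx0
  have hL0 : L ≠ 0 := by
    rw [hLdef, Ne, Finset.lcm_eq_zero_iff]
    simp only [Set.mem_image, Finset.mem_coe, Finset.mem_range]
    rintro ⟨j, hj, hj0⟩
    exact (Nat.choose_pos (show j ≤ k by omega)).ne' hj0
  set A := Nat.log p (k + 1) with hA
  set c := (k + 1).factorization p with hc
  set b := (k !).factorization p with hb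
  set vL := L.factorization p with hvL
  have hcA : c ≤ A := by
    have := kummer_bound (k := k) (j := 0) (p := p) hp (Nat.zero_le k)
    simpa using this
  have hvLA : vL + c ≤ A := by
    have h1 : vL ≤ A - c := by
      apply lcm_factorization_le
      · intro j hj
        rw [Finset.mem_range] at hj
        exact (Nat.choose_pos (show j ≤ k by omega)).ne'
      · intro j hj
        rw [Finset.mem_range] at hj
        have := kummer_bound (p := p) hp (show j ≤ k by omega)
        omega
    omega
  obtain ⟨xm, hxm, hmax⟩ := Finset.exists_max_image W (fun x => x.factorization p)
    ⟨n, by rw [hWdef, Finset.mem_Icc]; omega⟩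
  set M := xm.factorization p with hM
  have hlcm_ge : M ≤ (W.lcm id).factorization p := by
    have hsub := (Nat.factorization_le_iff_dvd (hW0 xm hxm) hWlcm0).2
      (Finset.dvd_lcm (f := id) hxm)
    exact hsub p
  have hn0 : n ≠ 0 := by omega
  have hC0 : (n + k).choose k ≠ 0 := (Nat.choose_pos (by omega)).ne'
  have hRHS : (n * (n + k).choose k * L).factorization p
      = n.factorization p + ((n + k).choose k).factorization p + vL := by
    rw [Nat.factorization_mul (mul_ne_zero hn0 hC0) hL0, Nat.factorization_mul hn0 hC0]
    simp [hvL]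
  rw [hRHS]
  have hidentity : n.factorization p + ((n + k).choose k).factorization p + b
      = ∑ x ∈ W, x.factorization p := by
    have h := prod_Icc_eq' n k hn
    have h2 : (n * (n + k).choose k * k !).factorization p
        = (∏ x ∈ W, x).factorization p := by rw [h, hWdef]
    rw [Nat.factorization_mul (mul_ne_zero hn0 hC0) (Nat.factorial_ne_zero k),
      Nat.factorization_mul hn0 hC0, Nat.factorization_prod hW0] at h2
    simpa using h2
  set S := ∑ x ∈ W, x.factorization p with hS
  have hswap : S = ∑ t ∈ Finset.Ico 1 (M + 1), (W.filter (fun x => p ^ t ∣ x)).card := by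
    have step1 : ∀ x ∈ W,
        x.factorization p = ((Finset.Ico 1 (M + 1)).filter (fun t => p ^ t ∣ x)).card := by
      intro x hx
      have hx0 := hW0 x hx
      have hxM : x.factorization p ≤ M := hmax x hx
      have hfil : (Finset.Ico 1 (M + 1)).filter (fun t => p ^ t ∣ x)
          = Finset.Icc 1 (x.factorization p) := by
        ext t
        simp only [Finset.mem_filter, Finset.mem_Ico, Finset.mem_Icc]
        rw [hp.pow_dvd_iff_le_factorization hx0]
        omega
      rw [hfil, Nat.card_Icc]
      omega
    rw [hS, Finset.sum_congr rfl step1]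
    simp only [Finset.card_filter]
    exact Finset.sum_comm
  have hcount : ∀ t, (W.filter (fun x => p ^ t ∣ x)).card
      = (n + k) / p ^ t - (n - 1) / p ^ t := by
    intro t
    rw [hWdef]
    exact count_dvd_Icc hn (pow_pos hp.pos t)
  have hMA : A ≤ M := by
    rcases Nat.eq_zero_or_pos A with h0 | hApos
    · omega
    · have hqle : p ^ A ≤ k + 1 := Nat.pow_log_le_self p (by omega)
      have h1 : (n - 1) / p ^ A + 1 = (n - 1 + p ^ A) / p ^ A :=
        (Nat.add_div_right _ (pow_pos hp.pos A)).symm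
      have h2 : (n - 1 + p ^ A) / p ^ A ≤ (n + k) / p ^ A :=
        Nat.div_le_div_right (by omega)
      have hcard : 1 ≤ (W.filter (fun x => p ^ A ∣ x)).card := by
        rw [hcount A]; omega
      have hpos : 0 < (W.filter (fun x => p ^ A ∣ x)).card := by omega
      obtain ⟨x, hx⟩ := Finset.card_pos.1 hpos
      rw [Finset.mem_filter] at hx
      have hxv : A ≤ x.factorization p :=
        (hp.pow_dvd_iff_le_factorization (hW0 x hx.1)).1 hx.2
      have := hmax x hx.1
      omega
  have hbL : b = ∑ i ∈ Finset.Ico 1 (A + 1), k / p ^ i := by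
    rw [hb]
    exact fact_factorization hp (by
      have := Nat.log_mono_right (show k ≤ k + 1 by omega) (b := p)
      omega)
  have hbc : b + c = ∑ i ∈ Finset.Ico 1 (A + 1), (k + 1) / p ^ i := by
    have h1 : ((k + 1)!).factorization p = ∑ i ∈ Finset.Ico 1 (A + 1), (k + 1) / p ^ i :=
      fact_factorization hp (by omega)
    have h2 : ((k + 1)!).factorization p = c + b := by
      rw [Nat.factorial_succ, Nat.factorization_mul (by omega) (Nat.factorial_ne_zero k)]
      simp [hc, hb]
    omega
  have hterm : ∀ t ∈ Finset.Ico 1 (A + 1),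
      (n + k) / p ^ t - (n - 1) / p ^ t ≤ (k + 1) / p ^ t := by
    intro t ht
    rw [Finset.mem_Ico] at ht
    have hq1 : 0 < p ^ t := pow_pos hp.pos t
    by_cases hdq : p ^ t ∣ k + 1
    · rw [div_window_of_dvd_k (n := n) hn hq1 hdq, Nat.add_sub_cancel_left]
    · have hqk1 : p ^ t ≤ k + 1 := by
        calc p ^ t ≤ p ^ A := Nat.pow_le_pow_right hp.pos (by omega)
          _ ≤ k + 1 := Nat.pow_log_le_self p (by omega)
      have hqk : p ^ t ≤ k := by
        rcases eq_or_lt_of_le hqk1 with he | hl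
        · exact absurd (he ▸ dvd_refl (p ^ t)) hdq
        · omega
      have htb : t ≤ b := by
        rw [hbL]
        have hsub : Finset.Ico 1 (t + 1) ⊆ Finset.Ico 1 (A + 1) :=
          Finset.Ico_subset_Ico (le_refl 1) (by omega)
        have h1 : ∑ i ∈ Finset.Ico 1 (t + 1), k / p ^ i
            ≤ ∑ i ∈ Finset.Ico 1 (A + 1), k / p ^ i :=
          Finset.sum_le_sum_of_subset hsub
        have h2 : ∀ i ∈ Finset.Ico 1 (t + 1), 1 ≤ k / p ^ i := by
          intro i hi
          rw [Finset.mem_Ico] at hi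
          have hple : p ^ i ≤ p ^ t := Nat.pow_le_pow_right hp.pos (by omega)
          exact (Nat.one_le_div_iff (pow_pos hp.pos i)).2 (by omega)
        have h3 : t ≤ ∑ i ∈ Finset.Ico 1 (t + 1), k / p ^ i := by
          calc t = (Finset.Ico 1 (t + 1)).card * 1 := by rw [Nat.card_Ico]; omega
            _ = ∑ _i ∈ Finset.Ico 1 (t + 1), 1 := by
                rw [Finset.sum_const, smul_eq_mul]
            _ ≤ ∑ i ∈ Finset.Ico 1 (t + 1), k / p ^ i := Finset.sum_le_sum h2
        omega
      have hpb : p ^ t ∣ n + k + 1 :=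
        dvd_trans (dvd_trans (pow_dvd_pow p htb) (Nat.ordProj_dvd (k !) p)) hdvd
      have hq2 : 2 ≤ p ^ t := by
        have := Nat.one_lt_pow (show t ≠ 0 by omega) hp.one_lt
        omega
      rw [div_window_of_dvd_N hn hq2 hpb, Nat.add_sub_cancel_left]
  have hhead : ∑ t ∈ Finset.Ico 1 (A + 1), ((n + k) / p ^ t - (n - 1) / p ^ t) ≤ b + c := by
    rw [hbc]
    exact Finset.sum_le_sum hterm
  have htail : ∑ t ∈ Finset.Ico (A + 1) (M + 1), ((n + k) / p ^ t - (n - 1) / p ^ t)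
      ≤ M - A := by
    have hbound : ∀ t ∈ Finset.Ico (A + 1) (M + 1),
        (n + k) / p ^ t - (n - 1) / p ^ t ≤ 1 := by
      intro t ht
      rw [Finset.mem_Ico] at ht
      have hgt : k + 1 < p ^ t :=
        lt_of_lt_of_le (Nat.lt_pow_succ_log_self hp.one_lt (k + 1))
          (Nat.pow_le_pow_right hp.pos ht.1)
      have h1 : (n + k) / p ^ t ≤ (n - 1 + p ^ t) / p ^ t :=
        Nat.div_le_div_right (by omega)
      rw [Nat.add_div_right _ (pow_pos hp.pos t)] at h1
      omega
    calc ∑ t ∈ Finset.Ico (A + 1) (M + 1), ((n + k) / p ^ t - (n - 1) / p ^ t)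
        ≤ ∑ _t ∈ Finset.Ico (A + 1) (M + 1), 1 := Finset.sum_le_sum hbound
      _ = (Finset.Ico (A + 1) (M + 1)).card := by
          rw [Finset.sum_const, smul_eq_mul, mul_one]
      _ = M - A := by rw [Nat.card_Ico]; omega
  have hsplit : ∑ t ∈ Finset.Ico 1 (A + 1), ((n + k) / p ^ t - (n - 1) / p ^ t)
      + ∑ t ∈ Finset.Ico (A + 1) (M + 1), ((n + k) / p ^ t - (n - 1) / p ^ t)
      = ∑ t ∈ Finset.Ico 1 (M + 1), ((n + k) / p ^ t - (n - 1) / p ^ t) :=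
    Finset.sum_Ico_consecutive _ (by omega) (by omega)
  have hSle : S ≤ (b + c) + (M - A) := by
    rw [hswap]
    have : ∑ t ∈ Finset.Ico 1 (M + 1), (W.filter (fun x => p ^ t ∣ x)).card
        = ∑ t ∈ Finset.Ico 1 (M + 1), ((n + k) / p ^ t - (n - 1) / p ^ t) :=
      Finset.sum_congr rfl (fun t _ => hcount t)
    rw [this, ← hsplit]
    omega
  omega

theorem stmt_19 (k n : ℕ) (hn : 1 ≤ n) :
    (Finset.Icc n (n + k)).lcm id ∣
      n * (n + k).choose k * (Finset.range (k + 1)).lcm (fun j => k.choose j) ∧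
    (Nat.factorial k ∣ n + k + 1 →
      (Finset.Icc n (n + k)).lcm id =
        n * (n + k).choose k * (Finset.range (k + 1)).lcm (fun j => k.choose j)) := by
  constructor
  · exact part1 k n hn
  · intro hdvd
    have hL0 : (Finset.range (k + 1)).lcm (fun j => k.choose j) ≠ 0 := by
      rw [Ne, Finset.lcm_eq_zero_iff]
      simp only [Set.mem_image, Finset.mem_coe, Finset.mem_range]
      rintro ⟨j, hj, hj0⟩
      exact (Nat.choose_pos (show j ≤ k by omega)).ne' hj0
    have hRHS0 : n * (n + k).choose k * (Finset.range (k + 1)).lcm (fun j => k.choose j) ≠ 0 :=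
      mul_ne_zero (mul_ne_zero (by omega) (Nat.choose_pos (by omega)).ne') hL0
    have hlcm0 : (Finset.Icc n (n + k)).lcm id ≠ 0 := by
      rw [Ne, Finset.lcm_eq_zero_iff]
      simp only [Set.mem_image, Finset.mem_coe, Finset.mem_Icc, id_eq]
      rintro ⟨x, hx, hx0⟩
      omega
    refine Nat.dvd_antisymm (part1 k n hn) ?_
    rw [← Nat.factorization_le_iff_dvd hRHS0 hlcm0]
    rw [Finsupp.le_iff]
    intro p hp
    have hpp : p.Prime := Nat.prime_of_mem_primeFactors (by
      rwa [← Nat.support_factorization])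
    exact main_ineq_s19 hpp hn hdvd
end
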